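/- arXiv:2110.00115 — 7 statements merged into one kernel-verified Lean document; each statement's English description precedes it below -/
import Mathlib

section
/- If the scoring rule S has a linear equivalent, then for every t ≥ 1 the empirical pointwise score differential is conditionally unbiased: E[δ̂_t | 𝒢_{t−1}] = δ_t almost surely; equivalently, (δ̂_t − δ_t)_{t≥1} is a martingale difference sequence with respect to (𝒢_t). -/
open MeasureTheory Set

/-- A scoring rule `S` on `[0,1] × [0,1]` *has a linear equivalent* if there is a bounded
measurable `S̃ : [0,1] × [0,1] → ℝ` which is affine in its second argument and such that
`S(p, r) - S̃(p, r)` does not depend on `p`. -/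
def HasLinearEquivalent (S : ℝ → ℝ → ℝ) : Prop :=
  ∃ St : ℝ → ℝ → ℝ,
    Measurable (Function.uncurry St) ∧
    (∃ C : ℝ, ∀ p ∈ Icc (0:ℝ) 1, ∀ r ∈ Icc (0:ℝ) 1, |St p r| ≤ C) ∧
    (∀ p ∈ Icc (0:ℝ) 1, ∃ a b : ℝ, ∀ r ∈ Icc (0:ℝ) 1, St p r = a + b * r) ∧
    (∀ p ∈ Icc (0:ℝ) 1, ∀ p' ∈ Icc (0:ℝ) 1, ∀ r ∈ Icc (0:ℝ) 1,
      S p r - St p r = S p' r - St p' r)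

/-- **Lemma 1 (Lai, Gross and Shen; score differentials form an MDS).**
If the scoring rule `S` has a linear equivalent, then for every `t ≥ 1` the empirical
pointwise score differential `δ̂_t = S(p_t, y_t) - S(q_t, y_t)` is conditionally unbiased for
`δ_t = S(p_t, r_t) - S(q_t, r_t)`: `E[δ̂_t | 𝒢_{t-1}] = δ_t` almost surely. -/
theorem score_differential_conditionally_unbiased
    {Ω : Type*} {m0 : MeasurableSpace Ω} {P : Measure Ω} [IsProbabilityMeasure P]
    (𝒢 : Filtration ℕ m0)
    (S : ℝ → ℝ → ℝ)
    (hSmeas : Measurable (Function.uncurry S))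
    (hSbdd : ∃ C : ℝ, ∀ p ∈ Icc (0:ℝ) 1, ∀ r ∈ Icc (0:ℝ) 1, |S p r| ≤ C)
    (hlin : HasLinearEquivalent S)
    (p q r y : ℕ → Ω → ℝ)
    (hp_pred : ∀ t : ℕ, 1 ≤ t → Measurable[𝒢 (t - 1)] (p t))
    (hq_pred : ∀ t : ℕ, 1 ≤ t → Measurable[𝒢 (t - 1)] (q t))
    (hr_pred : ∀ t : ℕ, 1 ≤ t → Measurable[𝒢 (t - 1)] (r t))
    (hp_mem : ∀ t ω, p t ω ∈ Icc (0:ℝ) 1)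
    (hq_mem : ∀ t ω, q t ω ∈ Icc (0:ℝ) 1)
    (hr_mem : ∀ t ω, r t ω ∈ Icc (0:ℝ) 1)
    (hy_adapted : ∀ t : ℕ, 1 ≤ t → Measurable[𝒢 t] (y t))
    (hy_mem : ∀ t ω, y t ω = 0 ∨ y t ω = 1)
    (hy_cond : ∀ t : ℕ, 1 ≤ t → P[y t | 𝒢 (t - 1)] =ᵐ[P] r t) :
    ∀ t : ℕ, 1 ≤ t →
      P[(fun ω => S (p t ω) (y t ω) - S (q t ω) (y t ω)) | 𝒢 (t - 1)]
        =ᵐ[P] (fun ω => S (p t ω) (r t ω) - S (q t ω) (r t ω)) := by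
  
  obtain ⟨St, hStmeas, ⟨C, hC⟩, hStaff, hStdiff⟩ := hlin
  intro t ht
  set m := 𝒢 (t - 1) with hm
  have hle : m ≤ m0 := 𝒢.le _
  -- key algebraic identity
  have key : ∀ x ∈ Icc (0:ℝ) 1, ∀ ω : Ω,
      S (p t ω) x - S (q t ω) x
        = (St (p t ω) 0 - St (q t ω) 0)
          + ((St (p t ω) 1 - St (p t ω) 0) - (St (q t ω) 1 - St (q t ω) 0)) * x := by
    intro x hx ω
    have h1 := hStdiff (p t ω) (hp_mem t ω) (q t ω) (hq_mem t ω) x hx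
    have affEq : ∀ u ∈ Icc (0:ℝ) 1, St u x = St u 0 + (St u 1 - St u 0) * x := by
      intro u hu
      obtain ⟨a, b, hab⟩ := hStaff u hu
      have h0 := hab 0 (by norm_num)
      have h1' := hab 1 (by norm_num)
      have hx' := hab x hx
      rw [h0, h1', hx']; ring
    have hpa := affEq _ (hp_mem t ω)
    have hqa := affEq _ (hq_mem t ω)
    linear_combination h1 + hpa - hqa
  set A : Ω → ℝ := fun ω => St (p t ω) 0 - St (q t ω) 0 with hA
  set B : Ω → ℝ := fun ω =>
    (St (p t ω) 1 - St (p t ω) 0) - (St (q t ω) 1 - St (q t ω) 0) with hB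
  have hcomp : ∀ (f : Ω → ℝ), Measurable[m] f → (∀ ω, f ω ∈ Icc (0:ℝ) 1) →
      ∀ c : ℝ, Measurable[m] (fun ω => St (f ω) c) := by
    intro f hf _ c
    exact hStmeas.comp (hf.prodMk measurable_const)
  have hAm : Measurable[m] A :=
    ((hcomp _ (hp_pred t ht) (hp_mem t) 0).sub (hcomp _ (hq_pred t ht) (hq_mem t) 0))
  have hBm : Measurable[m] B :=
    (((hcomp _ (hp_pred t ht) (hp_mem t) 1).sub (hcomp _ (hp_pred t ht) (hp_mem t) 0)).sub
      ((hcomp _ (hq_pred t ht) (hq_mem t) 1).sub (hcomp _ (hq_pred t ht) (hq_mem t) 0)))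
  have hym : Measurable[m0] (y t) := (hy_adapted t ht).mono (𝒢.le t) le_rfl
  have hy01 : ∀ ω, y t ω ∈ Icc (0:ℝ) 1 := by
    intro ω; rcases hy_mem t ω with h | h <;> rw [h] <;> norm_num
  have hybd : ∀ ω, ‖y t ω‖ ≤ 1 := by
    intro ω
    rw [Real.norm_eq_abs, abs_le]
    exact ⟨by linarith [(hy01 ω).1], (hy01 ω).2⟩
  have hy_int : Integrable (y t) P :=
    ⟨hym.aestronglyMeasurable, HasFiniteIntegral.of_bounded (C := 1) (ae_of_all _ hybd)⟩
  have hStbd : ∀ u ∈ Icc (0:ℝ) 1, ∀ c ∈ Icc (0:ℝ) 1, |St u c| ≤ C := hC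
  have hAbd : ∀ ω, ‖A ω‖ ≤ 2 * C := by
    intro ω
    have h1 := hC _ (hp_mem t ω) 0 (by norm_num)
    have h2 := hC _ (hq_mem t ω) 0 (by norm_num)
    rw [Real.norm_eq_abs]
    calc |A ω| ≤ |St (p t ω) 0| + |St (q t ω) 0| := abs_sub _ _
      _ ≤ 2 * C := by linarith
  have hBbd : ∀ ω, ‖B ω‖ ≤ 4 * C := by
    intro ω
    have h1 := hC _ (hp_mem t ω) 0 (by norm_num)
    have h2 := hC _ (hq_mem t ω) 0 (by norm_num)
    have h3 := hC _ (hp_mem t ω) 1 (by norm_num)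
    have h4 := hC _ (hq_mem t ω) 1 (by norm_num)
    rw [Real.norm_eq_abs]
    have := abs_sub_abs_le_abs_sub (St (p t ω) 1) (St (p t ω) 0)
    calc |B ω| ≤ |St (p t ω) 1 - St (p t ω) 0| + |St (q t ω) 1 - St (q t ω) 0| := abs_sub _ _
      _ ≤ (|St (p t ω) 1| + |St (p t ω) 0|) + (|St (q t ω) 1| + |St (q t ω) 0|) :=
          add_le_add (abs_sub _ _) (abs_sub _ _)
      _ ≤ 4 * C := by linarith
  have hA_int : Integrable A P :=
    ⟨(hAm.mono hle le_rfl).aestronglyMeasurable,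
      HasFiniteIntegral.of_bounded (C := 2 * C) (ae_of_all _ hAbd)⟩
  have hBy_int : Integrable (B * y t) P := by
    refine ⟨((hBm.mono hle le_rfl).mul hym).aestronglyMeasurable,
      HasFiniteIntegral.of_bounded (C := 4 * C) (ae_of_all _ fun ω => ?_)⟩
    calc ‖B ω * y t ω‖ = ‖B ω‖ * ‖y t ω‖ := norm_mul _ _
      _ ≤ (4 * C) * 1 := by
          have h0 : (0:ℝ) ≤ ‖B ω‖ := norm_nonneg _
          exact mul_le_mul (hBbd ω) (hybd ω) (norm_nonneg _) (by linarith [hBbd ω])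
      _ = 4 * C := mul_one _
  have hfun1 : (fun ω => S (p t ω) (y t ω) - S (q t ω) (y t ω)) = A + B * y t := by
    funext ω
    simpa using key (y t ω) (hy01 ω) ω
  have hfun2 : (fun ω => S (p t ω) (r t ω) - S (q t ω) (r t ω))
      = fun ω => A ω + B ω * r t ω := by
    funext ω
    simpa using key (r t ω) (hr_mem t ω) ω
  rw [hfun1, hfun2]
  have e0 : P[A + B * y t | m] =ᵐ[P] P[A | m] + P[B * y t | m] := condExp_add hA_int hBy_int m
  have e1 : P[A | m] = A :=
    condExp_of_stronglyMeasurable hle (hAm.stronglyMeasurable) hA_int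
  have e2 : P[B * y t | m] =ᵐ[P] B * P[y t | m] :=
    condExp_mul_of_stronglyMeasurable_left (hBm.stronglyMeasurable) hBy_int hy_int
  have e3 : B * P[y t | m] =ᵐ[P] B * r t := by
    filter_upwards [hy_cond t ht] with ω hω
    simp only [Pi.mul_apply]
    exact congrArg (B ω * ·) hω
  refine e0.trans ?_
  rw [e1]
  filter_upwards [e2.trans e3] with ω hω
  simp only [Pi.add_apply, Pi.mul_apply] at hω ⊢
  rw [hω]
end

section
/- (Theorem 1, Hoeffding-style confidence sequence.) Suppose E[δ̂_t | 𝒢_{t−1}] = δ_t and |δ̂_t| ≤ 1 a.s. for every t ≥ 1, and let α ∈ (0,1). If u is a sub-Gaussian uniform boundary with crossing probability α/2, then P( for all t ≥ 1, |Δ̂_t − Δ_t| < u(t)/t ) ≥ 1 − α; i.e., the intervals (Δ̂_t − u(t)/t, Δ̂_t + u(t)/t) form a (1−α)-level confidence sequence for Δ_t. -/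
open MeasureTheory Set
open scoped NNReal ENNReal

noncomputable def clip (x : ℝ) : ℝ := max (-1) (min 1 x)

lemma clip_abs_le (x : ℝ) : |clip x| ≤ 1 := by
  rw [abs_le]; unfold clip
  constructor
  · exact le_max_left _ _
  · exact max_le (by norm_num) (min_le_left _ _)

lemma clip_eq_of_abs_le {x : ℝ} (hx : |x| ≤ 1) : clip x = x := by
  obtain ⟨h1, h2⟩ := abs_le.1 hx
  unfold clip
  rw [min_eq_right h2, max_eq_right h1]

lemma clip_idem (x : ℝ) : clip (clip x) = clip x := clip_eq_of_abs_le (clip_abs_le x)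

lemma measurable_clip : Measurable clip :=
  (continuous_const.max (continuous_const.min continuous_id)).measurable



lemma hoeffding_core {m : ℝ} (hm : |m| ≤ 1) {l : ℝ} (hl : 0 ≤ l) :
    Real.cosh l + m * Real.sinh l ≤ Real.exp (l * m + l ^ 2 / 2) := by
  obtain ⟨hm1, hm2⟩ := abs_le.1 hm
  set c : ℝ → ℝ := fun x => Real.cosh x + m * Real.sinh x with hc
  set s : ℝ → ℝ := fun x => Real.sinh x + m * Real.cosh x with hs
  have habs : ∀ x : ℝ, |Real.sinh x| < Real.cosh x := by
    intro x
    have h1 : Real.cosh x - Real.sinh x = Real.exp (-x) := Real.cosh_sub_sinh x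
    have h2 : Real.cosh x + Real.sinh x = Real.exp x := Real.cosh_add_sinh x
    have := Real.exp_pos (-x); have := Real.exp_pos x
    rw [abs_lt]; constructor <;> nlinarith
  have hcpos : ∀ x, 0 < c x := by
    intro x
    have h := habs x
    have h2 : |m * Real.sinh x| ≤ |Real.sinh x| := by
      rw [abs_mul]; nlinarith [abs_nonneg (Real.sinh x)]
    have h3 : -|Real.sinh x| ≤ m * Real.sinh x := by
      have := (abs_le.1 h2).1; linarith
    simp only [hc]; nlinarith [abs_nonneg (Real.sinh x), le_abs_self (Real.sinh x)]
  have hcs : ∀ x, c x ^ 2 - s x ^ 2 = 1 - m ^ 2 := by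
    intro x
    have := Real.cosh_sq_sub_sinh_sq x
    simp only [hc, hs]; nlinarith
  have hdc : ∀ x, HasDerivAt c (s x) x := by
    intro x
    exact (Real.hasDerivAt_cosh x).add ((Real.hasDerivAt_sinh x).const_mul m)
  have hds : ∀ x, HasDerivAt s (c x) x := by
    intro x
    exact (Real.hasDerivAt_sinh x).add ((Real.hasDerivAt_cosh x).const_mul m)
  set φ : ℝ → ℝ := fun x => m + x - s x / c x with hφ
  have hdφ : ∀ x, HasDerivAt φ (1 - (1 - m ^ 2) / c x ^ 2) x := by
    intro x
    have hne : c x ≠ 0 := (hcpos x).ne'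
    have hdiv : HasDerivAt (fun y => s y / c y) ((c x * c x - s x * s x) / c x ^ 2) x :=
      (hds x).div (hdc x) hne
    have h1 : HasDerivAt (fun y : ℝ => m + y) 1 x := by
      simpa using (hasDerivAt_id x).const_add m
    have h2 := h1.sub hdiv
    have : c x * c x - s x * s x = 1 - m ^ 2 := by nlinarith [hcs x]
    rw [this] at h2
    exact h2
  have hφ0 : φ 0 = 0 := by simp [hφ, hs, hc]
  have hφnonneg : ∀ x, 0 ≤ x → 0 ≤ φ x := by
    intro x hx
    have hmono : Monotone φ := by
      apply monotone_of_deriv_nonneg (fun y => (hdφ y).differentiableAt)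
      intro y
      rw [(hdφ y).deriv]
      have h1 : 1 - m ^ 2 ≤ c y ^ 2 := by nlinarith [hcs y, sq_nonneg (s y)]
      have h2 : (0:ℝ) < c y ^ 2 := pow_pos (hcpos y) 2
      have : (1 - m ^ 2) / c y ^ 2 ≤ 1 := by
        rw [div_le_one h2]; exact h1
      linarith
    have := hmono hx; rw [hφ0] at this; exact this
  set g : ℝ → ℝ := fun x => x * m + x ^ 2 / 2 - Real.log (c x) with hg
  have hdg : ∀ x, HasDerivAt g (φ x) x := by
    intro x
    have hne : c x ≠ 0 := (hcpos x).ne'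
    have hlog : HasDerivAt (fun y => Real.log (c y)) (s x / c x) x := by
      simpa using (hdc x).log hne
    have h1 : HasDerivAt (fun y : ℝ => y * m + y ^ 2 / 2) (m + x) x := by
      have := ((hasDerivAt_id x).mul_const m).add
        (((hasDerivAt_id x).pow 2).div_const 2)
      exact this.congr_deriv (by simp)
    exact h1.sub hlog
  have hg0 : g 0 = 0 := by simp [hg, hc]
  have hgmono : MonotoneOn g (Set.Ici (0:ℝ)) := by
    apply monotoneOn_of_deriv_nonneg (convex_Ici 0)
      (Continuous.continuousOn (by
        exact continuous_iff_continuousAt.2 fun y => (hdg y).differentiableAt.continuousAt))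
      (fun y _ => (hdg y).differentiableAt.differentiableWithinAt)
    intro y hy
    rw [interior_Ici] at hy
    rw [(hdg y).deriv]
    exact hφnonneg y (le_of_lt hy)
  have hgl : 0 ≤ g l := by
    have := hgmono (Set.self_mem_Ici) (Set.mem_Ici.2 hl) hl
    rw [hg0] at this; exact this
  have hlog : Real.log (c l) ≤ l * m + l ^ 2 / 2 := by
    simp only [hg] at hgl; linarith
  have := (Real.log_le_iff_le_exp (hcpos l)).1 hlog
  simpa [hc] using this


lemma exp_le_cosh_add_mul_sinh {x : ℝ} (hx : |x| ≤ 1) (l : ℝ) :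
    Real.exp (l * x) ≤ Real.cosh l + x * Real.sinh l := by
  obtain ⟨h1, h2⟩ := abs_le.1 hx
  have ha : (0:ℝ) ≤ (1 - x) / 2 := by linarith
  have hb : (0:ℝ) ≤ (1 + x) / 2 := by linarith
  have hab : (1 - x) / 2 + (1 + x) / 2 = 1 := by ring
  have := convexOn_exp.2 (Set.mem_univ (-l)) (Set.mem_univ l) ha hb hab
  simp only [smul_eq_mul] at this
  have harg : (1 - x) / 2 * (-l) + (1 + x) / 2 * l = l * x := by ring
  rw [harg] at this
  have hc : Real.cosh l = (Real.exp l + Real.exp (-l)) / 2 := Real.cosh_eq l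
  have hs : Real.sinh l = (Real.exp l - Real.exp (-l)) / 2 := Real.sinh_eq l
  nlinarith [this]

set_option maxHeartbeats 1000000 in
lemma supermartingale_hoeffding
    {Ω : Type*} {m0 : MeasurableSpace Ω} {P : Measure Ω} [IsProbabilityMeasure P]
    (𝒢 : Filtration ℕ m0) (X M : ℕ → Ω → ℝ)
    (hX : ∀ t, StronglyMeasurable[𝒢 t] (X t))
    (hM : ∀ t, StronglyMeasurable[𝒢 t] (M (t + 1)))
    (hXb : ∀ t ω, |X t ω| ≤ 1) (hMb : ∀ t ω, |M t ω| ≤ 1)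
    (hcond : ∀ t : ℕ, P[X (t + 1)|𝒢 t] =ᵐ[P] M (t + 1))
    {l : ℝ} (hl : 0 ≤ l) :
    Supermartingale
      (fun t ω => Real.exp (l * ∑ i ∈ Finset.Icc 1 t, (X i ω - M i ω) - l ^ 2 / 2 * t)) 𝒢 P := by
  set S : ℕ → Ω → ℝ := fun t ω => ∑ i ∈ Finset.Icc 1 t, (X i ω - M i ω) with hS
  set L : ℕ → Ω → ℝ := fun t ω => Real.exp (l * S t ω - l ^ 2 / 2 * t) with hL
  have hSmeas : ∀ t, StronglyMeasurable[𝒢 t] (S t) := by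
    intro t
    apply Finset.stronglyMeasurable_fun_sum
    intro i hi
    obtain ⟨hi1, hi2⟩ := Finset.mem_Icc.1 hi
    obtain ⟨j, rfl⟩ := Nat.exists_eq_add_of_le hi1
    have hXi := (hX (1 + j)).mono (𝒢.mono hi2)
    have hMi := (hM j).mono (𝒢.mono (show j ≤ t by omega))
    have : (1 + j) = j + 1 := by omega
    rw [this] at hXi ⊢
    exact hXi.sub hMi
  have hLmeas : ∀ t, StronglyMeasurable[𝒢 t] (L t) := by
    intro t
    exact (Real.continuous_exp.comp_stronglyMeasurable
      (((hSmeas t).const_mul l).sub stronglyMeasurable_const))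
  have hSbd : ∀ t ω, |S t ω| ≤ 2 * t := by
    intro t ω
    calc |S t ω| ≤ ∑ i ∈ Finset.Icc 1 t, |X i ω - M i ω| := Finset.abs_sum_le_sum_abs _ _
    _ ≤ ∑ i ∈ Finset.Icc 1 t, 2 := by
        apply Finset.sum_le_sum
        intro i _
        have := abs_sub (X i ω) (M i ω)
        calc |X i ω - M i ω| ≤ |X i ω| + |M i ω| := abs_sub _ _
        _ ≤ 2 := by linarith [hXb i ω, hMb i ω]
    _ = 2 * t := by rw [Finset.sum_const, Nat.card_Icc]; push_cast; ring
  have hLbd : ∀ t ω, L t ω ≤ Real.exp (2 * l * t) := by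
    intro t ω
    apply Real.exp_le_exp.2
    have h1 := (abs_le.1 (hSbd t ω)).2
    have h2 : (0:ℝ) ≤ l ^ 2 / 2 * t := by positivity
    have h3 := mul_le_mul_of_nonneg_left h1 hl
    linarith
  have hLint : ∀ t, Integrable (L t) P := by
    intro t
    apply Integrable.mono' (integrable_const (Real.exp (2 * l * t)))
      ((hLmeas t).mono (𝒢.le t)).aestronglyMeasurable
    exact ae_of_all _ fun ω => by
      rw [Real.norm_eq_abs, abs_of_nonneg (Real.exp_pos _).le]; exact hLbd t ω
  apply supermartingale_nat (fun t => hLmeas t) hLint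
  intro t
  set F : Ω → ℝ := fun ω => Real.exp (l * S t ω - l * M (t + 1) ω - l ^ 2 / 2 * (t + 1)) with hF
  have hFmeas : StronglyMeasurable[𝒢 t] F :=
    Real.continuous_exp.comp_stronglyMeasurable
      ((((hSmeas t).const_mul l).sub ((hM t).const_mul l)).sub stronglyMeasurable_const)
  have hFbd : ∀ ω, F ω ≤ Real.exp (2 * l * t + l) := by
    intro ω
    apply Real.exp_le_exp.2
    have h1 := (abs_le.1 (hSbd t ω)).2
    have h2 := (abs_le.1 (hMb (t + 1) ω)).1
    have h3 : (0:ℝ) ≤ l ^ 2 / 2 * ((t:ℝ) + 1) := by positivity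
    have h4 := mul_le_mul_of_nonneg_left h1 hl
    have h5 := mul_le_mul_of_nonneg_left h2 hl
    push_cast
    nlinarith
  have hLsucc : ∀ ω, L (t + 1) ω = F ω * Real.exp (l * X (t + 1) ω) := by
    intro ω
    have hsum : S (t + 1) ω = S t ω + (X (t + 1) ω - M (t + 1) ω) :=
      Finset.sum_Icc_succ_top (Nat.le_add_left 1 t) _
    show Real.exp _ = Real.exp _ * Real.exp _
    rw [← Real.exp_add]
    congr 1
    rw [hsum]
    push_cast
    ring
  set g : Ω → ℝ := fun ω => Real.cosh l + X (t + 1) ω * Real.sinh l with hg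
  have hgmeas : AEStronglyMeasurable g P :=
    (stronglyMeasurable_const.add (((hX (t+1)).mono (𝒢.le _)).mul_const _)).aestronglyMeasurable
  have hgbd : ∀ ω, |g ω| ≤ Real.cosh l + Real.sinh l := by
    intro ω
    have h0 : (0:ℝ) ≤ Real.sinh l := by
      rw [Real.sinh_eq]
      have := Real.exp_le_exp.2 (neg_le_self hl)
      linarith
    have hx := abs_le.1 (hXb (t + 1) ω)
    have h1 := mul_le_mul_of_nonneg_right hx.2 h0
    have h2 := mul_le_mul_of_nonneg_right hx.1 h0
    have h3 := Real.cosh_pos (x := l)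
    simp only [hg]
    rw [abs_le]
    constructor <;> nlinarith
  have hgint : Integrable g P := by
    apply Integrable.mono' (integrable_const (Real.cosh l + Real.sinh l)) hgmeas
    exact ae_of_all _ fun ω => by rw [Real.norm_eq_abs]; exact hgbd ω
  have hGint : Integrable (fun ω => F ω * g ω) P := by
    apply Integrable.mono' (integrable_const (Real.exp (2 * l * t + l) * (Real.cosh l + Real.sinh l)))
      ((((hFmeas.mono (𝒢.le t)).aestronglyMeasurable)).mul hgmeas)
    refine ae_of_all _ fun ω => ?_
    simp only [Pi.mul_apply]
    rw [Real.norm_eq_abs, abs_mul, abs_of_nonneg (Real.exp_pos _).le]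
    apply mul_le_mul (hFbd ω) (hgbd ω) (abs_nonneg _)
    exact (Real.exp_pos _).le
  have step1 : P[L (t + 1)|𝒢 t] ≤ᵐ[P] P[fun ω => F ω * g ω|𝒢 t] := by
    apply condExp_mono (hLint (t + 1)) hGint
    refine ae_of_all _ fun ω => ?_
    rw [hLsucc ω]
    exact mul_le_mul_of_nonneg_left (exp_le_cosh_add_mul_sinh (hXb (t+1) ω) l) (Real.exp_pos _).le
  have step2 : P[fun ω => F ω * g ω|𝒢 t] =ᵐ[P] fun ω => F ω * (P[g|𝒢 t]) ω :=
    condExp_mul_of_stronglyMeasurable_left hFmeas hGint hgint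
  have hXint : Integrable (X (t + 1)) P := by
    apply Integrable.mono' (integrable_const 1) ((hX (t+1)).mono (𝒢.le _)).aestronglyMeasurable
    exact ae_of_all _ fun ω => by rw [Real.norm_eq_abs]; exact hXb (t + 1) ω
  have step3 : P[g|𝒢 t] =ᵐ[P] fun ω => Real.cosh l + M (t + 1) ω * Real.sinh l := by
    have h1 : P[g|𝒢 t] =ᵐ[P] P[fun _ => Real.cosh l|𝒢 t] + P[fun ω => X (t+1) ω * Real.sinh l|𝒢 t] :=
      condExp_add (integrable_const _) (hXint.mul_const _) _
    have h2 : P[fun _ => Real.cosh l|𝒢 t] = fun _ => Real.cosh l := condExp_const (𝒢.le t) _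
    have h3 : P[fun ω => X (t+1) ω * Real.sinh l|𝒢 t] =ᵐ[P] fun ω => M (t+1) ω * Real.sinh l := by
      have heq : (fun ω => X (t+1) ω * Real.sinh l) = Real.sinh l • X (t+1) := by
        funext ω; simp [smul_eq_mul, mul_comm]
      rw [heq]
      have hsmul : P[Real.sinh l • X (t+1)|𝒢 t] =ᵐ[P] Real.sinh l • P[X (t+1)|𝒢 t] :=
        condExp_smul (Real.sinh l) (X (t + 1)) _
      refine hsmul.trans ?_
      filter_upwards [hcond t] with ω hω
      simp only [Pi.smul_apply, smul_eq_mul, hω, mul_comm]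
    calc P[g|𝒢 t] =ᵐ[P] _ := h1
    _ =ᵐ[P] fun ω => Real.cosh l + M (t + 1) ω * Real.sinh l := by
        rw [h2]
        filter_upwards [h3] with ω hω
        simp [hω]
  have final : ∀ ω, F ω * (Real.cosh l + M (t + 1) ω * Real.sinh l) ≤ L t ω := by
    intro ω
    have h1 := hoeffding_core (hMb (t + 1) ω) hl
    have h2 : F ω * (Real.cosh l + M (t + 1) ω * Real.sinh l) ≤
        F ω * Real.exp (l * M (t + 1) ω + l ^ 2 / 2) :=
      mul_le_mul_of_nonneg_left h1 (Real.exp_pos _).le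
    refine h2.trans (le_of_eq ?_)
    show Real.exp _ * Real.exp _ = Real.exp _
    rw [← Real.exp_add]
    congr 1
    push_cast
    ring
  calc P[L (t + 1)|𝒢 t] ≤ᵐ[P] P[fun ω => F ω * g ω|𝒢 t] := step1
  _ =ᵐ[P] fun ω => F ω * (P[g|𝒢 t]) ω := step2
  _ ≤ᵐ[P] L t := by
      filter_upwards [step3] with ω hω
      rw [hω]
      exact final ω

/-- `u : [0,∞) → ℝ` is a *sub-Gaussian uniform boundary with crossing probability `α`* if for
every filtered probability space and every pair of adapted real processes `(S_t, V_t)_{t≥0}`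
with `S_0 = V_0 = 0` and `V_t ≥ 0`, such that for every `λ ≥ 0` there exists a nonnegative
supermartingale `(L_t(λ))_{t≥0}` with `E[L_0(λ)] ≤ 1` and
`exp(λ S_t − (λ²/2) V_t) ≤ L_t(λ)` a.s. for all `t`, one has
`P(∃ t ≥ 1 : S_t ≥ u(V_t)) ≤ α`. -/
def IsSubGaussianUniformBoundary (u : ℝ → ℝ) (α : ℝ) : Prop :=
  ∀ (Ω : Type) (m0 : MeasurableSpace Ω) (P : Measure Ω), IsProbabilityMeasure P →
    ∀ (𝒢 : Filtration ℕ m0) (S V : ℕ → Ω → ℝ),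
      Adapted 𝒢 S → Adapted 𝒢 V →
      (∀ ω, S 0 ω = 0) → (∀ ω, V 0 ω = 0) → (∀ t ω, 0 ≤ V t ω) →
      (∀ l : ℝ, 0 ≤ l →
        ∃ L : ℕ → Ω → ℝ,
          Supermartingale L 𝒢 P ∧ (∀ t ω, 0 ≤ L t ω) ∧ (∫ ω, L 0 ω ∂P) ≤ 1 ∧
          ∀ t : ℕ, ∀ᵐ ω ∂P, Real.exp (l * S t ω - l ^ 2 / 2 * V t ω) ≤ L t ω) →
      P {ω | ∃ t : ℕ, 1 ≤ t ∧ u (V t ω) ≤ S t ω} ≤ ENNReal.ofReal α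


set_option maxHeartbeats 2000000 in
/-- **Theorem 1 (Hoeffding-style confidence sequence).**
Suppose `E[δ̂_t | 𝒢_{t−1}] = δ_t` and `|δ̂_t| ≤ 1` a.s. for every `t ≥ 1`, and let
`α ∈ (0,1)`.  If `u` is a sub-Gaussian uniform boundary with crossing probability `α/2`,
then `P(∀ t ≥ 1, |Δ̂_t − Δ_t| < u(t)/t) ≥ 1 − α`, where `Δ̂_t = (1/t) Σ_{i=1}^t δ̂_i` and
`Δ_t = (1/t) Σ_{i=1}^t δ_i`. -/
theorem hoeffding_confidence_sequence
    {Ω : Type*} {m0 : MeasurableSpace Ω} {P : Measure Ω} [IsProbabilityMeasure P]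
    (𝒢 : Filtration ℕ m0)
    (δhat δ : ℕ → Ω → ℝ)
    (hδhat_adapted : ∀ t : ℕ, 1 ≤ t → Measurable[𝒢 t] (δhat t))
    (hδhat_bdd : ∃ C : ℝ, ∀ t ω, |δhat t ω| ≤ C)
    (hδ_pred : ∀ t : ℕ, 1 ≤ t → Measurable[𝒢 (t - 1)] (δ t))
    (hδ_bdd : ∃ C : ℝ, ∀ t ω, |δ t ω| ≤ C)
    (hcond : ∀ t : ℕ, 1 ≤ t → P[δhat t | 𝒢 (t - 1)] =ᵐ[P] δ t)
    (habs : ∀ t : ℕ, 1 ≤ t → ∀ᵐ ω ∂P, |δhat t ω| ≤ 1)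
    (α : ℝ) (hα : α ∈ Ioo (0:ℝ) 1)
    (u : ℝ → ℝ) (hu : IsSubGaussianUniformBoundary u (α / 2)) :
    ENNReal.ofReal (1 - α) ≤
      P {ω | ∀ t : ℕ, 1 ≤ t →
        |(1 / (t : ℝ)) * ∑ i ∈ Finset.Icc 1 t, δhat i ω
            - (1 / (t : ℝ)) * ∑ i ∈ Finset.Icc 1 t, δ i ω| < u (t : ℝ) / (t : ℝ)} := by
  obtain ⟨hα0, hα1⟩ := hα
  -- clipped processes
  set δhc : ℕ → Ω → ℝ := fun t ω => clip (δhat t ω) with hδhc_def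
  set δc : ℕ → Ω → ℝ := fun t ω => clip (δ t ω) with hδc_def
  have hδhc_meas : ∀ t, 1 ≤ t → Measurable[𝒢 t] (δhc t) :=
    fun t ht => measurable_clip.comp (hδhat_adapted t ht)
  have hδc_meas : ∀ t, 1 ≤ t → Measurable[𝒢 (t - 1)] (δc t) :=
    fun t ht => measurable_clip.comp (hδ_pred t ht)
  -- a.e. equalities with the clips
  have hδhc_ae : ∀ t, 1 ≤ t → ∀ᵐ ω ∂P, δhc t ω = δhat t ω := by
    intro t ht
    filter_upwards [habs t ht] with ω hω
    exact clip_eq_of_abs_le hω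
  have hδ_ae_bdd : ∀ t, 1 ≤ t → ∀ᵐ ω ∂P, |δ t ω| ≤ 1 := by
    intro t ht
    have h1 : ∀ᵐ ω ∂P, |δhat t ω| ≤ ((1 : ℝ≥0) : ℝ) := by
      filter_upwards [habs t ht] with ω hω; simpa using hω
    have h2 := ae_bdd_condExp_of_ae_bdd (m := 𝒢 (t - 1)) h1
    filter_upwards [h2, hcond t ht] with ω h2ω hcω
    rw [← hcω]; simpa using h2ω
  have hδc_ae : ∀ t, 1 ≤ t → ∀ᵐ ω ∂P, δc t ω = δ t ω := by
    intro t ht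
    filter_upwards [hδ_ae_bdd t ht] with ω hω
    exact clip_eq_of_abs_le hω
  -- the trajectory space
  set Φ : Ω → (ℕ → ℝ × ℝ) := fun ω n => (if 1 ≤ n then δhc n ω else 0, δc (n + 1) ω) with hΦ_def
  have hΦcoord : ∀ n, Measurable[𝒢 n] (fun ω => Φ ω n) := by
    intro n
    have h1 : Measurable[𝒢 n] (fun ω => if 1 ≤ n then δhc n ω else 0) := by
      by_cases hn : 1 ≤ n
      · simp only [if_pos hn]; exact hδhc_meas n hn
      · simp only [if_neg hn]; exact measurable_const
    have h2 : Measurable[𝒢 n] (fun ω => δc (n + 1) ω) := by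
      have h := hδc_meas (n + 1) (by omega)
      rw [Nat.add_sub_cancel] at h
      exact h
    exact h1.prod h2
  have hΦ : Measurable Φ :=
    measurable_pi_lambda _ fun n => ((hΦcoord n).mono (𝒢.le n) le_rfl)
  set 𝒢' : Filtration ℕ (inferInstance : MeasurableSpace (ℕ → ℝ × ℝ)) :=
    Filtration.natural (fun n (x : ℕ → ℝ × ℝ) => x n)
      (fun n => (measurable_pi_apply n).stronglyMeasurable) with h𝒢'_def
  have h𝒢'eq : ∀ i, (𝒢' i : MeasurableSpace (ℕ → ℝ × ℝ)) =
      ⨆ j, ⨆ _ : j ≤ i, MeasurableSpace.comap (fun x : ℕ → ℝ × ℝ => x j) inferInstance :=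
    fun i => rfl
  have heval : ∀ n i : ℕ, n ≤ i →
      Measurable[𝒢' i] (fun x : ℕ → ℝ × ℝ => x n) := by
    intro n i hni
    rw [measurable_iff_comap_le, h𝒢'eq]
    exact le_iSup₂ (f := fun j (_ : j ≤ i) =>
      MeasurableSpace.comap (fun x : ℕ → ℝ × ℝ => x j) inferInstance) n hni
  have hΦfilt : ∀ i, @Measurable Ω (ℕ → ℝ × ℝ) (𝒢 i) (𝒢' i) Φ := by
    intro i
    rw [measurable_iff_comap_le, h𝒢'eq, MeasurableSpace.comap_iSup]
    apply iSup_le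
    intro j
    rw [MeasurableSpace.comap_iSup]
    apply iSup_le
    intro hj
    rw [MeasurableSpace.comap_comp]
    exact ((hΦcoord j).mono (𝒢.mono hj) le_rfl).comap_le
  set Q : Measure (ℕ → ℝ × ℝ) := P.map Φ with hQ_def
  haveI hQprob : IsProbabilityMeasure Q := Measure.isProbabilityMeasure_map hΦ.aemeasurable
  -- processes on the trajectory space
  set X : ℕ → (ℕ → ℝ × ℝ) → ℝ := fun t x => if 1 ≤ t then clip (x t).1 else 0 with hX_def
  set M : ℕ → (ℕ → ℝ × ℝ) → ℝ := fun t x => if 1 ≤ t then clip (x (t - 1)).2 else 0 with hM_def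
  have hXmeas : ∀ t, StronglyMeasurable[𝒢' t] (X t) := by
    intro t
    by_cases ht : 1 ≤ t
    · simp only [hX_def, if_pos ht]
      exact (measurable_clip.comp (measurable_fst.comp (heval t t le_rfl))).stronglyMeasurable
    · simp only [hX_def, if_neg ht]
      exact stronglyMeasurable_const
  have hMmeas : ∀ t, StronglyMeasurable[𝒢' t] (M (t + 1)) := by
    intro t
    simp only [hM_def, if_pos (by omega : 1 ≤ t + 1), Nat.add_sub_cancel]
    exact (measurable_clip.comp (measurable_snd.comp (heval t t le_rfl))).stronglyMeasurable
  have hXbd : ∀ t x, |X t x| ≤ 1 := by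
    intro t x
    simp only [hX_def]
    split
    · exact clip_abs_le _
    · norm_num
  have hMbd : ∀ t x, |M t x| ≤ 1 := by
    intro t x
    simp only [hM_def]
    split
    · exact clip_abs_le _
    · norm_num
  have hXcomp : ∀ t, 1 ≤ t → ∀ ω, X t (Φ ω) = δhc t ω := by
    intro t ht ω
    simp only [hX_def, hΦ_def, if_pos ht]
    exact clip_idem _
  have hMcomp : ∀ t, 1 ≤ t → ∀ ω, M t (Φ ω) = δc t ω := by
    intro t ht ω
    simp only [hM_def, hΦ_def, if_pos ht]
    rw [Nat.sub_add_cancel ht]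
    exact clip_idem _
  -- integrability of basic processes on Ω
  have hδhat_int : ∀ t, 1 ≤ t → Integrable (δhat t) P := by
    intro t ht
    obtain ⟨C, hC⟩ := hδhat_bdd
    apply Integrable.mono' (integrable_const C)
      ((hδhat_adapted t ht).mono (𝒢.le t) le_rfl).aestronglyMeasurable
    exact ae_of_all _ fun ω => by rw [Real.norm_eq_abs]; exact hC t ω
  -- the conditional expectation property on the trajectory space
  have hcond' : ∀ t : ℕ, Q[X (t + 1)|𝒢' t] =ᵐ[Q] M (t + 1) := by
    intro t
    have hXint : Integrable (X (t + 1)) Q := by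
      apply Integrable.mono' (integrable_const 1)
        ((hXmeas (t + 1)).mono (𝒢'.le (t + 1))).aestronglyMeasurable
      exact ae_of_all _ fun x => by rw [Real.norm_eq_abs]; exact hXbd (t + 1) x
    have hMint : Integrable (M (t + 1)) Q := by
      apply Integrable.mono' (integrable_const 1)
        ((hMmeas t).mono (𝒢'.le t)).aestronglyMeasurable
      exact ae_of_all _ fun x => by rw [Real.norm_eq_abs]; exact hMbd (t + 1) x
    refine (ae_eq_condExp_of_forall_setIntegral_eq (𝒢'.le t) hXint
      (fun s _ _ => hMint.integrableOn) (fun s hs _ => ?_)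
      ((hMmeas t).aestronglyMeasurable)).symm
    have hs' : MeasurableSet s := (𝒢'.le t) s hs
    have hXaesm : AEStronglyMeasurable (X (t + 1)) Q :=
      ((hXmeas (t + 1)).mono (𝒢'.le (t + 1))).aestronglyMeasurable
    have hMaesm : AEStronglyMeasurable (M (t + 1)) Q :=
      ((hMmeas t).mono (𝒢'.le t)).aestronglyMeasurable
    rw [hQ_def, setIntegral_map hs' hMaesm hΦ.aemeasurable,
      setIntegral_map hs' hXaesm hΦ.aemeasurable]
    have hA : MeasurableSet[𝒢 t] (Φ ⁻¹' s) := hΦfilt t hs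
    have hA' : MeasurableSet (Φ ⁻¹' s) := (𝒢.le t) _ hA
    have e1 : ∫ ω in Φ ⁻¹' s, M (t + 1) (Φ ω) ∂P = ∫ ω in Φ ⁻¹' s, δ (t + 1) ω ∂P := by
      apply setIntegral_congr_ae hA'
      filter_upwards [hδc_ae (t + 1) (by omega)] with ω hω _
      rw [hMcomp (t + 1) (by omega) ω, hω]
    have e2 : ∫ ω in Φ ⁻¹' s, X (t + 1) (Φ ω) ∂P = ∫ ω in Φ ⁻¹' s, δhat (t + 1) ω ∂P := by
      apply setIntegral_congr_ae hA'
      filter_upwards [hδhc_ae (t + 1) (by omega)] with ω hω _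
      rw [hXcomp (t + 1) (by omega) ω, hω]
    rw [e1, e2]
    have e3 : ∫ ω in Φ ⁻¹' s, δ (t + 1) ω ∂P
        = ∫ ω in Φ ⁻¹' s, (P[δhat (t + 1)|𝒢 t]) ω ∂P := by
      apply setIntegral_congr_ae hA'
      have hc := hcond (t + 1) (by omega)
      rw [Nat.add_sub_cancel] at hc
      filter_upwards [hc] with ω hω _
      rw [← hω]
    rw [e3, setIntegral_condExp (𝒢.le t) (hδhat_int (t + 1) (by omega)) hA]
  -- sum process
  set S : ℕ → (ℕ → ℝ × ℝ) → ℝ := fun t x => ∑ i ∈ Finset.Icc 1 t, (X i x - M i x) with hS_def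
  have hSmeas : ∀ t, StronglyMeasurable[𝒢' t] (S t) := by
    intro t
    apply Finset.stronglyMeasurable_fun_sum
    intro i hi
    obtain ⟨hi1, hi2⟩ := Finset.mem_Icc.1 hi
    obtain ⟨j, rfl⟩ := Nat.exists_eq_add_of_le hi1
    have hXi := (hXmeas (1 + j)).mono (𝒢'.mono hi2)
    have hMi := (hMmeas j).mono (𝒢'.mono (show j ≤ t by omega))
    have hj1 : (1 + j) = j + 1 := by omega
    rw [hj1] at hXi ⊢
    exact hXi.sub hMi
  have hSmeas0 : ∀ t, Measurable (S t) :=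
    fun t => ((hSmeas t).mono (𝒢'.le t)).measurable
  -- apply the boundary twice
  have hbd : ∀ Y N : ℕ → (ℕ → ℝ × ℝ) → ℝ,
      (∀ t, StronglyMeasurable[𝒢' t] (Y t)) →
      (∀ t, StronglyMeasurable[𝒢' t] (N (t + 1))) →
      (∀ t x, |Y t x| ≤ 1) → (∀ t x, |N t x| ≤ 1) →
      (∀ t : ℕ, Q[Y (t + 1)|𝒢' t] =ᵐ[Q] N (t + 1)) →
      Q {x | ∃ t : ℕ, 1 ≤ t ∧ u ((t : ℝ)) ≤ ∑ i ∈ Finset.Icc 1 t, (Y i x - N i x)}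
        ≤ ENNReal.ofReal (α / 2) := by
    intro Y N hY hN hYb hNb hYN
    have := hu (ℕ → ℝ × ℝ) inferInstance Q hQprob 𝒢'
      (fun t x => ∑ i ∈ Finset.Icc 1 t, (Y i x - N i x)) (fun t _ => (t : ℝ))
      ?_ ?_ ?_ ?_ ?_ ?_
    · exact this
    · intro t
      refine StronglyMeasurable.measurable ?_
      apply Finset.stronglyMeasurable_fun_sum
      intro i hi
      obtain ⟨hi1, hi2⟩ := Finset.mem_Icc.1 hi
      obtain ⟨j, rfl⟩ := Nat.exists_eq_add_of_le hi1
      have hYi := (hY (1 + j)).mono (𝒢'.mono hi2)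
      have hNi := (hN j).mono (𝒢'.mono (show j ≤ t by omega))
      have hj1 : (1 + j) = j + 1 := by omega
      rw [hj1] at hYi ⊢
      exact hYi.sub hNi
    · exact fun t => measurable_const
    · intro x; simp
    · intro x; simp
    · intro t x; positivity
    · intro l hl
      refine ⟨fun t x =>
        Real.exp (l * ∑ i ∈ Finset.Icc 1 t, (Y i x - N i x) - l ^ 2 / 2 * t),
        supermartingale_hoeffding 𝒢' Y N hY hN hYb hNb hYN hl,
        fun t x => (Real.exp_pos _).le, ?_, fun t => ae_of_all _ fun x => le_refl _⟩
      simp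
  have hplus := hbd X M hXmeas hMmeas hXbd hMbd hcond'
  have hminus : Q {x | ∃ t : ℕ, 1 ≤ t ∧ u ((t : ℝ)) ≤ - S t x} ≤ ENNReal.ofReal (α / 2) := by
    have h := hbd (fun t => -X t) (fun t => -M t)
      (fun t => (hXmeas t).neg) (fun t => (hMmeas t).neg)
      (fun t x => by simpa using hXbd t x)
      (fun t x => by simpa using hMbd t x)
      (fun t => ((condExp_neg (X (t + 1)) _).trans ((hcond' t).neg)))
    have heq : ∀ t x, (∑ i ∈ Finset.Icc 1 t, ((-X i) x - (-M i) x)) = - S t x := by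
      intro t x
      simp only [hS_def, Pi.neg_apply]
      rw [← Finset.sum_neg_distrib]
      apply Finset.sum_congr rfl
      intro i _
      ring
    have hset : {x | ∃ t : ℕ, 1 ≤ t ∧ u ((t : ℝ)) ≤ ∑ i ∈ Finset.Icc 1 t, ((-X i) x - (-M i) x)}
        = {x | ∃ t : ℕ, 1 ≤ t ∧ u ((t : ℝ)) ≤ - S t x} := by
      ext x
      simp only [Set.mem_setOf_eq, heq]
    rw [hset] at h
    exact h
  -- the good event on the trajectory space
  set E : Set (ℕ → ℝ × ℝ) := {x | ∀ t : ℕ, 1 ≤ t → |S t x| < u ((t : ℝ))} with hE_def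
  have hEmeas : MeasurableSet E := by
    have : E = ⋂ t : ℕ, ⋂ _ : 1 ≤ t, {x | |S t x| < u ((t : ℝ))} := by
      ext x; simp [hE_def, Set.mem_iInter]
    rw [this]
    exact MeasurableSet.iInter fun t => MeasurableSet.iInter fun _ =>
      measurableSet_lt (hSmeas0 t).abs measurable_const
  have hEc : Eᶜ ⊆ {x | ∃ t : ℕ, 1 ≤ t ∧ u ((t : ℝ)) ≤ S t x}
      ∪ {x | ∃ t : ℕ, 1 ≤ t ∧ u ((t : ℝ)) ≤ - S t x} := by
    intro x hx
    simp only [hE_def, Set.mem_compl_iff, Set.mem_setOf_eq, not_forall] at hx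
    obtain ⟨t, ht, hle⟩ := hx
    rw [not_lt] at hle
    rcases le_abs.1 hle with h | h
    · exact Or.inl ⟨t, ht, h⟩
    · exact Or.inr ⟨t, ht, h⟩
  have hQE : ENNReal.ofReal (1 - α) ≤ Q E := by
    have h1 : Q Eᶜ ≤ ENNReal.ofReal α := by
      calc Q Eᶜ ≤ Q ({x | ∃ t : ℕ, 1 ≤ t ∧ u ((t : ℝ)) ≤ S t x}
          ∪ {x | ∃ t : ℕ, 1 ≤ t ∧ u ((t : ℝ)) ≤ - S t x}) := measure_mono hEc
      _ ≤ _ + _ := measure_union_le _ _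
      _ ≤ ENNReal.ofReal (α / 2) + ENNReal.ofReal (α / 2) := add_le_add hplus hminus
      _ = ENNReal.ofReal α := by
          rw [← ENNReal.ofReal_add (by linarith) (by linarith)]; norm_num
    have h2 : (1 : ℝ≥0∞) ≤ Q E + Q Eᶜ := by
      rw [← measure_univ (μ := Q), ← Set.union_compl_self E]
      exact measure_union_le _ _
    have h3 : (1 : ℝ≥0∞) ≤ Q E + ENNReal.ofReal α := le_trans h2 (add_le_add le_rfl h1)
    have h4 : ENNReal.ofReal (1 - α) + ENNReal.ofReal α = 1 := by
      rw [← ENNReal.ofReal_add (by linarith) (by linarith)]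
      norm_num
    rw [← ENNReal.add_le_add_iff_right ((ENNReal.ofReal_ne_top : ENNReal.ofReal α ≠ ⊤)), h4]
    exact h3
  -- pull back to Ω
  rw [hQ_def, Measure.map_apply hΦ hEmeas] at hQE
  refine le_trans hQE (le_of_eq ?_)
  apply measure_congr
  have hgood : ∀ᵐ ω ∂P, ∀ t : ℕ, 1 ≤ t → (δhc t ω = δhat t ω ∧ δc t ω = δ t ω) := by
    rw [ae_all_iff]
    intro t
    rcases Nat.eq_zero_or_pos t with ht | ht
    · subst ht; exact ae_of_all _ fun ω h => absurd h (by omega)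
    · filter_upwards [hδhc_ae t ht, hδc_ae t ht] with ω h1 h2 _
      exact ⟨h1, h2⟩
  rw [Filter.eventuallyEq_set]
  filter_upwards [hgood] with ω hω
  simp only [Set.mem_preimage, hE_def, Set.mem_setOf_eq]
  constructor
  · intro h t ht
    have hSt := h t ht
    have hteq : S t (Φ ω) = (∑ i ∈ Finset.Icc 1 t, δhat i ω) - ∑ i ∈ Finset.Icc 1 t, δ i ω := by
      simp only [hS_def]
      rw [Finset.sum_sub_distrib]
      congr 1
      · apply Finset.sum_congr rfl
        intro i hi
        rw [hXcomp i (Finset.mem_Icc.1 hi).1 ω, (hω i (Finset.mem_Icc.1 hi).1).1]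
      · apply Finset.sum_congr rfl
        intro i hi
        rw [hMcomp i (Finset.mem_Icc.1 hi).1 ω, (hω i (Finset.mem_Icc.1 hi).1).2]
    rw [hteq] at hSt
    have ht' : (0 : ℝ) < t := by exact_mod_cast ht
    have : (1 / (t : ℝ)) * ∑ i ∈ Finset.Icc 1 t, δhat i ω
        - (1 / (t : ℝ)) * ∑ i ∈ Finset.Icc 1 t, δ i ω
        = ((∑ i ∈ Finset.Icc 1 t, δhat i ω) - ∑ i ∈ Finset.Icc 1 t, δ i ω) / t := by ring
    rw [this, abs_div, abs_of_pos ht', div_lt_div_iff_of_pos_right ht']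
    exact hSt
  · intro h t ht
    have hSt := h t ht
    have hteq : S t (Φ ω) = (∑ i ∈ Finset.Icc 1 t, δhat i ω) - ∑ i ∈ Finset.Icc 1 t, δ i ω := by
      simp only [hS_def]
      rw [Finset.sum_sub_distrib]
      congr 1
      · apply Finset.sum_congr rfl
        intro i hi
        rw [hXcomp i (Finset.mem_Icc.1 hi).1 ω, (hω i (Finset.mem_Icc.1 hi).1).1]
      · apply Finset.sum_congr rfl
        intro i hi
        rw [hMcomp i (Finset.mem_Icc.1 hi).1 ω, (hω i (Finset.mem_Icc.1 hi).1).2]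
    have ht' : (0 : ℝ) < t := by exact_mod_cast ht
    have heq2 : (1 / (t : ℝ)) * ∑ i ∈ Finset.Icc 1 t, δhat i ω
        - (1 / (t : ℝ)) * ∑ i ∈ Finset.Icc 1 t, δ i ω
        = ((∑ i ∈ Finset.Icc 1 t, δhat i ω) - ∑ i ∈ Finset.Icc 1 t, δ i ω) / t := by ring
    rw [heq2, abs_div, abs_of_pos ht', div_lt_div_iff_of_pos_right ht'] at hSt
    rw [hteq]
    exact hSt
end

section
/- (Hoeffding confidence sequence with the normal-mixture boundary.) Suppose E[δ̂_t | 𝒢_{t−1}] = δ_t and |δ̂_t| ≤ 1 a.s. for every t ≥ 1. Then for any α ∈ (0,1) and any ρ > 0, P( for all t ≥ 1, |Δ̂_t − Δ_t| < (1/t)·sqrt( (t+ρ)·log( 4(t+ρ)/(α² ρ) ) ) ) ≥ 1 − α. -/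
open MeasureTheory Set

open Real in
lemma hcs_integrable_gauss_lin (c y : ℝ) (hc : 0 < c) :
    Integrable (fun x : ℝ => Real.exp (y * x - c / 2 * x ^ 2)) := by
  have h : ∀ x : ℝ, y * x - c / 2 * x ^ 2
      = y ^ 2 / (2 * c) + -(c / 2 * (x - y / c) ^ 2) := by
    intro x; field_simp; ring
  simp_rw [h, Real.exp_add]
  refine Integrable.const_mul ?_ _
  have := (integrable_exp_neg_mul_sq (b := c / 2) (by linarith)).comp_sub_right (y / c)
  simpa [neg_mul] using this

lemma hcs_integral_gauss_lin (c y : ℝ) (hc : 0 < c) :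
    ∫ x : ℝ, Real.exp (y * x - c / 2 * x ^ 2)
      = Real.sqrt (2 * Real.pi / c) * Real.exp (y ^ 2 / (2 * c)) := by
  have h : ∀ x : ℝ, y * x - c / 2 * x ^ 2
      = y ^ 2 / (2 * c) + -(c / 2 * (x - y / c) ^ 2) := by
    intro x; field_simp; ring
  simp_rw [h, Real.exp_add]
  rw [MeasureTheory.integral_const_mul]
  have h2 : (∫ x : ℝ, Real.exp (-(c / 2 * (x - y / c) ^ 2)))
      = ∫ x : ℝ, Real.exp (-(c / 2) * x ^ 2) := by
    rw [← integral_sub_right_eq_self (fun x => Real.exp (-(c / 2) * x ^ 2)) (y / c)]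
    congr 1 with x
    ring_nf
  rw [h2, integral_gaussian]
  rw [mul_comm]
  congr 2
  rw [div_div_eq_mul_div, mul_comm]

open Real in
lemma hcs_two_point (δ lam : ℝ) (hδ : |δ| ≤ 1) :
    (1 - δ) / 2 * Real.exp ((-1 - δ) * lam) + (1 + δ) / 2 * Real.exp ((1 - δ) * lam)
      ≤ Real.exp (lam ^ 2 / 2) := by
  set a : ℝ := -1 - δ with ha
  set b : ℝ := 1 - δ with hb
  set q : ℝ := (1 - δ) / 2 with hq
  set p : ℝ := (1 + δ) / 2 with hp
  obtain ⟨hδ1, hδ2⟩ := abs_le.1 hδ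
  have hq0 : 0 ≤ q := by simp [hq]; linarith
  have hp0 : 0 ≤ p := by simp [hp]; linarith
  have hpq : q + p = 1 := by simp [hq, hp]; ring
  have hzero : q * a + p * b = 0 := by simp [hq, hp, ha, hb]; ring
  set h : ℝ → ℝ := fun x => q * Real.exp (a * x) + p * Real.exp (b * x) with hh
  have hhpos : ∀ x, 0 < h x := by
    intro x
    show 0 < q * Real.exp (a * x) + p * Real.exp (b * x)
    rcases lt_or_ge δ 1 with h1 | h1
    · have hq' : 0 < q := by simp only [hq]; linarith
      nlinarith [mul_pos hq' (Real.exp_pos (a * x)), mul_nonneg hp0 (Real.exp_pos (b * x)).le]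
    · have hp' : 0 < p := by simp only [hp]; linarith
      nlinarith [mul_pos hp' (Real.exp_pos (b * x)), mul_nonneg hq0 (Real.exp_pos (a * x)).le]
  set u : ℝ → ℝ := fun x => q * a * Real.exp (a * x) + p * b * Real.exp (b * x) with hu
  set g : ℝ → ℝ := fun x => u x / h x with hg
  have hder_h : ∀ x, HasDerivAt h (u x) x := by
    intro x
    have d1 : HasDerivAt (fun x => Real.exp (a * x)) (a * Real.exp (a * x)) x := by
      simpa [mul_comm] using ((hasDerivAt_id x).const_mul a).exp
    have d2 : HasDerivAt (fun x => Real.exp (b * x)) (b * Real.exp (b * x)) x := by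
      simpa [mul_comm] using ((hasDerivAt_id x).const_mul b).exp
    have := (d1.const_mul q).fun_add (d2.const_mul p)
    simpa [hh, hu, mul_assoc, mul_comm, mul_left_comm] using this
  have hder_u : ∀ x, HasDerivAt u (q * a ^ 2 * Real.exp (a * x) + p * b ^ 2 * Real.exp (b * x)) x := by
    intro x
    have d1 : HasDerivAt (fun x => Real.exp (a * x)) (a * Real.exp (a * x)) x := by
      simpa [mul_comm] using ((hasDerivAt_id x).const_mul a).exp
    have d2 : HasDerivAt (fun x => Real.exp (b * x)) (b * Real.exp (b * x)) x := by
      simpa [mul_comm] using ((hasDerivAt_id x).const_mul b).exp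
    have := (d1.const_mul (q * a)).fun_add (d2.const_mul (p * b))
    refine this.congr_deriv ?_
    ring
  have hder_g : ∀ x, HasDerivAt g
      (((q * a ^ 2 * Real.exp (a * x) + p * b ^ 2 * Real.exp (b * x)) * h x - u x * u x) / (h x) ^ 2) x := by
    intro x
    exact (hder_u x).div (hder_h x) (hhpos x).ne'
  have hg'le : ∀ x, ((q * a ^ 2 * Real.exp (a * x) + p * b ^ 2 * Real.exp (b * x)) * h x - u x * u x) / (h x) ^ 2 ≤ 1 := by
    intro x
    rw [div_le_one (pow_pos (hhpos x) 2)]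
    have hexp : Real.exp (a * x) * Real.exp (b * x) = Real.exp (a * x + b * x) := (Real.exp_add _ _).symm
    have key : (q * a ^ 2 * Real.exp (a * x) + p * b ^ 2 * Real.exp (b * x)) * h x - u x * u x
        = q * p * (a - b) ^ 2 * (Real.exp (a * x) * Real.exp (b * x)) := by
      simp only [hh, hu]; ring
    rw [key]
    have hab : (a - b) ^ 2 = 4 := by simp [ha, hb]; ring
    have hamgm : 4 * (q * Real.exp (a * x)) * (p * Real.exp (b * x)) ≤ (h x) ^ 2 := by
      have := sq_nonneg (q * Real.exp (a * x) - p * Real.exp (b * x))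
      simp only [hh]; nlinarith
    nlinarith [Real.exp_pos (a * x), Real.exp_pos (b * x)]
  have hg0 : g 0 = 0 := by
    simp only [hg, hu, hh, mul_zero, Real.exp_zero, mul_one]
    rw [hzero]; simp
  -- g x ≤ x for x ≥ 0, g x ≥ x for x ≤ 0
  have hgcont : Continuous g := by
    apply Continuous.div
    · fun_prop
    · fun_prop
    · exact fun x => (hhpos x).ne'
  have hgle : ∀ x : ℝ, 0 ≤ x → g x ≤ x := by
    intro x hx
    rcases eq_or_lt_of_le hx with h0 | h0
    · rw [← h0, hg0]
    · obtain ⟨c, _, hc⟩ := exists_hasDerivAt_eq_slope g _ h0 (hgcont.continuousOn)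
        (fun y _ => hder_g y)
      have h1 := hg'le c
      rw [hc, hg0, sub_zero, sub_zero, div_le_one h0] at h1
      exact h1
  have hgge : ∀ x : ℝ, x ≤ 0 → x ≤ g x := by
    intro x hx
    rcases eq_or_lt_of_le hx with h0 | h0
    · rw [h0, hg0]
    · obtain ⟨c, _, hc⟩ := exists_hasDerivAt_eq_slope g _ h0 (hgcont.continuousOn)
        (fun y _ => hder_g y)
      have h1 := hg'le c
      rw [hc] at h1
      rw [hg0, zero_sub, div_le_one (by linarith)] at h1
      linarith
  -- FTC: log (h lam) = ∫ g
  have hder_log : ∀ x, HasDerivAt (fun y => Real.log (h y)) (g x) x := by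
    intro x
    exact (hder_h x).log (hhpos x).ne'
  have hftc : ∀ l : ℝ, Real.log (h l) = ∫ s in (0:ℝ)..l, g s := by
    intro l
    have := intervalIntegral.integral_eq_sub_of_hasDerivAt
      (f := fun y => Real.log (h y)) (f' := g) (a := 0) (b := l)
      (fun x _ => hder_log x) (hgcont.intervalIntegrable 0 l)
    have h01 : h 0 = 1 := by
      show q * Real.exp (a * 0) + p * Real.exp (b * 0) = 1
      simp only [mul_zero, Real.exp_zero, mul_one]
      linarith
    rw [this]
    show Real.log (h l) = Real.log (h l) - Real.log (h 0)
    rw [h01, Real.log_one, sub_zero]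
  have hloghle : Real.log (h lam) ≤ lam ^ 2 / 2 := by
    rw [hftc lam]
    rcases le_or_gt 0 lam with hl | hl
    · calc (∫ s in (0:ℝ)..lam, g s) ≤ ∫ s in (0:ℝ)..lam, s := by
            apply intervalIntegral.integral_mono_on hl (hgcont.intervalIntegrable 0 lam)
              (continuous_id.intervalIntegrable 0 lam)
            intro s hs
            exact hgle s hs.1
        _ = lam ^ 2 / 2 := by rw [integral_id]; ring
    · rw [intervalIntegral.integral_symm]
      have : (∫ s in lam..(0:ℝ), s) ≤ ∫ s in lam..(0:ℝ), g s := by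
        apply intervalIntegral.integral_mono_on hl.le (continuous_id.intervalIntegrable lam 0)
          (hgcont.intervalIntegrable lam 0)
        intro s hs
        exact hgge s hs.2
      have h2 : (∫ s in lam..(0:ℝ), s) = -(lam ^ 2 / 2) := by rw [integral_id]; ring
      rw [h2] at this
      linarith
  have := Real.exp_le_exp.2 hloghle
  rw [Real.exp_log (hhpos lam)] at this
  calc (1 - δ) / 2 * Real.exp ((-1 - δ) * lam) + (1 + δ) / 2 * Real.exp ((1 - δ) * lam) = h lam := rfl
    _ ≤ Real.exp (lam ^ 2 / 2) := this

open Real in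
lemma hcs_convex (v' c x : ℝ) (hx : |x| ≤ 1) (hv' : 0 < v') :
    Real.exp ((c + x) ^ 2 / (2 * v'))
      ≤ (1 - x) / 2 * Real.exp ((c - 1) ^ 2 / (2 * v'))
        + (1 + x) / 2 * Real.exp ((c + 1) ^ 2 / (2 * v')) := by
  obtain ⟨h1, h2⟩ := abs_le.1 hx
  have ht : (0:ℝ) ≤ (1 - x) / 2 := by linarith
  have ht2 : (0:ℝ) ≤ (1 + x) / 2 := by linarith
  have hsum : (1 - x) / 2 + (1 + x) / 2 = 1 := by ring
  have hcx := convexOn_exp.2 (Set.mem_univ ((c - 1) ^ 2 / (2 * v')))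
    (Set.mem_univ ((c + 1) ^ 2 / (2 * v'))) ht ht2 hsum
  calc Real.exp ((c + x) ^ 2 / (2 * v'))
      ≤ Real.exp ((1 - x) / 2 * ((c - 1) ^ 2 / (2 * v')) + (1 + x) / 2 * ((c + 1) ^ 2 / (2 * v'))) := by
        apply Real.exp_le_exp.2
        have hnum : (c + x) ^ 2 ≤ (1 - x) / 2 * (c - 1) ^ 2 + (1 + x) / 2 * (c + 1) ^ 2 := by
          nlinarith [sq_nonneg x]
        have heq : (1 - x) / 2 * ((c - 1) ^ 2 / (2 * v')) + (1 + x) / 2 * ((c + 1) ^ 2 / (2 * v'))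
            = ((1 - x) / 2 * (c - 1) ^ 2 + (1 + x) / 2 * (c + 1) ^ 2) / (2 * v') := by ring
        rw [heq]
        gcongr
    _ ≤ (1 - x) / 2 * Real.exp ((c - 1) ^ 2 / (2 * v'))
        + (1 + x) / 2 * Real.exp ((c + 1) ^ 2 / (2 * v')) := by
        simpa [smul_eq_mul] using hcx

lemma hcs_step (v S δ : ℝ) (hv : 0 < v) (hδ : |δ| ≤ 1) :
    (1 - δ) / 2 * Real.exp ((S + (-1 - δ)) ^ 2 / (2 * (v + 1)))
      + (1 + δ) / 2 * Real.exp ((S + (1 - δ)) ^ 2 / (2 * (v + 1)))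
      ≤ Real.sqrt ((v + 1) / v) * Real.exp (S ^ 2 / (2 * v)) := by
  set c : ℝ := v + 1 with hc
  have hcpos : 0 < c := by linarith
  set K : ℝ := Real.sqrt (2 * Real.pi / c) with hK
  have hKpos : 0 < K := Real.sqrt_pos.2 (by positivity)
  rw [← mul_le_mul_iff_right₀ hKpos]
  have hrep : ∀ y : ℝ, K * Real.exp (y ^ 2 / (2 * c)) = ∫ x : ℝ, Real.exp (y * x - c / 2 * x ^ 2) :=
    fun y => (hcs_integral_gauss_lin c y hcpos).symm
  have hmid : K * ((1 - δ) / 2 * Real.exp ((S + (-1 - δ)) ^ 2 / (2 * c))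
      + (1 + δ) / 2 * Real.exp ((S + (1 - δ)) ^ 2 / (2 * c)))
      = ∫ x : ℝ, ((1 - δ) / 2 * Real.exp ((S + (-1 - δ)) * x - c / 2 * x ^ 2)
          + (1 + δ) / 2 * Real.exp ((S + (1 - δ)) * x - c / 2 * x ^ 2)) := by
    rw [integral_add ((hcs_integrable_gauss_lin c _ hcpos).const_mul _)
      ((hcs_integrable_gauss_lin c _ hcpos).const_mul _)]
    rw [MeasureTheory.integral_const_mul, MeasureTheory.integral_const_mul, ← hrep, ← hrep]
    ring
  rw [hmid]
  have hle : (∫ x : ℝ, ((1 - δ) / 2 * Real.exp ((S + (-1 - δ)) * x - c / 2 * x ^ 2)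
      + (1 + δ) / 2 * Real.exp ((S + (1 - δ)) * x - c / 2 * x ^ 2)))
      ≤ ∫ x : ℝ, Real.exp (S * x - v / 2 * x ^ 2) := by
    apply integral_mono
      (((hcs_integrable_gauss_lin c _ hcpos).const_mul _).add
        ((hcs_integrable_gauss_lin c _ hcpos).const_mul _))
      (hcs_integrable_gauss_lin v S hv)
    intro x
    simp only [Pi.add_apply]
    have h2p := hcs_two_point δ x hδ
    have hfac : 0 < Real.exp (S * x - c / 2 * x ^ 2) := Real.exp_pos _
    have e1 : (S + (-1 - δ)) * x - c / 2 * x ^ 2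
        = (S * x - c / 2 * x ^ 2) + (-1 - δ) * x := by ring
    have e2 : (S + (1 - δ)) * x - c / 2 * x ^ 2
        = (S * x - c / 2 * x ^ 2) + (1 - δ) * x := by ring
    have e3 : S * x - v / 2 * x ^ 2 = (S * x - c / 2 * x ^ 2) + x ^ 2 / 2 := by
      rw [hc]; ring
    simp only [e1, e2, e3, Real.exp_add]
    calc (1 - δ) / 2 * (Real.exp (S * x - c / 2 * x ^ 2) * Real.exp ((-1 - δ) * x))
          + (1 + δ) / 2 * (Real.exp (S * x - c / 2 * x ^ 2) * Real.exp ((1 - δ) * x))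
        = Real.exp (S * x - c / 2 * x ^ 2)
            * ((1 - δ) / 2 * Real.exp ((-1 - δ) * x) + (1 + δ) / 2 * Real.exp ((1 - δ) * x)) := by
          ring
      _ ≤ Real.exp (S * x - c / 2 * x ^ 2) * Real.exp (x ^ 2 / 2) :=
          mul_le_mul_of_nonneg_left h2p hfac.le
  refine hle.trans ?_
  rw [hcs_integral_gauss_lin v S hv]
  have : K * Real.sqrt ((v + 1) / v) = Real.sqrt (2 * Real.pi / v) := by
    rw [hK, ← Real.sqrt_mul (by positivity)]
    congr 1
    rw [← hc]
    field_simp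
  rw [← this]
  simp only [hc]
  ring_nf
  exact le_refl _

lemma hcs_ville {Ω : Type*} {m0 : MeasurableSpace Ω} {P : Measure Ω} [IsProbabilityMeasure P]
    (𝒢 : Filtration ℕ m0) {M : ℕ → Ω → ℝ} (hM : Supermartingale M 𝒢 P)
    (hnonneg : ∀ t ω, 0 ≤ M t ω) {ε : ℝ} (hε : 0 < ε) :
    P {ω | ∃ t, ε ≤ M t ω} ≤ ENNReal.ofReal ((∫ ω, M 0 ω ∂P) / ε) := by
  have hmeasM : ∀ t, Measurable (M t) :=
    fun t => ((hM.stronglyAdapted t).measurable).le (𝒢.le t)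
  set C : ℕ → Set Ω := fun N => {ω | ∃ j ≤ N, ε ≤ M j ω} with hC
  have hCmeas : ∀ N, MeasurableSet (C N) := by
    intro N
    have : C N = ⋃ j ∈ Finset.range (N + 1), {ω | ε ≤ M j ω} := by
      ext ω
      simp only [hC, Set.mem_setOf_eq, Set.mem_iUnion, Finset.mem_range, Nat.lt_succ_iff]
      tauto
    rw [this]
    exact MeasurableSet.biUnion (Finset.range (N + 1)).countable_toSet
      (fun j _ => measurableSet_le measurable_const (hmeasM j))
  have hmono : Monotone C := by
    intro N N' hNN' ω ⟨j, hj, hωj⟩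
    exact ⟨j, hj.trans hNN', hωj⟩
  have hunion : {ω | ∃ t, ε ≤ M t ω} = ⋃ N, C N := by
    ext ω
    simp only [Set.mem_setOf_eq, Set.mem_iUnion, hC]
    exact ⟨fun ⟨t, ht⟩ => ⟨t, t, le_refl t, ht⟩, fun ⟨N, j, _, hj⟩ => ⟨j, hj⟩⟩
  rw [hunion, (hmono.directed_le).measure_iUnion]
  refine iSup_le fun N => ?_
  -- optional stopping bound for fixed N
  set τ : Ω → WithTop ℕ := fun ω => (hittingBtwn M (Set.Ici ε) 0 N ω : ℕ) with hτdef
  have hτ : IsStoppingTime 𝒢 τ :=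
    Adapted.isStoppingTime_hittingBtwn (fun t => (hM.stronglyAdapted t).measurable) measurableSet_Ici
  have hτle : ∀ ω, τ ω ≤ N := fun ω => WithTop.coe_le_coe.2 (hittingBtwn_le ω)
  have hsvInt : Integrable (stoppedValue M τ) P := by
    have := (hM.neg.integrable_stoppedValue hτ hτle).neg
    convert this using 1
    ext ω
    simp [stoppedValue]
  have hsv_nonneg : ∀ ω, 0 ≤ stoppedValue M τ ω := fun ω => hnonneg _ _
  have hsv_ge : ∀ ω ∈ C N, ε ≤ stoppedValue M τ ω := by
    intro ω ⟨j, hjN, hωj⟩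
    exact stoppedValue_hittingBtwn_mem ⟨j, ⟨Nat.zero_le j, hjN⟩, hωj⟩
  have h1 : ε * (P (C N)).toReal ≤ ∫ ω in C N, stoppedValue M τ ω ∂P :=
    setIntegral_ge_of_const_le_real (hCmeas N) (measure_ne_top P _) hsv_ge hsvInt.integrableOn
  have h2 : ∫ ω in C N, stoppedValue M τ ω ∂P ≤ ∫ ω, stoppedValue M τ ω ∂P :=
    setIntegral_le_integral hsvInt (Filter.Eventually.of_forall hsv_nonneg)
  have h3 : ∫ ω, stoppedValue M τ ω ∂P ≤ ∫ ω, M 0 ω ∂P := by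
    have := hM.neg.expected_stoppedValue_mono (isStoppingTime_const 𝒢 0) hτ
      (fun ω => WithTop.coe_le_coe.2 (Nat.zero_le _)) hτle
    rw [stoppedValue_const] at this
    have hneg1 : ∫ x, stoppedValue (-M) τ x ∂P = -(∫ ω, stoppedValue M τ ω ∂P) := by
      rw [← integral_neg]
      rfl
    have hneg2 : ∫ x, (-M) 0 x ∂P = -(∫ ω, M 0 ω ∂P) := by
      rw [← integral_neg]
      rfl
    rw [hneg1, hneg2] at this
    linarith
  have hfin : P (C N) ≠ ⊤ := measure_ne_top P _
  rw [← ENNReal.ofReal_toReal hfin]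
  apply ENNReal.ofReal_le_ofReal
  rw [le_div_iff₀ hε]
  calc (P (C N)).toReal * ε = ε * (P (C N)).toReal := by ring
    _ ≤ ∫ ω in C N, stoppedValue M τ ω ∂P := h1
    _ ≤ ∫ ω, M 0 ω ∂P := h2.trans h3

lemma hcs_integrable_bdd {Ω : Type*} {m0 : MeasurableSpace Ω} {P : Measure Ω}
    [IsFiniteMeasure P] {f : Ω → ℝ} (hf : Measurable f) (c : ℝ) (h : ∀ ω, |f ω| ≤ c) :
    Integrable f P :=
  ⟨hf.aestronglyMeasurable, HasFiniteIntegral.of_bounded (C := c)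
    (Filter.Eventually.of_forall fun ω => by rw [Real.norm_eq_abs]; exact h ω)⟩

/-- **Hoeffding confidence sequence with the normal-mixture boundary.**
Suppose `E[δ̂_t | 𝒢_{t−1}] = δ_t` and `|δ̂_t| ≤ 1` a.s. for every `t ≥ 1`.  Then for any
`α ∈ (0,1)` and any `ρ > 0`,
`P(∀ t ≥ 1, |Δ̂_t − Δ_t| < (1/t)·√((t+ρ)·log(4(t+ρ)/(α²ρ)))) ≥ 1 − α`,
where `Δ̂_t = (1/t) Σ_{i=1}^t δ̂_i` and `Δ_t = (1/t) Σ_{i=1}^t δ_i`. -/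
theorem hoeffding_confidence_sequence_normal_mixture
    {Ω : Type*} {m0 : MeasurableSpace Ω} {P : Measure Ω} [IsProbabilityMeasure P]
    (𝒢 : Filtration ℕ m0)
    (δhat δ : ℕ → Ω → ℝ)
    (hδhat_adapted : ∀ t : ℕ, 1 ≤ t → Measurable[𝒢 t] (δhat t))
    (hδhat_bdd : ∃ C : ℝ, ∀ t ω, |δhat t ω| ≤ C)
    (hδ_pred : ∀ t : ℕ, 1 ≤ t → Measurable[𝒢 (t - 1)] (δ t))
    (hδ_bdd : ∃ C : ℝ, ∀ t ω, |δ t ω| ≤ C)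
    (hcond : ∀ t : ℕ, 1 ≤ t → P[δhat t | 𝒢 (t - 1)] =ᵐ[P] δ t)
    (habs : ∀ t : ℕ, 1 ≤ t → ∀ᵐ ω ∂P, |δhat t ω| ≤ 1)
    (α : ℝ) (hα : α ∈ Ioo (0:ℝ) 1) (ρ : ℝ) (hρ : 0 < ρ) :
    ENNReal.ofReal (1 - α) ≤
      P {ω | ∀ t : ℕ, 1 ≤ t →
        |(1 / (t : ℝ)) * ∑ i ∈ Finset.Icc 1 t, δhat i ω
            - (1 / (t : ℝ)) * ∑ i ∈ Finset.Icc 1 t, δ i ω|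
          < (1 / (t : ℝ)) *
              Real.sqrt (((t : ℝ) + ρ) * Real.log (4 * ((t : ℝ) + ρ) / (α ^ 2 * ρ)))} := by
  obtain ⟨hα0, hα1⟩ := hα
  obtain ⟨C1, hC1⟩ := hδhat_bdd
  obtain ⟨C2, hC2⟩ := hδ_bdd
  set S : ℕ → Ω → ℝ := fun t ω => ∑ i ∈ Finset.Icc 1 t, (δhat i ω - δ i ω) with hSdef
  have hSmeas : ∀ t, Measurable[𝒢 t] (S t) := by
    intro t
    apply Finset.measurable_sum
    intro i hi
    rw [Finset.mem_Icc] at hi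
    exact ((hδhat_adapted i hi.1).le (𝒢.mono hi.2)).sub
      ((hδ_pred i hi.1).le (𝒢.mono ((Nat.sub_le i 1).trans hi.2)))
  have hSbdd : ∀ t ω, |S t ω| ≤ (t : ℝ) * (C1 + C2) := by
    intro t ω
    calc |S t ω| ≤ ∑ i ∈ Finset.Icc 1 t, |δhat i ω - δ i ω| := Finset.abs_sum_le_sum_abs _ _
      _ ≤ ∑ i ∈ Finset.Icc 1 t, (C1 + C2) := by
          apply Finset.sum_le_sum
          intro i _
          exact (abs_sub _ _).trans (add_le_add (hC1 i ω) (hC2 i ω))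
      _ = (t : ℝ) * (C1 + C2) := by
          rw [Finset.sum_const, Nat.card_Icc]
          simp [nsmul_eq_mul]
          ring
  set M : ℕ → Ω → ℝ :=
    fun t ω => Real.sqrt (ρ / ((t : ℝ) + ρ)) * Real.exp ((S t ω) ^ 2 / (2 * ((t : ℝ) + ρ)))
    with hMdef
  have hMnonneg : ∀ t ω, 0 ≤ M t ω :=
    fun t ω => mul_nonneg (Real.sqrt_nonneg _) (Real.exp_pos _).le
  have htρ : ∀ t : ℕ, (0:ℝ) < (t : ℝ) + ρ := fun t => by positivity
  have hMmeas : ∀ t, Measurable[𝒢 t] (M t) :=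
    fun t => measurable_const.mul ((((hSmeas t).pow_const 2).div_const _).exp)
  have hMadapted : StronglyAdapted 𝒢 M := fun t => (hMmeas t).stronglyMeasurable
  have hMbdd : ∀ t ω, |M t ω| ≤ Real.sqrt (ρ / ((t : ℝ) + ρ))
      * Real.exp (((t : ℝ) * (C1 + C2)) ^ 2 / (2 * ((t : ℝ) + ρ))) := by
    intro t ω
    rw [abs_of_nonneg (hMnonneg t ω)]
    apply mul_le_mul_of_nonneg_left _ (Real.sqrt_nonneg _)
    apply Real.exp_le_exp.2
    apply div_le_div_of_nonneg_right ?_ (by positivity) |>.trans_eq rfl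
    rw [← sq_abs (S t ω)]
    exact pow_le_pow_left₀ (abs_nonneg _) (hSbdd t ω) 2
  have hMint : ∀ t, Integrable (M t) P :=
    fun t => hcs_integrable_bdd ((hMmeas t).le (𝒢.le t)) _ (hMbdd t)
  -- the supermartingale step
  have hstep : ∀ t : ℕ, P[M (t + 1) | 𝒢 t] ≤ᵐ[P] M t := by
    intro t
    set v : ℝ := (t : ℝ) + ρ with hvdef
    have hv : 0 < v := htρ t
    have hv1 : ((t + 1 : ℕ) : ℝ) + ρ = v + 1 := by push_cast; ring
    have h1t : 1 ≤ t + 1 := Nat.le_add_left 1 t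
    have habs' : ∀ᵐ ω ∂P, |δhat (t + 1) ω| ≤ 1 := habs (t + 1) h1t
    have hδhat_meas : Measurable (δhat (t + 1)) :=
      (hδhat_adapted (t + 1) h1t).le (𝒢.le (t + 1))
    have hδhat_int : Integrable (δhat (t + 1)) P := hcs_integrable_bdd hδhat_meas C1 (hC1 _)
    have hδmeas : Measurable[𝒢 t] (δ (t + 1)) := by
      have := hδ_pred (t + 1) h1t
      simpa using this
    have hcond' : P[δhat (t + 1) | 𝒢 t] =ᵐ[P] δ (t + 1) := by
      have := hcond (t + 1) h1t
      simpa using this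
    have hδ1 : ∀ᵐ ω ∂P, |δ (t + 1) ω| ≤ 1 := by
      have hup : P[δhat (t + 1) | 𝒢 t] ≤ᵐ[P] fun _ => (1:ℝ) := by
        calc P[δhat (t + 1) | 𝒢 t] ≤ᵐ[P] P[(fun _ => (1:ℝ)) | 𝒢 t] :=
              condExp_mono (m := 𝒢 t) hδhat_int (integrable_const (1:ℝ))
                (habs'.mono fun ω h => (abs_le.1 h).2)
          _ =ᵐ[P] fun _ => (1:ℝ) := by rw [condExp_const (𝒢.le t)]
      have hlow : (fun _ => (-1:ℝ)) ≤ᵐ[P] P[δhat (t + 1) | 𝒢 t] := by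
        calc (fun _ => (-1:ℝ)) =ᵐ[P] P[(fun _ => (-1:ℝ)) | 𝒢 t] := by
              rw [condExp_const (𝒢.le t)]
          _ ≤ᵐ[P] P[δhat (t + 1) | 𝒢 t] :=
              condExp_mono (m := 𝒢 t) (integrable_const (-1:ℝ)) hδhat_int
                (habs'.mono fun ω h => (abs_le.1 h).1)
      filter_upwards [hup, hlow, hcond'] with ω h1 h2 h3
      rw [← h3]
      exact abs_le.2 ⟨h2, h1⟩
    set φm : Ω → ℝ := fun ω => Real.exp ((S t ω + (-1 - δ (t + 1) ω)) ^ 2 / (2 * (v + 1)))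
      with hφmdef
    set φp : Ω → ℝ := fun ω => Real.exp ((S t ω + (1 - δ (t + 1) ω)) ^ 2 / (2 * (v + 1)))
      with hφpdef
    set K : ℝ := Real.sqrt (ρ / (v + 1)) with hKdef
    have hK0 : 0 ≤ K := Real.sqrt_nonneg _
    set g0 : Ω → ℝ := fun ω => K * (φm ω + φp ω) / 2 with hg0def
    set g1 : Ω → ℝ := fun ω => K * (φp ω - φm ω) / 2 with hg1def
    set Z : ℝ := (((t:ℝ) * (C1 + C2) + 1 + C2) ^ 2) / (2 * (v + 1)) with hZdef
    have hφbd : ∀ ω, φm ω ≤ Real.exp Z ∧ φp ω ≤ Real.exp Z := by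
      intro ω
      have hda : |δ (t + 1) ω| ≤ C2 := hC2 _ _
      have hs := hSbdd t ω
      constructor
      · apply Real.exp_le_exp.2
        apply div_le_div_of_nonneg_right ?_ (by positivity) |>.trans_eq rfl
        rw [← sq_abs]
        apply pow_le_pow_left₀ (abs_nonneg _) ?_ 2
        calc |S t ω + (-1 - δ (t + 1) ω)| ≤ |S t ω| + |(-1:ℝ) - δ (t + 1) ω| := abs_add_le _ _
          _ ≤ (t:ℝ) * (C1 + C2) + 1 + C2 := by
              have h4 : |(-1:ℝ) - δ (t + 1) ω| ≤ 1 + C2 := by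
                calc |(-1:ℝ) - δ (t + 1) ω| ≤ |(-1:ℝ)| + |δ (t + 1) ω| := abs_sub _ _
                  _ ≤ 1 + C2 := by rw [abs_neg, abs_one]; linarith
              linarith
      · apply Real.exp_le_exp.2
        apply div_le_div_of_nonneg_right ?_ (by positivity) |>.trans_eq rfl
        rw [← sq_abs]
        apply pow_le_pow_left₀ (abs_nonneg _) ?_ 2
        calc |S t ω + (1 - δ (t + 1) ω)| ≤ |S t ω| + |(1:ℝ) - δ (t + 1) ω| := abs_add_le _ _
          _ ≤ (t:ℝ) * (C1 + C2) + 1 + C2 := by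
              have h4 : |(1:ℝ) - δ (t + 1) ω| ≤ 1 + C2 := by
                calc |(1:ℝ) - δ (t + 1) ω| ≤ |(1:ℝ)| + |δ (t + 1) ω| := abs_sub _ _
                  _ ≤ 1 + C2 := by rw [abs_one]; linarith
              linarith
    have hφ0 : ∀ ω, 0 ≤ φm ω ∧ 0 ≤ φp ω := fun ω => ⟨(Real.exp_pos _).le, (Real.exp_pos _).le⟩
    have hφm_meas : Measurable[𝒢 t] φm :=
      ((((hSmeas t).add (measurable_const.sub hδmeas)).pow_const 2).div_const _).exp
    have hφp_meas : Measurable[𝒢 t] φp :=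
      ((((hSmeas t).add (measurable_const.sub hδmeas)).pow_const 2).div_const _).exp
    have hg0_meas : Measurable[𝒢 t] g0 :=
      (measurable_const.mul (hφm_meas.add hφp_meas)).div_const 2
    have hg1_meas : Measurable[𝒢 t] g1 :=
      (measurable_const.mul (hφp_meas.sub hφm_meas)).div_const 2
    have hKE0 : 0 ≤ K * Real.exp Z := mul_nonneg hK0 (Real.exp_pos _).le
    have hg0bd : ∀ ω, |g0 ω| ≤ K * Real.exp Z := by
      intro ω
      obtain ⟨h1, h2⟩ := hφbd ω
      obtain ⟨h3, h4⟩ := hφ0 ω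
      have hnn : 0 ≤ g0 ω :=
        div_nonneg (mul_nonneg hK0 (by linarith)) (by norm_num)
      rw [abs_of_nonneg hnn]
      have := mul_le_mul_of_nonneg_left (add_le_add h1 h2) hK0
      simp only [hg0def]
      linarith
    have hg1bd : ∀ ω, |g1 ω| ≤ K * Real.exp Z := by
      intro ω
      obtain ⟨h1, h2⟩ := hφbd ω
      obtain ⟨h3, h4⟩ := hφ0 ω
      have h5 : |φp ω - φm ω| ≤ Real.exp Z := abs_le.2 ⟨by linarith, by linarith⟩
      simp only [hg1def]
      rw [abs_div, abs_mul, abs_of_nonneg hK0]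
      have h6 : K * |φp ω - φm ω| ≤ K * Real.exp Z := mul_le_mul_of_nonneg_left h5 hK0
      have : |(2:ℝ)| = 2 := by norm_num
      rw [this]
      linarith [hKE0]
    have hg0int : Integrable g0 P := hcs_integrable_bdd (hg0_meas.le (𝒢.le t)) _ hg0bd
    have hg1δhat_int : Integrable (fun ω => g1 ω * δhat (t + 1) ω) P := by
      apply hcs_integrable_bdd ((hg1_meas.le (𝒢.le t)).mul hδhat_meas) (K * Real.exp Z * C1)
      intro ω
      show |g1 ω * δhat (t + 1) ω| ≤ _
      rw [abs_mul]
      exact mul_le_mul (hg1bd ω) (hC1 _ _) (abs_nonneg _) hKE0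
    have hUint : Integrable (fun ω => g0 ω + g1 ω * δhat (t + 1) ω) P := hg0int.add hg1δhat_int
    -- Step A : pointwise majorization a.e.
    have hA : M (t + 1) ≤ᵐ[P] fun ω => g0 ω + g1 ω * δhat (t + 1) ω := by
      filter_upwards [habs'] with ω hω
      have hSrec : S (t + 1) ω = S t ω + (δhat (t + 1) ω - δ (t + 1) ω) := by
        simp only [hSdef]
        rw [Finset.sum_Icc_succ_top h1t]
      have hconv := hcs_convex (v + 1) (S t ω - δ (t + 1) ω) (δhat (t + 1) ω) hω (by linarith)
      have e1 : S t ω - δ (t + 1) ω - 1 = S t ω + (-1 - δ (t + 1) ω) := by ring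
      have e2 : S t ω - δ (t + 1) ω + 1 = S t ω + (1 - δ (t + 1) ω) := by ring
      rw [e1, e2] at hconv
      have hMval : M (t + 1) ω
          = K * Real.exp ((S t ω - δ (t + 1) ω + δhat (t + 1) ω) ^ 2 / (2 * (v + 1))) := by
        simp only [hMdef, hKdef]
        rw [hv1, hSrec]
        congr 2
        ring
      rw [hMval]
      calc K * Real.exp ((S t ω - δ (t + 1) ω + δhat (t + 1) ω) ^ 2 / (2 * (v + 1)))
          ≤ K * ((1 - δhat (t + 1) ω) / 2 * φm ω + (1 + δhat (t + 1) ω) / 2 * φp ω) :=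
            mul_le_mul_of_nonneg_left hconv hK0
        _ = g0 ω + g1 ω * δhat (t + 1) ω := by
            simp only [hg0def, hg1def]
            ring
    have hB : P[M (t + 1) | 𝒢 t] ≤ᵐ[P] P[fun ω => g0 ω + g1 ω * δhat (t + 1) ω | 𝒢 t] :=
      condExp_mono (hMint (t + 1)) hUint hA
    have hCeq : P[fun ω => g0 ω + g1 ω * δhat (t + 1) ω | 𝒢 t]
        =ᵐ[P] fun ω => g0 ω + g1 ω * δ (t + 1) ω := by
      have hadd : P[fun ω => g0 ω + g1 ω * δhat (t + 1) ω | 𝒢 t]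
          =ᵐ[P] P[g0 | 𝒢 t] + P[fun ω => g1 ω * δhat (t + 1) ω | 𝒢 t] :=
        condExp_add hg0int hg1δhat_int (𝒢 t)
      have hg0eq : P[g0 | 𝒢 t] = g0 :=
        condExp_of_stronglyMeasurable (𝒢.le t) hg0_meas.stronglyMeasurable hg0int
      have hmul : P[fun ω => g1 ω * δhat (t + 1) ω | 𝒢 t]
          =ᵐ[P] g1 * P[δhat (t + 1) | 𝒢 t] :=
        condExp_stronglyMeasurable_mul_of_bound (𝒢.le t) hg1_meas.stronglyMeasurable
          hδhat_int (K * Real.exp Z)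
          (Filter.Eventually.of_forall fun ω => by rw [Real.norm_eq_abs]; exact hg1bd ω)
      have hmul2 : g1 * P[δhat (t + 1) | 𝒢 t] =ᵐ[P] fun ω => g1 ω * δ (t + 1) ω := by
        filter_upwards [hcond'] with ω h
        simp [h]
      calc P[fun ω => g0 ω + g1 ω * δhat (t + 1) ω | 𝒢 t]
          =ᵐ[P] P[g0 | 𝒢 t] + P[fun ω => g1 ω * δhat (t + 1) ω | 𝒢 t] := hadd
        _ =ᵐ[P] fun ω => g0 ω + g1 ω * δ (t + 1) ω := by
            rw [hg0eq]
            filter_upwards [hmul.trans hmul2] with ω h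
            simp only [Pi.add_apply]
            rw [h]
    have hD : (fun ω => g0 ω + g1 ω * δ (t + 1) ω) ≤ᵐ[P] M t := by
      filter_upwards [hδ1] with ω hω
      have hsp := hcs_step v (S t ω) (δ (t + 1) ω) hv hω
      have hKs : K * Real.sqrt ((v + 1) / v) = Real.sqrt (ρ / v) := by
        rw [hKdef, ← Real.sqrt_mul (by positivity)]
        congr 1
        field_simp
      have he : g0 ω + g1 ω * δ (t + 1) ω
          = K * ((1 - δ (t + 1) ω) / 2 * φm ω + (1 + δ (t + 1) ω) / 2 * φp ω) := by
        simp only [hg0def, hg1def]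
        ring
      rw [he]
      calc K * ((1 - δ (t + 1) ω) / 2 * φm ω + (1 + δ (t + 1) ω) / 2 * φp ω)
          ≤ K * (Real.sqrt ((v + 1) / v) * Real.exp ((S t ω) ^ 2 / (2 * v))) :=
            mul_le_mul_of_nonneg_left hsp hK0
        _ = M t ω := by rw [← mul_assoc, hKs]
    exact hB.trans (hCeq.le.trans hD)
  have hsuper : Supermartingale M 𝒢 P := supermartingale_nat hMadapted hMint hstep
  have hM0 : ∫ ω, M 0 ω ∂P = 1 := by
    have hM0eq : M 0 = fun _ => 1 := by
      funext ω
      simp only [hMdef, hSdef]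
      rw [Finset.Icc_eq_empty (by norm_num), Finset.sum_empty]
      norm_num [div_self hρ.ne']
    rw [hM0eq]
    simp
  have hville := hcs_ville 𝒢 hsuper hMnonneg (ε := α⁻¹) (by positivity)
  rw [hM0, one_div, inv_inv] at hville
  -- relating the bad event to the supermartingale
  set G : Set Ω := {ω | ∀ t : ℕ, 1 ≤ t →
        |(1 / (t : ℝ)) * ∑ i ∈ Finset.Icc 1 t, δhat i ω
            - (1 / (t : ℝ)) * ∑ i ∈ Finset.Icc 1 t, δ i ω|
          < (1 / (t : ℝ)) *
              Real.sqrt (((t : ℝ) + ρ) * Real.log (4 * ((t : ℝ) + ρ) / (α ^ 2 * ρ)))} with hGdef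
  have hsummeas : ∀ t : ℕ, 1 ≤ t → Measurable (fun ω =>
      |(1 / (t : ℝ)) * ∑ i ∈ Finset.Icc 1 t, δhat i ω
        - (1 / (t : ℝ)) * ∑ i ∈ Finset.Icc 1 t, δ i ω|) := by
    intro t ht
    apply Measurable.abs
    apply Measurable.sub
    · apply Measurable.const_mul
      apply Finset.measurable_sum
      intro i hi
      rw [Finset.mem_Icc] at hi
      exact (hδhat_adapted i hi.1).le (𝒢.le i)
    · apply Measurable.const_mul
      apply Finset.measurable_sum
      intro i hi
      rw [Finset.mem_Icc] at hi
      exact (hδ_pred i hi.1).le (𝒢.le (i - 1))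
  have hGmeas : MeasurableSet G := by
    have : G = ⋂ (t : ℕ), ⋂ (_ : 1 ≤ t), {ω |
        |(1 / (t : ℝ)) * ∑ i ∈ Finset.Icc 1 t, δhat i ω
            - (1 / (t : ℝ)) * ∑ i ∈ Finset.Icc 1 t, δ i ω|
          < (1 / (t : ℝ)) *
              Real.sqrt (((t : ℝ) + ρ) * Real.log (4 * ((t : ℝ) + ρ) / (α ^ 2 * ρ)))} := by
      ext ω
      simp only [hGdef, Set.mem_setOf_eq, Set.mem_iInter]
    rw [this]
    exact MeasurableSet.iInter fun t => MeasurableSet.iInter fun ht =>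
      measurableSet_lt (hsummeas t ht) measurable_const
  have hsub : Gᶜ ⊆ {ω | ∃ t, α⁻¹ ≤ M t ω} := by
    intro ω hω
    simp only [hGdef, Set.mem_compl_iff, Set.mem_setOf_eq, not_forall, not_lt] at hω
    obtain ⟨t, ht1, hge⟩ := hω
    have htpos : (0:ℝ) < (t : ℝ) := by exact_mod_cast Nat.lt_of_lt_of_le Nat.zero_lt_one ht1
    have h1t : (0:ℝ) < 1 / (t : ℝ) := by positivity
    have heq : |(1 / (t : ℝ)) * ∑ i ∈ Finset.Icc 1 t, δhat i ω
        - (1 / (t : ℝ)) * ∑ i ∈ Finset.Icc 1 t, δ i ω| = (1 / (t : ℝ)) * |S t ω| := by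
      rw [← mul_sub, abs_mul, abs_of_pos h1t, ← Finset.sum_sub_distrib]
    rw [heq] at hge
    have hsqrtle : Real.sqrt (((t : ℝ) + ρ) * Real.log (4 * ((t : ℝ) + ρ) / (α ^ 2 * ρ)))
        ≤ |S t ω| := le_of_mul_le_mul_left hge h1t
    have hα2 : α ^ 2 ≤ 1 := by nlinarith
    have harg1 : (1:ℝ) ≤ 4 * ((t : ℝ) + ρ) / (α ^ 2 * ρ) := by
      rw [le_div_iff₀ (by positivity)]
      nlinarith [htρ t, Nat.cast_nonneg (α := ℝ) t]
    have hL0 : 0 ≤ ((t : ℝ) + ρ) * Real.log (4 * ((t : ℝ) + ρ) / (α ^ 2 * ρ)) :=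
      mul_nonneg (htρ t).le (Real.log_nonneg harg1)
    have hS2 : ((t : ℝ) + ρ) * Real.log (4 * ((t : ℝ) + ρ) / (α ^ 2 * ρ)) ≤ (S t ω) ^ 2 := by
      calc ((t : ℝ) + ρ) * Real.log (4 * ((t : ℝ) + ρ) / (α ^ 2 * ρ))
          = Real.sqrt (((t : ℝ) + ρ) * Real.log (4 * ((t : ℝ) + ρ) / (α ^ 2 * ρ))) ^ 2 :=
            (Real.sq_sqrt hL0).symm
        _ ≤ |S t ω| ^ 2 := pow_le_pow_left₀ (Real.sqrt_nonneg _) hsqrtle 2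
        _ = (S t ω) ^ 2 := sq_abs _
    have hS2' : ((t : ℝ) + ρ) * Real.log (((t : ℝ) + ρ) / (α ^ 2 * ρ)) ≤ (S t ω) ^ 2 := by
      refine le_trans ?_ hS2
      apply mul_le_mul_of_nonneg_left ?_ (htρ t).le
      apply Real.log_le_log (by positivity)
      apply div_le_div_of_nonneg_right ?_ (by positivity) |>.trans_eq rfl
      linarith [htρ t]
    refine ⟨t, ?_⟩
    have hXpos : (0:ℝ) < ((t : ℝ) + ρ) / (α ^ 2 * ρ) := by positivity
    have hexp : Real.sqrt (((t : ℝ) + ρ) / (α ^ 2 * ρ))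
        ≤ Real.exp ((S t ω) ^ 2 / (2 * ((t : ℝ) + ρ))) := by
      rw [Real.sqrt_eq_rpow, Real.rpow_def_of_pos hXpos]
      apply Real.exp_le_exp.2
      have hlog : Real.log (((t : ℝ) + ρ) / (α ^ 2 * ρ)) ≤ (S t ω) ^ 2 / ((t : ℝ) + ρ) :=
        (le_div_iff₀ (htρ t)).2 (by rw [mul_comm]; exact hS2')
      have hre : (S t ω) ^ 2 / (2 * ((t : ℝ) + ρ)) = ((S t ω) ^ 2 / ((t : ℝ) + ρ)) / 2 := by
        rw [div_div, mul_comm]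
      rw [hre]
      linarith
    have hαeq : α⁻¹ = Real.sqrt (ρ / ((t : ℝ) + ρ)) * Real.sqrt (((t : ℝ) + ρ) / (α ^ 2 * ρ)) := by
      rw [← Real.sqrt_mul (by positivity)]
      have : ρ / ((t : ℝ) + ρ) * (((t : ℝ) + ρ) / (α ^ 2 * ρ)) = (α ^ 2)⁻¹ := by
        field_simp
      rw [this, Real.sqrt_inv, Real.sqrt_sq hα0.le]
    rw [hαeq]
    calc Real.sqrt (ρ / ((t : ℝ) + ρ)) * Real.sqrt (((t : ℝ) + ρ) / (α ^ 2 * ρ))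
        ≤ Real.sqrt (ρ / ((t : ℝ) + ρ)) * Real.exp ((S t ω) ^ 2 / (2 * ((t : ℝ) + ρ))) :=
          mul_le_mul_of_nonneg_left hexp (Real.sqrt_nonneg _)
      _ = M t ω := rfl
  have hbad : P Gᶜ ≤ ENNReal.ofReal α := le_trans (measure_mono hsub) hville
  have hPG : P G = 1 - P Gᶜ := by
    rw [prob_compl_eq_one_sub hGmeas]
    rw [ENNReal.sub_sub_cancel ENNReal.one_ne_top (prob_le_one)]
  calc ENNReal.ofReal (1 - α) = 1 - ENNReal.ofReal α := by
        rw [ENNReal.ofReal_sub _ hα0.le, ENNReal.ofReal_one]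
    _ ≤ 1 - P Gᶜ := tsub_le_tsub_left hbad 1
    _ = P G := hPG.symm
end

section
/- For every λ ∈ [0,1) and all real numbers Y and Z with Y − Z ≥ −1, exp( λY + (log(1−λ) + λ)(Y−Z)² ) ≤ e^{λZ}(1 − λZ) + λ e^{λZ} Y. -/
open intervalIntegral

lemma fan_integral_aux {a : ℝ} (ha : -1 < a) :
    ∫ u in (0:ℝ)..a, u / (1 + u) = a - Real.log (1 + a) := by
  have hpos : ∀ u ∈ Set.uIcc (0:ℝ) a, 0 < 1 + u := by
    intro u hu
    rcases le_total 0 a with h | h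
    · rw [Set.uIcc_of_le h] at hu; linarith [hu.1]
    · rw [Set.uIcc_of_ge h] at hu; linarith [hu.1]
  have hderiv : ∀ u ∈ Set.uIcc (0:ℝ) a,
      HasDerivAt (fun u => u - Real.log (1 + u)) (u / (1 + u)) u := by
    intro u hu
    have h0 := hpos u hu
    have h1 : HasDerivAt (fun u : ℝ => 1 + u) 1 u := (hasDerivAt_id u).const_add 1
    have h2 : HasDerivAt (fun u : ℝ => Real.log (1 + u)) ((1 + u)⁻¹ * 1) u :=
      (Real.hasDerivAt_log (ne_of_gt h0)).comp u h1
    have h3 : HasDerivAt (fun u : ℝ => u - Real.log (1 + u)) (1 - (1 + u)⁻¹ * 1) u :=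
      (hasDerivAt_id u).sub h2
    convert h3 using 1
    field_simp
    ring
  have hint : IntervalIntegrable (fun u => u / (1 + u)) MeasureTheory.volume 0 a := by
    apply ContinuousOn.intervalIntegrable
    exact continuousOn_id.div ((continuous_const.add continuous_id).continuousOn)
      (fun u hu => ne_of_gt (hpos u hu))
  rw [intervalIntegral.integral_eq_sub_of_hasDerivAt hderiv hint]
  simp

lemma fan_integral_sq {c : ℝ} (hc : c ≠ 0) :
    ∫ u in (0:ℝ)..c, u / (1 + u) = c ^ 2 * ∫ v in (0:ℝ)..1, v / (1 + c * v) := by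
  have h := intervalIntegral.smul_integral_comp_mul_left
    (fun u => u / (1 + u)) (a := 0) (b := 1) c
  simp only [mul_zero, mul_one] at h
  rw [← h]
  have : ∀ v : ℝ, (c * v) / (1 + c * v) = c * (v / (1 + c * v)) := by
    intro v; ring
  simp only [this, intervalIntegral.integral_const_mul, smul_eq_mul]
  ring

lemma fan_key_ineq {l : ℝ} (hl0 : 0 ≤ l) (hl1 : l < 1) {x : ℝ} (hx : -1 ≤ x) :
    l * x + (Real.log (1 - l) + l) * x ^ 2 ≤ Real.log (1 + l * x) := by
  have hψ : Real.log (1 - l) + l ≤ 0 := by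
    have := Real.log_le_sub_one_of_pos (show (0:ℝ) < 1 - l by linarith)
    linarith
  rcases eq_or_ne (l * x) 0 with h0 | h0
  · rw [h0]
    simp only [add_zero, Real.log_one]
    nlinarith [sq_nonneg x]
  · have hl0' : 0 < l := lt_of_le_of_ne hl0 (by rintro rfl; simp at h0)
    have hlx : -1 < l * x := by nlinarith
    have hA := fan_integral_aux hlx
    have hB := fan_integral_aux (show (-1:ℝ) < -l by linarith)
    have hsA := fan_integral_sq h0
    have hsB := fan_integral_sq (show (-l : ℝ) ≠ 0 by intro h; apply hl0'.ne'; linarith)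
    -- pointwise comparison of the two integrals over [0,1]
    have hden : ∀ v ∈ Set.uIcc (0:ℝ) 1, 0 < 1 - l * v := by
      intro v hv
      rw [Set.uIcc_of_le (by norm_num : (0:ℝ) ≤ 1)] at hv
      nlinarith [hv.1, hv.2]
    have hden2 : ∀ v ∈ Set.uIcc (0:ℝ) 1, 0 < 1 + l * x * v := by
      intro v hv
      have h1 := hden v hv
      rw [Set.uIcc_of_le (by norm_num : (0:ℝ) ≤ 1)] at hv
      nlinarith [mul_nonneg (mul_nonneg hl0 hv.1) (by linarith : (0:ℝ) ≤ x + 1)]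
    have hintA : IntervalIntegrable (fun v => v / (1 + l * x * v))
        MeasureTheory.volume 0 1 := by
      apply ContinuousOn.intervalIntegrable
      exact continuousOn_id.div
        ((continuous_const.add (continuous_const.mul continuous_id)).continuousOn)
        (fun v hv => ne_of_gt (hden2 v hv))
    have hintB : IntervalIntegrable (fun v => v / (1 - l * v))
        MeasureTheory.volume 0 1 := by
      apply ContinuousOn.intervalIntegrable
      exact continuousOn_id.div
        ((continuous_const.sub (continuous_const.mul continuous_id)).continuousOn)
        (fun v hv => ne_of_gt (hden v hv))
    have hmono : (∫ v in (0:ℝ)..1, v / (1 + l * x * v))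
        ≤ ∫ v in (0:ℝ)..1, v / (1 - l * v) := by
      apply intervalIntegral.integral_mono_on (by norm_num) hintA hintB
      intro v hv
      have hv' : v ∈ Set.uIcc (0:ℝ) 1 := by
        rw [Set.uIcc_of_le (by norm_num : (0:ℝ) ≤ 1)]; exact hv
      have h1 := hden v hv'
      have h2 : 1 - l * v ≤ 1 + l * x * v := by
        nlinarith [mul_nonneg (mul_nonneg hl0 hv.1) (by linarith : (0:ℝ) ≤ x + 1)]
      gcongr
      exact hv.1
    have hBint : ∀ v : ℝ, v / (1 + (-l) * v) = v / (1 - l * v) := by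
      intro v; ring_nf
    simp only [hBint] at hsB
    have main : (∫ u in (0:ℝ)..(l * x), u / (1 + u))
        ≤ x ^ 2 * ∫ u in (0:ℝ)..(-l), u / (1 + u) := by
      rw [hsA, hsB]
      have hxx : 0 ≤ l ^ 2 * x ^ 2 := by positivity
      calc (l * x) ^ 2 * ∫ v in (0:ℝ)..1, v / (1 + l * x * v)
          ≤ (l * x) ^ 2 * ∫ v in (0:ℝ)..1, v / (1 - l * v) := by
            apply mul_le_mul_of_nonneg_left hmono (by positivity)
        _ = x ^ 2 * ((-l) ^ 2 * ∫ v in (0:ℝ)..1, v / (1 - l * v)) := by ring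
    rw [hA, hB] at main
    have hone : (1:ℝ) + -l = 1 - l := by ring
    rw [hone] at main
    nlinarith [main]

/-- **Fan's inequality (key step for the empirical-Bernstein supermartingale).**
For every `λ ∈ [0,1)` and all real numbers `Y` and `Z` with `Y − Z ≥ −1`,
`exp(λY + (log(1−λ) + λ)(Y−Z)²) ≤ e^{λZ}(1 − λZ) + λ e^{λZ} Y`.
Here `log(1−λ) + λ = −ψ_E(λ)` where `ψ_E` is the sub-exponential CGF. -/
theorem fan_exponential_inequality
    (l : ℝ) (hl : l ∈ Set.Ico (0:ℝ) 1) (Y Z : ℝ) (hYZ : Y - Z ≥ -1) :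
    Real.exp (l * Y + (Real.log (1 - l) + l) * (Y - Z) ^ 2)
      ≤ Real.exp (l * Z) * (1 - l * Z) + l * Real.exp (l * Z) * Y := by
  obtain ⟨hl0, hl1⟩ := hl
  set x := Y - Z with hxdef
  have hkey := fan_key_ineq hl0 hl1 hYZ
  have hpos : 0 < 1 + l * x := by nlinarith
  have h1 : Real.exp (l * x + (Real.log (1 - l) + l) * x ^ 2) ≤ 1 + l * x := by
    calc Real.exp (l * x + (Real.log (1 - l) + l) * x ^ 2)
        ≤ Real.exp (Real.log (1 + l * x)) := Real.exp_le_exp.mpr hkey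
      _ = 1 + l * x := Real.exp_log hpos
  have h2 : l * Y + (Real.log (1 - l) + l) * (Y - Z) ^ 2
      = l * Z + (l * x + (Real.log (1 - l) + l) * x ^ 2) := by
    rw [hxdef]; ring
  rw [h2, Real.exp_add]
  have h3 : Real.exp (l * Z) * Real.exp (l * x + (Real.log (1 - l) + l) * x ^ 2)
      ≤ Real.exp (l * Z) * (1 + l * x) :=
    mul_le_mul_of_nonneg_left h1 (Real.exp_pos _).le
  calc Real.exp (l * Z) * Real.exp (l * x + (Real.log (1 - l) + l) * x ^ 2)
      ≤ Real.exp (l * Z) * (1 + l * x) := h3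
    _ = Real.exp (l * Z) * (1 - l * Z) + l * Real.exp (l * Z) * Y := by
        rw [hxdef]; ring
end

section
/- (Empirical-Bernstein supermartingale.) Let c > 0. Suppose E[δ̂_t | 𝒢_{t−1}] = δ_t and |δ̂_t| ≤ c/2 a.s. for every t ≥ 1, and let (γ_t)_{t≥1} be a [−c/2, c/2]-valued predictable process. Then for every λ ∈ [0, 1/c) the process L_t(λ) = exp( λ Σ_{i=1}^t (δ̂_i − δ_i) − ψ_{E,c}(λ) Σ_{i=1}^t (δ̂_i − γ_i)² ), with L_0(λ) = 1, is a nonnegative supermartingale with respect to (𝒢_t). -/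
open MeasureTheory Set

/-- The sub-exponential cumulant generating function with scale `c`:
`ψ_{E,c}(λ) = c⁻²(−log(1−cλ) − cλ)` for `λ ∈ [0, 1/c)`. -/
noncomputable def psiE (c l : ℝ) : ℝ := (-Real.log (1 - c * l) - c * l) / c ^ 2


lemma logSeries {x : ℝ} (h : |x| < 1) :
    HasSum (fun n : ℕ => x ^ (n + 2) / (n + 2)) (-Real.log (1 - x) - x) := by
  have h0 := Real.hasSum_pow_div_log_of_abs_lt_one h
  have h1 : HasSum (fun n : ℕ => x ^ (n + 1 + 1) / (↑(n + 1) + 1))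
      (-Real.log (1 - x) - x) := by
    rw [hasSum_nat_add_iff (f := fun n : ℕ => x ^ (n + 1) / (↑n + 1)) 1]
    convert h0 using 1
    case e'_3 => rfl
    case e'_6 => simp
  convert h1 using 2 with n
  push_cast; ring_nf

lemma lemC {v : ℝ} (h0 : 0 ≤ v) (h1 : v < 1) :
    v ^ 2 / 2 ≤ -Real.log (1 - v) - v := by
  have hS := logSeries (abs_lt.2 ⟨by linarith, h1⟩)
  have := le_hasSum hS 0 (fun j _ => by positivity)
  simpa using this

lemma lemA {w v : ℝ} (h0 : 0 ≤ w) (hwv : w ≤ v) (h1 : v < 1) :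
    v ^ 2 * (-w - Real.log (1 - w)) ≤ w ^ 2 * (-v - Real.log (1 - v)) := by
  have hv0 : 0 ≤ v := le_trans h0 hwv
  have hSw := (logSeries (abs_lt.2 ⟨by linarith, by linarith⟩ : |w| < 1)).mul_left (v ^ 2)
  have hSv := (logSeries (abs_lt.2 ⟨by linarith, h1⟩ : |v| < 1)).mul_left (w ^ 2)
  have hle := hasSum_le (f := fun n : ℕ => v ^ 2 * (w ^ (n + 2) / (n + 2)))
    (g := fun n : ℕ => w ^ 2 * (v ^ (n + 2) / (n + 2))) ?_ hSw hSv
  · calc v ^ 2 * (-w - Real.log (1 - w)) = v ^ 2 * (-Real.log (1 - w) - w) := by ring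
    _ ≤ w ^ 2 * (-Real.log (1 - v) - v) := hle
    _ = w ^ 2 * (-v - Real.log (1 - v)) := by ring
  · intro n
    have hn : (0:ℝ) < (n:ℝ) + 2 := by positivity
    have hpow : w ^ n ≤ v ^ n := pow_le_pow_left₀ h0 hwv n
    have h2 : v ^ 2 * w ^ (n + 2) ≤ w ^ 2 * v ^ (n + 2) := by
      rw [pow_add, pow_add]
      calc v ^ 2 * (w ^ n * w ^ 2) = (v ^ 2 * w ^ 2) * w ^ n := by ring
        _ ≤ (v ^ 2 * w ^ 2) * v ^ n := mul_le_mul_of_nonneg_left hpow (by positivity)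
        _ = w ^ 2 * (v ^ n * v ^ 2) := by ring
    rw [mul_div_assoc', mul_div_assoc']
    exact div_le_div_of_nonneg_right h2 hn.le

lemma lemB {u : ℝ} (hu : 0 ≤ u) : u - u ^ 2 / 2 ≤ Real.log (1 + u) := by
  have hd : ∀ x : ℝ, x ∈ interior (Ici (0:ℝ)) →
      HasDerivAt (fun y : ℝ => Real.log (1 + y) - y + y ^ 2 / 2)
        (1 / (1 + x) - 1 + x) x := by
    intro x hx
    rw [interior_Ici] at hx
    have hx0 : (0:ℝ) < x := hx
    have h1 : HasDerivAt (fun y : ℝ => 1 + y) 1 x := by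
      simpa using (hasDerivAt_id x).const_add 1
    have h2 : HasDerivAt (fun y : ℝ => Real.log (1 + y)) (1 / (1 + x)) x := by
      have := (Real.hasDerivAt_log (by linarith : (1:ℝ) + x ≠ 0)).comp x h1
      simpa [one_div, Function.comp_def] using this
    have h3 : HasDerivAt (fun y : ℝ => y ^ 2 / 2) x x := by
      simpa using (hasDerivAt_pow 2 x).div_const 2
    exact (h2.sub (hasDerivAt_id x)).add h3
  have hmono : MonotoneOn (fun y : ℝ => Real.log (1 + y) - y + y ^ 2 / 2) (Ici 0) := by
    apply monotoneOn_of_deriv_nonneg (convex_Ici 0)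
    · apply ContinuousOn.add
      apply ContinuousOn.sub
      · apply ContinuousOn.log (by fun_prop)
        intro x hx; have : (0:ℝ) ≤ x := hx; positivity
      · fun_prop
      · fun_prop
    · intro x hx
      exact (hd x hx).differentiableAt.differentiableWithinAt
    · intro x hx
      rw [(hd x hx).deriv]
      rw [interior_Ici] at hx
      have hx0 : (0:ℝ) < x := hx
      have : 1 / (1 + x) - 1 + x = x ^ 2 / (1 + x) := by field_simp; ring
      rw [this]; positivity
  have := hmono (self_mem_Ici) (mem_Ici.2 hu) hu
  simp only [add_zero, Real.log_one] at this
  nlinarith [this]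

lemma fan {v x : ℝ} (hv0 : 0 ≤ v) (hv1 : v < 1) (hx : -1 ≤ x) :
    Real.exp (v * x - (-Real.log (1 - v) - v) * x ^ 2) ≤ 1 + v * x := by
  have hvx : -v ≤ v * x := by nlinarith
  have hpos : 0 < 1 + v * x := by linarith
  rw [← Real.le_log_iff_exp_le hpos]
  have hψ : v ^ 2 / 2 ≤ -Real.log (1 - v) - v := lemC hv0 hv1
  rcases le_or_gt 0 x with hx0 | hx0
  · have hB := lemB (mul_nonneg hv0 hx0)
    nlinarith [sq_nonneg x, sq_nonneg (v * x), mul_le_mul_of_nonneg_right hψ (sq_nonneg x)]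
  · -- x < 0 : use lemA with w = -(v*x)
    have hA := lemA (w := -(v * x)) (by nlinarith) (by nlinarith) hv1
    rcases eq_or_lt_of_le hv0 with hv | hv
    · simp [← hv]
    · have h1 : 1 - -(v * x) = 1 + v * x := by ring
      rw [h1] at hA
      have hw2 : (-(v * x)) ^ 2 = v ^ 2 * x ^ 2 := by ring
      rw [hw2] at hA
      have hv2 : 0 < v ^ 2 := by positivity
      nlinarith [hA]



lemma fan_scaled {c l y : ℝ} (hc : 0 < c) (hl0 : 0 ≤ l) (hl1 : c * l < 1)
    (hy : -c ≤ y) :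
    Real.exp (l * y - psiE c l * y ^ 2) ≤ 1 + l * y := by
  have hc0 : c ≠ 0 := hc.ne'
  have hx : (-1 : ℝ) ≤ y / c := by
    rw [le_div_iff₀ hc]; linarith
  have := fan (v := c * l) (x := y / c) (by positivity) hl1 hx
  have h1 : c * l * (y / c) = l * y := by field_simp
  have h2 : (-Real.log (1 - c * l) - c * l) * (y / c) ^ 2 = psiE c l * y ^ 2 := by
    rw [psiE]; field_simp
  rw [h1, h2] at this
  exact this

/-- **The empirical-Bernstein exponential process is a nonnegative supermartingale.**
Let `c > 0`.  Suppose `E[δ̂_t | 𝒢_{t−1}] = δ_t` and `|δ̂_t| ≤ c/2` a.s. for every `t ≥ 1`,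
and let `(γ_t)_{t≥1}` be a `[−c/2, c/2]`-valued predictable process.  Then for every
`λ ∈ [0, 1/c)` the process
`L_t(λ) = exp(λ Σ_{i=1}^t (δ̂_i − δ_i) − ψ_{E,c}(λ) Σ_{i=1}^t (δ̂_i − γ_i)²)`
(with `L_0(λ) = 1`) is a nonnegative supermartingale with respect to `(𝒢_t)`. -/
theorem empirical_bernstein_supermartingale
    {Ω : Type*} {m0 : MeasurableSpace Ω} {P : Measure Ω} [IsProbabilityMeasure P]
    (𝒢 : Filtration ℕ m0)
    (c : ℝ) (hc : 0 < c)
    (δhat δ γ : ℕ → Ω → ℝ)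
    (hδhat_adapted : ∀ t : ℕ, 1 ≤ t → Measurable[𝒢 t] (δhat t))
    (hδhat_bdd : ∃ C : ℝ, ∀ t ω, |δhat t ω| ≤ C)
    (hδ_pred : ∀ t : ℕ, 1 ≤ t → Measurable[𝒢 (t - 1)] (δ t))
    (hδ_bdd : ∃ C : ℝ, ∀ t ω, |δ t ω| ≤ C)
    (hγ_pred : ∀ t : ℕ, 1 ≤ t → Measurable[𝒢 (t - 1)] (γ t))
    (hγ_mem : ∀ t ω, γ t ω ∈ Icc (-(c / 2)) (c / 2))
    (hcond : ∀ t : ℕ, 1 ≤ t → P[δhat t | 𝒢 (t - 1)] =ᵐ[P] δ t)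
    (habs : ∀ t : ℕ, 1 ≤ t → ∀ᵐ ω ∂P, |δhat t ω| ≤ c / 2) :
    ∀ l : ℝ, l ∈ Ico (0:ℝ) (1 / c) →
      Supermartingale
        (fun t ω => Real.exp
          (l * (∑ i ∈ Finset.Icc 1 t, (δhat i ω - δ i ω))
            - psiE c l * ∑ i ∈ Finset.Icc 1 t, (δhat i ω - γ i ω) ^ 2)) 𝒢 P ∧
      (∀ t ω, 0 ≤ Real.exp
          (l * (∑ i ∈ Finset.Icc 1 t, (δhat i ω - δ i ω))
            - psiE c l * ∑ i ∈ Finset.Icc 1 t, (δhat i ω - γ i ω) ^ 2)) ∧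
      (∀ ω : Ω, Real.exp
          (l * (∑ i ∈ Finset.Icc 1 0, (δhat i ω - δ i ω))
            - psiE c l * ∑ i ∈ Finset.Icc 1 0, (δhat i ω - γ i ω) ^ 2) = 1) := by
  obtain ⟨C1, hC1⟩ := hδhat_bdd
  obtain ⟨C2, hC2⟩ := hδ_bdd
  intro l hl
  obtain ⟨hl0, hl1⟩ := hl
  have hcl1 : c * l < 1 := by
    rw [lt_div_iff₀ hc] at hl1; linarith
  have hcl0 : 0 ≤ c * l := by positivity
  have hψ0 : 0 ≤ psiE c l := by
    have h1 := lemC hcl0 hcl1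
    have h2 : (0:ℝ) ≤ (c * l) ^ 2 / 2 := by positivity
    rw [psiE]
    exact div_nonneg (by linarith) (by positivity)
  have hγ_abs : ∀ t ω, |γ t ω| ≤ c / 2 := fun t ω =>
    abs_le.2 ⟨(hγ_mem t ω).1, (hγ_mem t ω).2⟩
  set F : ℕ → Ω → ℝ := fun t ω => Real.exp
      (l * (∑ i ∈ Finset.Icc 1 t, (δhat i ω - δ i ω))
        - psiE c l * ∑ i ∈ Finset.Icc 1 t, (δhat i ω - γ i ω) ^ 2) with hF
  -- measurability of the argument
  have harg_meas : ∀ t, Measurable[𝒢 t] (fun ω =>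
      l * (∑ i ∈ Finset.Icc 1 t, (δhat i ω - δ i ω))
        - psiE c l * ∑ i ∈ Finset.Icc 1 t, (δhat i ω - γ i ω) ^ 2) := by
    intro t
    have hδhat' : ∀ i ∈ Finset.Icc 1 t, Measurable[𝒢 t] (δhat i) := by
      intro i hi
      simp only [Finset.mem_Icc] at hi
      exact (hδhat_adapted i hi.1).mono (𝒢.mono hi.2) le_rfl
    have hδ' : ∀ i ∈ Finset.Icc 1 t, Measurable[𝒢 t] (δ i) := by
      intro i hi
      simp only [Finset.mem_Icc] at hi
      exact (hδ_pred i hi.1).mono (𝒢.mono (le_trans (Nat.sub_le i 1) hi.2)) le_rfl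
    have hγ' : ∀ i ∈ Finset.Icc 1 t, Measurable[𝒢 t] (γ i) := by
      intro i hi
      simp only [Finset.mem_Icc] at hi
      exact (hγ_pred i hi.1).mono (𝒢.mono (le_trans (Nat.sub_le i 1) hi.2)) le_rfl
    apply Measurable.sub
    · exact (Finset.measurable_sum _ (fun i hi => ((hδhat' i hi).sub (hδ' i hi)))).const_mul l
    · exact (Finset.measurable_sum _
        (fun i hi => ((hδhat' i hi).sub (hγ' i hi)).pow_const 2)).const_mul (psiE c l)
  have hFmeas : ∀ t, Measurable[𝒢 t] (F t) := fun t =>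
    Real.measurable_exp.comp (harg_meas t)
  have hFadp : StronglyAdapted 𝒢 F := fun t => (hFmeas t).stronglyMeasurable
  -- bound on F
  have hFle : ∀ t ω, F t ω ≤ Real.exp (l * (t * (C1 + C2))) := by
    intro t ω
    apply Real.exp_le_exp.2
    have hQ : (0:ℝ) ≤ ∑ i ∈ Finset.Icc 1 t, (δhat i ω - γ i ω) ^ 2 :=
      Finset.sum_nonneg fun i _ => sq_nonneg _
    have hS : (∑ i ∈ Finset.Icc 1 t, (δhat i ω - δ i ω)) ≤ t * (C1 + C2) := by
      calc (∑ i ∈ Finset.Icc 1 t, (δhat i ω - δ i ω))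
          ≤ ∑ i ∈ Finset.Icc 1 t, (C1 + C2) := by
            apply Finset.sum_le_sum
            intro i _
            have h1 := abs_le.1 (hC1 i ω)
            have h2 := abs_le.1 (hC2 i ω)
            linarith [h1.2, h2.1]
        _ = t * (C1 + C2) := by
            rw [Finset.sum_const, Nat.card_Icc]
            simp only [Nat.add_sub_cancel, nsmul_eq_mul]
    have := mul_le_mul_of_nonneg_left hS hl0
    have := mul_nonneg hψ0 hQ
    linarith
  have hFnonneg : ∀ t ω, 0 ≤ F t ω := fun t ω => Real.exp_nonneg _
  have hFint : ∀ t, Integrable (F t) P := by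
    intro t
    refine (integrable_const (Real.exp (l * (t * (C1 + C2))))).mono'
      (((hFmeas t).mono (𝒢.le t) le_rfl).aestronglyMeasurable) (ae_of_all _ fun ω => ?_)
    rw [Real.norm_eq_abs, abs_of_nonneg (hFnonneg t ω)]
    exact hFle t ω
  refine ⟨?_, fun t ω => Real.exp_nonneg _, fun ω => by simp⟩
  apply supermartingale_nat hFadp hFint
  intro t
  -- the one-step factor
  set s := t + 1 with hs
  have hs1 : 1 ≤ s := Nat.le_add_left 1 t
  have hst : s - 1 = t := rfl
  set g : Ω → ℝ := fun ω => Real.exp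
      (l * (δhat s ω - δ s ω) - psiE c l * (δhat s ω - γ s ω) ^ 2) with hg
  have hsplit : ∀ ω, F s ω = F t ω * g ω := by
    intro ω
    simp only [hF, hg, ← Real.exp_add]
    congr 1
    rw [Finset.sum_Icc_succ_top hs1, Finset.sum_Icc_succ_top hs1]
    ring
  -- measurability of predictable pieces at time t
  have hδs : Measurable[𝒢 t] (δ s) := hδ_pred s hs1
  have hγs : Measurable[𝒢 t] (γ s) := hγ_pred s hs1
  have hδhats : Measurable[𝒢 s] (δhat s) := hδhat_adapted s hs1
  have int_bdd : ∀ (G : Ω → ℝ) (C : ℝ), Measurable G → (∀ ω, |G ω| ≤ C) →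
      Integrable G P := fun G C hGm hGb =>
    (integrable_const C).mono' hGm.aestronglyMeasurable
      (ae_of_all _ fun ω => by rw [Real.norm_eq_abs]; exact hGb ω)
  -- g is integrable
  have hg_meas : Measurable g :=
    Real.measurable_exp.comp ((((hδhats.mono (𝒢.le s) le_rfl).sub
      (hδs.mono (𝒢.le t) le_rfl)).const_mul l).sub
      (((hδhats.mono (𝒢.le s) le_rfl).sub (hγs.mono (𝒢.le t) le_rfl)).pow_const 2
        |>.const_mul (psiE c l)))
  have hg_bdd : ∀ ω, |g ω| ≤ Real.exp (l * (C1 + C2)) := by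
    intro ω
    rw [hg, abs_of_nonneg (Real.exp_nonneg _)]
    apply Real.exp_le_exp.2
    have h1 := abs_le.1 (hC1 s ω)
    have h2 := abs_le.1 (hC2 s ω)
    have h3 : l * (δhat s ω - δ s ω) ≤ l * (C1 + C2) :=
      mul_le_mul_of_nonneg_left (by linarith [h1.2, h2.1]) hl0
    nlinarith [mul_nonneg hψ0 (sq_nonneg (δhat s ω - γ s ω))]
  have hg_int : Integrable g P := int_bdd g _ hg_meas hg_bdd
  -- the dominating function h = e * (1 - l γ) + (l e) * δhat
  set e : Ω → ℝ := fun ω => Real.exp (l * (γ s ω - δ s ω)) with he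
  have he_meas : Measurable[𝒢 t] e :=
    Real.measurable_exp.comp ((hγs.sub hδs).const_mul l)
  have he_bdd : ∀ ω, |e ω| ≤ Real.exp (l * (c / 2 + C2)) := by
    intro ω
    rw [he, abs_of_nonneg (Real.exp_nonneg _)]
    apply Real.exp_le_exp.2
    have h2 := abs_le.1 (hC2 s ω)
    have h3 := abs_le.1 (hγ_abs s ω)
    exact mul_le_mul_of_nonneg_left (by linarith [h2.1, h3.2]) hl0
  set h1f : Ω → ℝ := fun ω => e ω * (1 - l * γ s ω) with hh1f
  set h2f : Ω → ℝ := fun ω => l * e ω with hh2f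
  have hh1f_meas : Measurable[𝒢 t] h1f :=
    he_meas.mul ((measurable_const.sub (hγs.const_mul l)))
  have hh2f_meas : Measurable[𝒢 t] h2f := he_meas.const_mul l
  have hh1f_bdd : ∀ ω, |h1f ω| ≤ Real.exp (l * (c / 2 + C2)) * (1 + l * (c / 2)) := by
    intro ω
    rw [hh1f, abs_mul]
    apply mul_le_mul (he_bdd ω) ?_ (abs_nonneg _) (Real.exp_nonneg _)
    have h3 := abs_le.1 (hγ_abs s ω)
    rw [abs_le]
    constructor
    · nlinarith [mul_le_mul_of_nonneg_left h3.2 hl0]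
    · nlinarith [mul_le_mul_of_nonneg_left h3.1 hl0]
  have hh2f_bdd : ∀ ω, |h2f ω| ≤ l * Real.exp (l * (c / 2 + C2)) := by
    intro ω
    rw [hh2f, abs_mul, abs_of_nonneg hl0]
    exact mul_le_mul_of_nonneg_left (he_bdd ω) hl0
  have hδhat_int : Integrable (δhat s) P :=
    int_bdd _ C1 (hδhats.mono (𝒢.le s) le_rfl) (fun ω => hC1 s ω)
  have hh1f_int : Integrable h1f P :=
    int_bdd _ _ (hh1f_meas.mono (𝒢.le t) le_rfl) hh1f_bdd
  have hh2fδ_int : Integrable (h2f * δhat s) P := by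
    apply int_bdd _ (l * Real.exp (l * (c / 2 + C2)) * C1)
      ((hh2f_meas.mono (𝒢.le t) le_rfl).mul (hδhats.mono (𝒢.le s) le_rfl))
    intro ω
    rw [Pi.mul_apply, abs_mul]
    apply mul_le_mul (hh2f_bdd ω) (hC1 s ω) (abs_nonneg _) (by positivity)
  -- g ≤ h a.e.
  have hgh : g ≤ᵐ[P] h1f + h2f * δhat s := by
    filter_upwards [habs s hs1] with ω hω
    have hy : -c ≤ δhat s ω - γ s ω := by
      have h1 := abs_le.1 hω
      have h3 := abs_le.1 (hγ_abs s ω)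
      linarith [h1.1, h3.2]
    have hfan := fan_scaled hc hl0 hcl1 hy
    have hgω : g ω = e ω * Real.exp
        (l * (δhat s ω - γ s ω) - psiE c l * (δhat s ω - γ s ω) ^ 2) := by
      simp only [hg, he, ← Real.exp_add]
      congr 1
      ring
    calc g ω ≤ e ω * (1 + l * (δhat s ω - γ s ω)) := by
          rw [hgω]
          exact mul_le_mul_of_nonneg_left hfan (Real.exp_nonneg _)
      _ = (h1f + h2f * δhat s) ω := by
          simp only [Pi.add_apply, Pi.mul_apply, hh1f, hh2f]
          ring
  -- conditional expectation of h
  have hcond' : P[δhat s | 𝒢 t] =ᵐ[P] δ s := hcond s hs1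
  have hcondh : P[h1f + h2f * δhat s | 𝒢 t] ≤ᵐ[P] fun _ => (1:ℝ) := by
    have hadd := condExp_add (μ := P) (m := 𝒢 t) hh1f_int hh2fδ_int
    have hpull := condExp_stronglyMeasurable_mul_of_bound (𝒢.le t)
      hh2f_meas.stronglyMeasurable hδhat_int (l * Real.exp (l * (c / 2 + C2)))
      (ae_of_all _ fun ω => by rw [Real.norm_eq_abs]; exact hh2f_bdd ω)
    have hh1 : P[h1f | 𝒢 t] =ᵐ[P] h1f :=
      (condExp_of_stronglyMeasurable (𝒢.le t) hh1f_meas.stronglyMeasurable hh1f_int).symm ▸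
        Filter.EventuallyEq.rfl
    calc P[h1f + h2f * δhat s | 𝒢 t]
        =ᵐ[P] P[h1f | 𝒢 t] + P[h2f * δhat s | 𝒢 t] := hadd
      _ =ᵐ[P] h1f + h2f * P[δhat s | 𝒢 t] := by
          exact hh1.add hpull
      _ =ᵐ[P] h1f + h2f * δ s := by
          exact Filter.EventuallyEq.rfl.add (Filter.EventuallyEq.rfl.mul hcond')
      _ ≤ᵐ[P] fun _ => (1:ℝ) := by
          apply ae_of_all
          intro ω
          simp only [Pi.add_apply, Pi.mul_apply, hh1f, hh2f]
          have key : e ω * (1 + l * (δ s ω - γ s ω)) ≤ 1 := by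
            have h4 : 1 + l * (δ s ω - γ s ω) ≤ Real.exp (l * (δ s ω - γ s ω)) := by
              have := Real.add_one_le_exp (l * (δ s ω - γ s ω))
              linarith
            calc e ω * (1 + l * (δ s ω - γ s ω))
                ≤ e ω * Real.exp (l * (δ s ω - γ s ω)) := by
                  rcases le_or_gt (1 + l * (δ s ω - γ s ω)) 0 with hneg | hpos
                  · nlinarith [Real.exp_nonneg (l * (γ s ω - δ s ω)),
                      Real.exp_nonneg (l * (δ s ω - γ s ω))]
                  · exact mul_le_mul_of_nonneg_left h4 (Real.exp_nonneg _)
              _ = 1 := by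
                  rw [he, ← Real.exp_add]
                  norm_num
                  ring
          calc e ω * (1 - l * γ s ω) + l * e ω * δ s ω
              = e ω * (1 + l * (δ s ω - γ s ω)) := by ring
            _ ≤ 1 := key
  -- conclude
  have hcondg : P[g | 𝒢 t] ≤ᵐ[P] fun _ => (1:ℝ) :=
    (condExp_mono hg_int (hh1f_int.add hh2fδ_int) hgh).trans hcondh
  have hFbound : ∀ᵐ ω ∂P, ‖F t ω‖ ≤ Real.exp (l * (t * (C1 + C2))) :=
    ae_of_all _ fun ω => by
      rw [Real.norm_eq_abs, abs_of_nonneg (hFnonneg t ω)]; exact hFle t ω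
  have hpullF := condExp_stronglyMeasurable_mul_of_bound (𝒢.le t)
    (hFmeas t).stronglyMeasurable hg_int _ hFbound
  have hFs : F s = F t * g := funext fun ω => hsplit ω
  calc P[F s | 𝒢 t] = P[F t * g | 𝒢 t] := by rw [hFs]
    _ =ᵐ[P] F t * P[g | 𝒢 t] := hpullF
    _ ≤ᵐ[P] F t := by
        filter_upwards [hcondg] with ω hω
        have := mul_le_mul_of_nonneg_left hω (hFnonneg t ω)
        simpa using this
end

section
/- (Theorem 2, empirical-Bernstein confidence sequence.) Let c > 0 and α ∈ (0,1). Suppose E[δ̂_t | 𝒢_{t−1}] = δ_t and |δ̂_t| ≤ c/2 a.s. for every t ≥ 1; let (γ_t)_{t≥1} be a [−c/2, c/2]-valued predictable process and set V̂_t = Σ_{i=1}^t (δ̂_i − γ_i)². If u is a sub-exponential uniform boundary with crossing probability α/2 and scale c, then P( for all t ≥ 1, |Δ̂_t − Δ_t| < u(V̂_t)/t ) ≥ 1 − α; i.e., the intervals (Δ̂_t − u(V̂_t)/t, Δ̂_t + u(V̂_t)/t) form a (1−α)-level confidence sequence for Δ_t. -/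
open MeasureTheory Set

lemma fan_integral (z : ℝ) (hz : -1 < z) :
    z - Real.log (1 + z) = ∫ s in (0:ℝ)..1, s * z ^ 2 / (1 + s * z) := by
  have hpos : ∀ s ∈ Set.uIcc (0:ℝ) 1, 0 < 1 + s * z := by
    intro s hs
    rw [Set.uIcc_of_le (by norm_num)] at hs
    rcases le_or_gt 0 z with h | h
    · nlinarith [hs.1, hs.2]
    · nlinarith [hs.1, hs.2]
  have hderiv : ∀ s ∈ Set.uIcc (0:ℝ) 1,
      HasDerivAt (fun s => s * z - Real.log (1 + s * z)) (s * z ^ 2 / (1 + s * z)) s := by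
    intro s hs
    have hne := (hpos s hs).ne'
    have h1 : HasDerivAt (fun s : ℝ => 1 + s * z) z s := by
      simpa using ((hasDerivAt_id s).mul_const z).const_add 1
    have h2 : HasDerivAt (fun s => Real.log (1 + s * z)) (z / (1 + s * z)) s :=
      h1.log hne
    have h3 : HasDerivAt (fun s : ℝ => s * z) z s := by
      simpa using (hasDerivAt_id s).mul_const z
    have := h3.sub h2
    refine this.congr_deriv ?_
    rw [sub_eq_iff_eq_add, ← add_div, eq_div_iff hne]
    ring
  have hcont : IntervalIntegrable (fun s => s * z ^ 2 / (1 + s * z)) volume 0 1 := by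
    apply ContinuousOn.intervalIntegrable
    apply ContinuousOn.div
    · fun_prop
    · fun_prop
    · intro s hs; exact (hpos s hs).ne'
  have := intervalIntegral.integral_eq_sub_of_hasDerivAt hderiv hcont
  rw [this]; simp

lemma fan_log (l x : ℝ) (hl0 : 0 ≤ l) (hl1 : l < 1) (hx : -1 ≤ x) :
    l * x - Real.log (1 + l * x) ≤ (-Real.log (1 - l) - l) * x ^ 2 := by
  have hy : -1 < l * x := by nlinarith
  have hml : (-1:ℝ) < -l := by linarith
  have h1 := fan_integral (l * x) hy
  have h2 := fan_integral (-l) hml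
  have h2' : -Real.log (1 - l) - l = ∫ s in (0:ℝ)..1, s * l ^ 2 / (1 - s * l) := by
    calc -Real.log (1 - l) - l = -l - Real.log (1 + -l) := by
          rw [show (1:ℝ) + -l = 1 - l by ring]; ring
      _ = ∫ s in (0:ℝ)..1, s * (-l) ^ 2 / (1 + s * -l) := h2
      _ = ∫ s in (0:ℝ)..1, s * l ^ 2 / (1 - s * l) := by
          congr 1; funext s; rw [show (1:ℝ) + s * -l = 1 - s * l by ring]; ring_nf
  rw [h1, h2']
  rw [← intervalIntegral.integral_mul_const]
  apply intervalIntegral.integral_mono_on (by norm_num)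
  · apply ContinuousOn.intervalIntegrable
    apply ContinuousOn.div
    · fun_prop
    · fun_prop
    · intro s hs
      rw [Set.uIcc_of_le (by norm_num)] at hs
      have : 0 < 1 + s * (l * x) := by
        rcases le_or_gt 0 (l * x) with h | h
        · nlinarith [mul_nonneg hs.1 h]
        · nlinarith [mul_nonneg (by linarith [hs.2] : (0:ℝ) ≤ 1 - s) (by linarith : (0:ℝ) ≤ -(l * x))]
      exact this.ne'
  · apply ContinuousOn.intervalIntegrable
    apply ContinuousOn.mul _ continuousOn_const
    apply ContinuousOn.div
    · fun_prop
    · fun_prop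
    · intro s hs
      rw [Set.uIcc_of_le (by norm_num)] at hs
      have : 0 < 1 - s * l := by nlinarith [hs.1, hs.2]
      exact this.ne'
  · intro s hs
    have hs0 := hs.1
    have hs1 := hs.2
    have hden1 : 0 < 1 - s * l := by nlinarith
    have hden2 : 0 < 1 + s * (l * x) := by
      rcases le_or_gt 0 (l * x) with h | h
      · nlinarith [mul_nonneg hs0 h]
      · nlinarith [mul_nonneg (by linarith : (0:ℝ) ≤ 1 - s) (by linarith : (0:ℝ) ≤ -(l * x))]
    have hle : 1 - s * l ≤ 1 + s * (l * x) := by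
      nlinarith [mul_nonneg hs0 (mul_nonneg (by linarith : (0:ℝ) ≤ x + 1) hl0)]
    have h0 : 0 ≤ s * (l * x) ^ 2 := by positivity
    calc s * (l * x) ^ 2 / (1 + s * (l * x)) ≤ s * (l * x) ^ 2 / (1 - s * l) :=
          div_le_div_of_nonneg_left h0 hden1 hle |>.trans_eq rfl
      _ = s * l ^ 2 / (1 - s * l) * x ^ 2 := by ring

lemma fan_exp (c l z : ℝ) (hc : 0 < c) (hl0 : 0 ≤ l) (hl : c * l < 1) (hz : -c ≤ z) :
    Real.exp (l * z - psiE c l * z ^ 2) ≤ 1 + l * z := by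
  have hx : -1 ≤ z / c := by rw [le_div_iff₀ hc]; linarith
  have hcl0 : 0 ≤ c * l := by positivity
  have key := fan_log (c * l) (z / c) hcl0 hl hx
  have e1 : c * l * (z / c) = l * z := by field_simp
  have e2 : (-Real.log (1 - c * l) - c * l) * (z / c) ^ 2 = psiE c l * z ^ 2 := by
    unfold psiE; field_simp
  rw [e1, e2] at key
  have hpos : 0 < 1 + l * z := by nlinarith
  calc Real.exp (l * z - psiE c l * z ^ 2) ≤ Real.exp (Real.log (1 + l * z)) := by
        apply Real.exp_le_exp.2; linarith
    _ = 1 + l * z := Real.exp_log hpos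

lemma psiE_nonneg (c l : ℝ) (hc : 0 < c) (hl0 : 0 ≤ l) (hcl : c * l < 1) : 0 ≤ psiE c l := by
  have h : Real.log (1 - c * l) ≤ -(c * l) := by
    have := Real.log_le_sub_one_of_pos (x := 1 - c * l) (by linarith)
    linarith
  unfold psiE
  apply div_nonneg _ (by positivity)
  linarith

lemma condexp_Y_le_one {Ω : Type*} {m0 : MeasurableSpace Ω} {P : Measure Ω}
    [IsProbabilityMeasure P]
    (m : MeasurableSpace Ω) (hm : m ≤ m0)
    (c l : ℝ) (hc : 0 < c) (hl0 : 0 ≤ l) (hcl : c * l < 1)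
    (x d g : Ω → ℝ)
    (hx : Measurable[m0] x) (hd : Measurable[m] d) (hg : Measurable[m] g)
    (Cx Cd : ℝ) (hxb : ∀ ω, |x ω| ≤ Cx) (hdb : ∀ ω, |d ω| ≤ Cd)
    (hgb : ∀ ω, g ω ∈ Icc (-(c / 2)) (c / 2))
    (hcond : P[x|m] =ᵐ[P] d)
    (habs : ∀ᵐ ω ∂P, |x ω| ≤ c / 2) :
    P[fun ω => Real.exp (l * (x ω - d ω) - psiE c l * (x ω - g ω) ^ 2)|m] ≤ᵐ[P] 1 := by
  letI : MeasurableSpace Ω := m0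
  have hψ0 : 0 ≤ psiE c l := psiE_nonneg c l hc hl0 hcl
  set ψ := psiE c l with hψ
  set A : Ω → ℝ := fun ω => Real.exp (l * (g ω - d ω)) with hA
  set Z : Ω → ℝ := fun ω => Real.exp (l * (x ω - g ω) - ψ * (x ω - g ω) ^ 2) with hZ
  set W : Ω → ℝ := fun ω => 1 + l * (x ω - g ω) with hW
  have hgm0 : Measurable[m0] g := hg.mono hm le_rfl
  have hdm0 : Measurable[m0] d := hd.mono hm le_rfl
  -- bounds
  have hgb' : ∀ ω, |g ω| ≤ c / 2 := fun ω => abs_le.2 ⟨(hgb ω).1.trans' (by linarith), (hgb ω).2⟩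
  have hZle : ∀ ω, |Z ω| ≤ Real.exp (l * (Cx + c / 2)) := by
    intro ω
    rw [abs_of_pos (Real.exp_pos _)]
    apply Real.exp_le_exp.2
    have h1 : x ω - g ω ≤ Cx + c / 2 := by
      have := (abs_le.1 (hxb ω)).2
      have := (abs_le.1 (hgb' ω)).1
      linarith
    nlinarith [sq_nonneg (x ω - g ω), mul_le_mul_of_nonneg_left h1 hl0]
  have hAle : ∀ ω, |A ω| ≤ Real.exp (l * (c / 2 + Cd)) := by
    intro ω
    rw [abs_of_pos (Real.exp_pos _)]
    apply Real.exp_le_exp.2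
    have h1 : g ω - d ω ≤ c / 2 + Cd := by
      have := (abs_le.1 (hgb' ω)).2
      have := (abs_le.1 (hdb ω)).1
      linarith
    exact mul_le_mul_of_nonneg_left h1 hl0
  have hWle : ∀ ω, |W ω| ≤ 1 + l * (Cx + c / 2) := by
    intro ω
    have h1 : |x ω - g ω| ≤ Cx + c / 2 := by
      have := abs_sub (x ω) (g ω)
      have := hxb ω; have := hgb' ω
      calc |x ω - g ω| ≤ |x ω| + |g ω| := abs_sub _ _
        _ ≤ Cx + c / 2 := by linarith
    calc |W ω| ≤ |1| + |l * (x ω - g ω)| := abs_add_le _ _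
      _ = 1 + l * |x ω - g ω| := by rw [abs_one, abs_mul, abs_of_nonneg hl0]
      _ ≤ 1 + l * (Cx + c / 2) := by nlinarith [mul_le_mul_of_nonneg_left h1 hl0]
  -- measurability
  have hsub : Measurable[m0] fun ω => x ω - g ω := hx.sub hgm0
  have hZm : Measurable[m0] Z := by
    have h1 : Measurable[m0] fun ω => l * (x ω - g ω) - ψ * (x ω - g ω) ^ 2 :=
      (hsub.const_mul l).sub ((hsub.pow_const 2).const_mul ψ)
    exact Real.measurable_exp.comp h1
  have hAm : Measurable[m] A := by
    have h1 : Measurable[m] fun ω => l * (g ω - d ω) := (hg.sub hd).const_mul l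
    exact Real.measurable_exp.comp h1
  have hWm : Measurable[m0] W := measurable_const.add (hsub.const_mul l)
  -- integrability
  have int_of_bdd : ∀ (f : Ω → ℝ) (B : ℝ), Measurable[m0] f → (∀ ω, |f ω| ≤ B) →
      Integrable f P := by
    intro f B hf hB
    exact Integrable.mono' (integrable_const B) hf.aestronglyMeasurable (ae_of_all _ hB)
  have hZint : Integrable Z P := int_of_bdd Z _ hZm hZle
  have hWint : Integrable W P := int_of_bdd W _ hWm hWle
  have hAZm : Measurable[m0] (A * Z) := (hAm.mono hm le_rfl).mul hZm
  have hAZint : Integrable (A * Z) P := by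
    apply int_of_bdd _ (Real.exp (l * (c / 2 + Cd)) * Real.exp (l * (Cx + c / 2))) hAZm
    intro ω
    rw [Pi.mul_apply, abs_mul]
    exact mul_le_mul (hAle ω) (hZle ω) (abs_nonneg _) ((abs_nonneg _).trans (hAle ω))
  -- Y = A * Z
  have hYeq : (fun ω => Real.exp (l * (x ω - d ω) - ψ * (x ω - g ω) ^ 2)) = A * Z := by
    funext ω
    rw [Pi.mul_apply, hA, hZ, ← Real.exp_add]
    ring_nf
  rw [hYeq]
  have h1 : P[A * Z|m] =ᵐ[P] A * P[Z|m] :=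
    condExp_mul_of_stronglyMeasurable_left hAm.stronglyMeasurable hAZint hZint
  have h2 : P[Z|m] ≤ᵐ[P] P[W|m] := by
    apply condExp_mono hZint hWint
    filter_upwards [habs] with ω hω
    have hz : -c ≤ x ω - g ω := by
      have := (abs_le.1 hω).1
      have := (hgb ω).2
      linarith
    exact fan_exp c l (x ω - g ω) hc hl0 hcl hz
  have h3 : P[W|m] =ᵐ[P] fun ω => 1 + l * (d ω - g ω) := by
    have hWeq : W = (fun ω => 1 - l * g ω) + l • x := by
      funext ω; simp [hW, Pi.add_apply]; ring
    rw [hWeq]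
    have hint1 : Integrable (fun ω => 1 - l * g ω) P := by
      apply int_of_bdd _ (1 + l * (c / 2)) (measurable_const.sub (hgm0.const_mul l))
      intro ω
      calc |1 - l * g ω| ≤ |1| + |l * g ω| := abs_sub _ _
        _ = 1 + l * |g ω| := by rw [abs_one, abs_mul, abs_of_nonneg hl0]
        _ ≤ 1 + l * (c / 2) := by nlinarith [mul_le_mul_of_nonneg_left (hgb' ω) hl0]
    have hint2 : Integrable (l • x) P := (int_of_bdd x Cx hx hxb).smul l
    calc P[(fun ω => 1 - l * g ω) + l • x|m]
        =ᵐ[P] P[fun ω => 1 - l * g ω|m] + P[l • x|m] := condExp_add hint1 hint2 m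
      _ =ᵐ[P] (fun ω => 1 - l * g ω) + l • P[x|m] := by
          have heq : P[fun ω => 1 - l * g ω|m] = fun ω => 1 - l * g ω :=
            condExp_of_stronglyMeasurable hm
              ((measurable_const.sub (hg.const_mul l)).stronglyMeasurable) hint1
          rw [heq]
          exact Filter.EventuallyEq.add Filter.EventuallyEq.rfl (condExp_smul l x m)
      _ =ᵐ[P] fun ω => 1 + l * (d ω - g ω) := by
          filter_upwards [hcond] with ω hω
          simp [Pi.add_apply, Pi.smul_apply, hω]
          ring
  calc P[A * Z|m] =ᵐ[P] A * P[Z|m] := h1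
    _ ≤ᵐ[P] A * P[W|m] := by
        filter_upwards [h2] with ω hω
        exact mul_le_mul_of_nonneg_left hω (Real.exp_pos _).le
    _ =ᵐ[P] fun ω => A ω * (1 + l * (d ω - g ω)) := by
        filter_upwards [h3] with ω hω
        simp [Pi.mul_apply, hω]
    _ ≤ᵐ[P] 1 := by
        apply ae_of_all
        intro ω
        have h4 : 1 + l * (d ω - g ω) ≤ Real.exp (l * (d ω - g ω)) := by
          have := Real.add_one_le_exp (l * (d ω - g ω)); linarith
        have h5 : A ω * (1 + l * (d ω - g ω)) ≤ A ω * Real.exp (l * (d ω - g ω)) :=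
          mul_le_mul_of_nonneg_left h4 (Real.exp_pos _).le
        have h6 : A ω * Real.exp (l * (d ω - g ω)) = 1 := by
          rw [hA, ← Real.exp_add,
            show l * (g ω - d ω) + l * (d ω - g ω) = 0 by ring, Real.exp_zero]
        have : A ω * (1 + l * (d ω - g ω)) ≤ 1 := h5.trans_eq h6
        simpa using this


/-- `u : [0,∞) → ℝ` is a *sub-exponential uniform boundary with crossing probability `α` and
scale `c`* if for every filtered probability space and every pair of adapted real processes
`(S_t, V_t)_{t≥0}` with `S_0 = V_0 = 0` and `V_t ≥ 0`, such that for every `λ ∈ [0, 1/c)`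
there exists a nonnegative supermartingale `(L_t(λ))_{t≥0}` with `E[L_0(λ)] ≤ 1` and
`exp(λ S_t − ψ_{E,c}(λ) V_t) ≤ L_t(λ)` a.s. for all `t`, one has
`P(∃ t ≥ 1 : S_t ≥ u(V_t)) ≤ α`. -/
def IsSubExponentialUniformBoundary (u : ℝ → ℝ) (α c : ℝ) : Prop :=
  ∀ (Ω : Type) (m0 : MeasurableSpace Ω) (P : Measure Ω), IsProbabilityMeasure P →
    ∀ (𝒢 : Filtration ℕ m0) (S V : ℕ → Ω → ℝ),
      Adapted 𝒢 S → Adapted 𝒢 V →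
      (∀ ω, S 0 ω = 0) → (∀ ω, V 0 ω = 0) → (∀ t ω, 0 ≤ V t ω) →
      (∀ l : ℝ, l ∈ Ico (0:ℝ) (1 / c) →
        ∃ L : ℕ → Ω → ℝ,
          Supermartingale L 𝒢 P ∧ (∀ t ω, 0 ≤ L t ω) ∧ (∫ ω, L 0 ω ∂P) ≤ 1 ∧
          ∀ t : ℕ, ∀ᵐ ω ∂P, Real.exp (l * S t ω - psiE c l * V t ω) ≤ L t ω) →
      P {ω | ∃ t : ℕ, 1 ≤ t ∧ u (V t ω) ≤ S t ω} ≤ ENNReal.ofReal α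

lemma Icc_one_succ_top (t : ℕ) : Finset.Icc 1 (t + 1) = insert (t + 1) (Finset.Icc 1 t) := by
  ext i; simp only [Finset.mem_Icc, Finset.mem_insert]; omega

lemma sum_Icc_one_succ (f : ℕ → ℝ) (t : ℕ) :
    ∑ i ∈ Finset.Icc 1 (t + 1), f i = (∑ i ∈ Finset.Icc 1 t, f i) + f (t + 1) := by
  rw [Icc_one_succ_top, Finset.sum_insert (by simp)]
  ring

lemma crossing_bound {Ω : Type*} {m0 : MeasurableSpace Ω} {P : Measure Ω} [IsProbabilityMeasure P]
    (𝒢 : Filtration ℕ m0) (c : ℝ) (hc : 0 < c) (β : ℝ)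
    (X D G : ℕ → Ω → ℝ)
    (hX_meas : ∀ t : ℕ, 1 ≤ t → Measurable[𝒢 t] (X t))
    (hX_bdd : ∃ C : ℝ, ∀ t ω, |X t ω| ≤ C)
    (hD_pred : ∀ t : ℕ, 1 ≤ t → Measurable[𝒢 (t - 1)] (D t))
    (hD_bdd : ∃ C : ℝ, ∀ t ω, |D t ω| ≤ C)
    (hG_pred : ∀ t : ℕ, 1 ≤ t → Measurable[𝒢 (t - 1)] (G t))
    (hG_mem : ∀ t ω, G t ω ∈ Icc (-(c / 2)) (c / 2))
    (hcond : ∀ t : ℕ, 1 ≤ t → P[X t|𝒢 (t - 1)] =ᵐ[P] D t)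
    (habs : ∀ t : ℕ, 1 ≤ t → ∀ᵐ ω ∂P, |X t ω| ≤ c / 2)
    (u : ℝ → ℝ) (hu : IsSubExponentialUniformBoundary u β c) :
    P {ω | ∃ t : ℕ, 1 ≤ t ∧
        u (∑ i ∈ Finset.Icc 1 t, (X i ω - G i ω) ^ 2)
          ≤ ∑ i ∈ Finset.Icc 1 t, (X i ω - D i ω)} ≤ ENNReal.ofReal β := by
  classical
  obtain ⟨Cx, hCx⟩ := hX_bdd
  obtain ⟨Cd, hCd⟩ := hD_bdd
  set S : ℕ → Ω → ℝ := fun t ω => ∑ i ∈ Finset.Icc 1 t, (X i ω - D i ω) with hS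
  set V : ℕ → Ω → ℝ := fun t ω => ∑ i ∈ Finset.Icc 1 t, (X i ω - G i ω) ^ 2 with hV
  -- basic measurability
  have hXm0 : ∀ i, 1 ≤ i → Measurable[m0] (X i) := fun i hi =>
    (hX_meas i hi).mono (𝒢.le i) le_rfl
  have hDm0 : ∀ i, 1 ≤ i → Measurable[m0] (D i) := fun i hi =>
    (hD_pred i hi).mono (𝒢.le (i - 1)) le_rfl
  have hGm0 : ∀ i, 1 ≤ i → Measurable[m0] (G i) := fun i hi =>
    (hG_pred i hi).mono (𝒢.le (i - 1)) le_rfl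
  have hXmt : ∀ i t, 1 ≤ i → i ≤ t → Measurable[𝒢 t] (X i) := fun i t hi hit =>
    (hX_meas i hi).mono (𝒢.mono hit) le_rfl
  have hDmt : ∀ i t, 1 ≤ i → i ≤ t → Measurable[𝒢 t] (D i) := fun i t hi hit =>
    (hD_pred i hi).mono (𝒢.mono ((Nat.sub_le i 1).trans hit)) le_rfl
  have hGmt : ∀ i t, 1 ≤ i → i ≤ t → Measurable[𝒢 t] (G i) := fun i t hi hit =>
    (hG_pred i hi).mono (𝒢.mono ((Nat.sub_le i 1).trans hit)) le_rfl
  have hSmt : ∀ t, Measurable[𝒢 t] (S t) := by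
    intro t
    simp only [hS]
    apply Finset.measurable_sum
    intro i hi
    obtain ⟨h1, h2⟩ := Finset.mem_Icc.1 hi
    exact (hXmt i t h1 h2).sub (hDmt i t h1 h2)
  have hVmt : ∀ t, Measurable[𝒢 t] (V t) := by
    intro t
    simp only [hV]
    apply Finset.measurable_sum
    intro i hi
    obtain ⟨h1, h2⟩ := Finset.mem_Icc.1 hi
    exact ((hXmt i t h1 h2).sub (hGmt i t h1 h2)).pow_const 2
  have hSb : ∀ t ω, |S t ω| ≤ t * (Cx + Cd) := by
    intro t ω
    simp only [hS]
    calc |∑ i ∈ Finset.Icc 1 t, (X i ω - D i ω)|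
        ≤ ∑ i ∈ Finset.Icc 1 t, |X i ω - D i ω| := Finset.abs_sum_le_sum_abs _ _
      _ ≤ ∑ i ∈ Finset.Icc 1 t, (Cx + Cd) :=
          Finset.sum_le_sum fun i _ => (abs_sub _ _).trans (add_le_add (hCx i ω) (hCd i ω))
      _ = t * (Cx + Cd) := by
          rw [Finset.sum_const, Nat.card_Icc]
          simp only [nsmul_eq_mul, Nat.add_sub_cancel]
  have hVnn : ∀ t ω, 0 ≤ V t ω := fun t ω =>
    Finset.sum_nonneg fun i _ => sq_nonneg _
  -- the canonical space
  set φ : Ω → ℕ → ℝ × ℝ × ℝ :=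
    fun ω j => if j = 0 then (0, 0, 0) else (X j ω, D j ω, G j ω) with hφdef
  have hφcoord : ∀ t j, j ≤ t → Measurable[𝒢 t] fun ω => φ ω j := by
    intro t j hjt
    rcases Nat.eq_zero_or_pos j with hj | hj
    · subst hj; simp only [hφdef, if_pos rfl]; exact measurable_const
    · have hj' : j ≠ 0 := Nat.pos_iff_ne_zero.1 hj
      simp only [hφdef, if_neg hj']
      exact (hXmt j t hj hjt).prodMk ((hDmt j t hj hjt).prodMk (hGmt j t hj hjt))
  have hφm : Measurable[m0] φ := by
    apply measurable_pi_lambda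
    intro j
    rcases Nat.eq_zero_or_pos j with hj | hj
    · subst hj; simp only [hφdef, if_pos rfl]; exact measurable_const
    · have hj' : j ≠ 0 := Nat.pos_iff_ne_zero.1 hj
      simp only [hφdef, if_neg hj']
      exact (hXm0 j hj).prodMk ((hDm0 j hj).prodMk (hGm0 j hj))
  set w : ℕ → (ℕ → ℝ × ℝ × ℝ) → ℝ × ℝ × ℝ := fun j x => x j with hwdef
  have hw : ∀ j, StronglyMeasurable (w j) := fun j =>
    (measurable_pi_apply j).stronglyMeasurable
  set ℱ : Filtration ℕ (inferInstance : MeasurableSpace (ℕ → ℝ × ℝ × ℝ)) :=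
    Filtration.natural w hw with hFdef
  have hwF : ∀ j t, j ≤ t → Measurable[ℱ t] (w j) := fun j t hjt =>
    (((Filtration.stronglyAdapted_natural hw) j).mono (ℱ.mono hjt)).measurable
  set S' : ℕ → (ℕ → ℝ × ℝ × ℝ) → ℝ :=
    fun t x => ∑ i ∈ Finset.Icc 1 t, ((x i).1 - (x i).2.1) with hS'def
  set V' : ℕ → (ℕ → ℝ × ℝ × ℝ) → ℝ :=
    fun t x => ∑ i ∈ Finset.Icc 1 t, ((x i).1 - (x i).2.2) ^ 2 with hV'def
  have hS'meas : ∀ t, Measurable[ℱ t] (S' t) := by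
    intro t
    simp only [hS'def]
    apply Finset.measurable_sum
    intro i hi
    have hit : i ≤ t := (Finset.mem_Icc.1 hi).2
    exact (measurable_fst.comp (hwF i t hit)).sub
      (measurable_fst.comp (measurable_snd.comp (hwF i t hit)))
  have hV'meas : ∀ t, Measurable[ℱ t] (V' t) := by
    intro t
    simp only [hV'def]
    apply Finset.measurable_sum
    intro i hi
    have hit : i ≤ t := (Finset.mem_Icc.1 hi).2
    exact ((measurable_fst.comp (hwF i t hit)).sub
      (measurable_snd.comp (measurable_snd.comp (hwF i t hit)))).pow_const 2
  have hSφ : ∀ t ω, S' t (φ ω) = S t ω := by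
    intro t ω
    simp only [hS'def, hS]
    apply Finset.sum_congr rfl
    intro i hi
    have hi' : i ≠ 0 := by have := (Finset.mem_Icc.1 hi).1; omega
    simp [hφdef, if_neg hi']
  have hVφ : ∀ t ω, V' t (φ ω) = V t ω := by
    intro t ω
    simp only [hV'def, hV]
    apply Finset.sum_congr rfl
    intro i hi
    have hi' : i ≠ 0 := by have := (Finset.mem_Icc.1 hi).1; omega
    simp [hφdef, if_neg hi']
  set Q : Measure (ℕ → ℝ × ℝ × ℝ) := P.map φ with hQdef
  haveI hQP : IsProbabilityMeasure Q := Measure.isProbabilityMeasure_map hφm.aemeasurable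
  -- supermartingale hypothesis of hu
  have hsup : ∀ l : ℝ, l ∈ Ico (0:ℝ) (1 / c) →
      ∃ L : ℕ → (ℕ → ℝ × ℝ × ℝ) → ℝ,
        Supermartingale L ℱ Q ∧ (∀ t x, 0 ≤ L t x) ∧ (∫ x, L 0 x ∂Q) ≤ 1 ∧
        ∀ t : ℕ, ∀ᵐ x ∂Q, Real.exp (l * S' t x - psiE c l * V' t x) ≤ L t x := by
    intro l hl
    obtain ⟨hl0, hl1⟩ := hl
    have hcl : c * l < 1 := by
      have h := (lt_div_iff₀ hc).1 hl1
      have h2 : l * c = c * l := mul_comm l c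
      linarith
    have hψ0 : 0 ≤ psiE c l := psiE_nonneg c l hc hl0 hcl
    set ψ := psiE c l with hψdef
    set L' : ℕ → (ℕ → ℝ × ℝ × ℝ) → ℝ :=
      fun t x => Real.exp (l * S' t x - ψ * V' t x) with hL'def
    set L : ℕ → Ω → ℝ := fun t ω => Real.exp (l * S t ω - ψ * V t ω) with hLdef
    have hLφ : ∀ t ω, L' t (φ ω) = L t ω := by
      intro t ω; simp only [hL'def, hLdef, hSφ, hVφ]
    have hadp : Adapted ℱ L' := by
      intro t
      have h1 : Measurable[ℱ t] fun x => l * S' t x - ψ * V' t x :=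
        ((hS'meas t).const_mul l).sub ((hV'meas t).const_mul ψ)
      exact (Real.measurable_exp.comp h1)
    have hL'meas : ∀ t, Measurable[inferInstance] (L' t) := fun t =>
      (hadp t).mono (ℱ.le t) le_rfl
    have hLmeas : ∀ t, Measurable[m0] (L t) := by
      intro t
      have h1 : Measurable[m0] fun ω => l * S t ω - ψ * V t ω :=
        (((hSmt t).mono (𝒢.le t) le_rfl).const_mul l).sub
          (((hVmt t).mono (𝒢.le t) le_rfl).const_mul ψ)
      exact Real.measurable_exp.comp h1
    have hLb : ∀ t ω, |L t ω| ≤ Real.exp (l * (t * (Cx + Cd))) := by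
      intro t ω
      simp only [hLdef]
      rw [abs_of_pos (Real.exp_pos _)]
      apply Real.exp_le_exp.2
      have h1 := (abs_le.1 (hSb t ω)).2
      have h2 := hVnn t ω
      nlinarith [mul_le_mul_of_nonneg_left h1 hl0, mul_nonneg hψ0 h2]
    have hLint : ∀ t, Integrable (L t) P := fun t =>
      Integrable.mono' (integrable_const _) (hLmeas t).aestronglyMeasurable
        (ae_of_all _ (hLb t))
    have hint : ∀ t, Integrable (L' t) Q := by
      intro t
      rw [hQdef, integrable_map_measure (hL'meas t).aestronglyMeasurable hφm.aemeasurable]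
      have : L' t ∘ φ = L t := funext fun ω => hLφ t ω
      rw [this]
      exact hLint t
    -- the one-step conditional expectation inequality on Ω
    have hkey : ∀ t, P[L (t + 1)|𝒢 t] ≤ᵐ[P] L t := by
      intro t
      set Y : Ω → ℝ := fun ω =>
        Real.exp (l * (X (t+1) ω - D (t+1) ω) - ψ * (X (t+1) ω - G (t+1) ω) ^ 2) with hYdef
      have hd' : Measurable[𝒢 t] (D (t + 1)) := hD_pred (t + 1) (by omega)
      have hg' : Measurable[𝒢 t] (G (t + 1)) := hG_pred (t + 1) (by omega)
      have hcond' : P[X (t + 1)|𝒢 t] =ᵐ[P] D (t + 1) := hcond (t + 1) (by omega)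
      have hY : P[Y|𝒢 t] ≤ᵐ[P] 1 := by
        simp only [hYdef, hψdef]
        exact condexp_Y_le_one (𝒢 t) (𝒢.le t) c l hc hl0 hcl
          (X (t + 1)) (D (t + 1)) (G (t + 1)) (hXm0 (t + 1) (by omega)) hd' hg'
          Cx Cd (hCx (t + 1)) (hCd (t + 1)) (hG_mem (t + 1)) hcond'
          (habs (t + 1) (by omega))
      have hdec : L (t + 1) = L t * Y := by
        funext ω
        simp only [hLdef, hYdef, Pi.mul_apply, hS, hV]
        rw [sum_Icc_one_succ (fun i => X i ω - D i ω) t,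
          sum_Icc_one_succ (fun i => (X i ω - G i ω) ^ 2) t, ← Real.exp_add]
        congr 1
        ring
      have hYm : Measurable[m0] Y := by
        have h1 : Measurable[m0] fun ω =>
            l * (X (t+1) ω - D (t+1) ω) - ψ * (X (t+1) ω - G (t+1) ω) ^ 2 :=
          (((hXm0 (t+1) (by omega)).sub (hDm0 (t+1) (by omega))).const_mul l).sub
            ((((hXm0 (t+1) (by omega)).sub (hGm0 (t+1) (by omega))).pow_const 2).const_mul ψ)
        exact Real.measurable_exp.comp h1
      have hYb : ∀ ω, |Y ω| ≤ Real.exp (l * (Cx + Cd)) := by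
        intro ω
        simp only [hYdef]
        rw [abs_of_pos (Real.exp_pos _)]
        apply Real.exp_le_exp.2
        have h1 : X (t+1) ω - D (t+1) ω ≤ Cx + Cd := by
          have := (abs_le.1 (hCx (t+1) ω)).2
          have := (abs_le.1 (hCd (t+1) ω)).1
          linarith
        nlinarith [mul_le_mul_of_nonneg_left h1 hl0,
          mul_nonneg hψ0 (sq_nonneg (X (t+1) ω - G (t+1) ω))]
      have hYint : Integrable Y P :=
        Integrable.mono' (integrable_const _) hYm.aestronglyMeasurable (ae_of_all _ hYb)
      have hLsm : StronglyMeasurable[𝒢 t] (L t) := by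
        have h1 : Measurable[𝒢 t] fun ω => l * S t ω - ψ * V t ω :=
          ((hSmt t).const_mul l).sub ((hVmt t).const_mul ψ)
        exact (Real.measurable_exp.comp h1).stronglyMeasurable
      have hmul : P[L t * Y|𝒢 t] =ᵐ[P] L t * P[Y|𝒢 t] :=
        condExp_mul_of_stronglyMeasurable_left hLsm (hdec ▸ hLint (t + 1)) hYint
      calc P[L (t + 1)|𝒢 t] =ᵐ[P] L t * P[Y|𝒢 t] := by rw [hdec]; exact hmul
        _ ≤ᵐ[P] L t := by
            filter_upwards [hY] with ω hω
            have h0 : 0 ≤ L t ω := (Real.exp_pos _).le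
            have : L t ω * (P[Y|𝒢 t]) ω ≤ L t ω * 1 :=
              mul_le_mul_of_nonneg_left (by simpa using hω) h0
            simpa using this
    have hstep : ∀ t (A : Set (ℕ → ℝ × ℝ × ℝ)), MeasurableSet[ℱ t] A →
        ∫ x in A, L' (t + 1) x ∂Q ≤ ∫ x in A, L' t x ∂Q := by
      intro t A hA
      have hAmb : MeasurableSet A := ℱ.le t A hA
      have hφF : @Measurable Ω (ℕ → ℝ × ℝ × ℝ) (𝒢 t) (ℱ t) φ := by
        rw [measurable_iff_comap_le]
        have hFt : ℱ t = ⨆ j, ⨆ _ : j ≤ t,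
            MeasurableSpace.comap (w j) inferInstance := rfl
        rw [hFt]
        simp_rw [MeasurableSpace.comap_iSup]
        apply iSup_le
        intro j
        apply iSup_le
        intro hjt
        rw [MeasurableSpace.comap_comp]
        exact Measurable.comap_le (hφcoord t j hjt)
      have hB : MeasurableSet[𝒢 t] (φ ⁻¹' A) := hφF hA
      have hBamb : MeasurableSet (φ ⁻¹' A) := (𝒢.le t) _ hB
      rw [hQdef, setIntegral_map hAmb (hL'meas (t+1)).aestronglyMeasurable hφm.aemeasurable,
        setIntegral_map hAmb (hL'meas t).aestronglyMeasurable hφm.aemeasurable]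
      have e1 : ∀ t', ∫ ω in φ ⁻¹' A, L' t' (φ ω) ∂P = ∫ ω in φ ⁻¹' A, L t' ω ∂P := by
        intro t'
        apply integral_congr_ae
        exact ae_of_all _ fun ω => hLφ t' ω
      rw [e1 (t + 1), e1 t]
      calc ∫ ω in φ ⁻¹' A, L (t + 1) ω ∂P
          = ∫ ω in φ ⁻¹' A, (P[L (t + 1)|𝒢 t]) ω ∂P :=
            (setIntegral_condExp (𝒢.le t) (hLint (t + 1)) hB).symm
        _ ≤ ∫ ω in φ ⁻¹' A, L t ω ∂P :=
            setIntegral_mono_ae integrable_condExp.integrableOn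
              ((hLint t).integrableOn) (hkey t)
    have hsm : Supermartingale L' ℱ Q :=
      supermartingale_of_setIntegral_succ_le hadp.stronglyAdapted hint hstep
    refine ⟨L', hsm, fun t x => (Real.exp_pos _).le, ?_, fun t => ae_of_all _ fun x => le_rfl⟩
    have hL'0 : ∀ x, L' 0 x = 1 := by
      intro x
      have h10 : Finset.Icc 1 0 = (∅ : Finset ℕ) := by decide
      simp [hL'def, hS'def, hV'def, h10]
    have : ∫ x, L' 0 x ∂Q = 1 := by
      rw [integral_congr_ae (ae_of_all _ hL'0)]
      simp
    rw [this]
  -- apply hu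
  have hbad := hu (ℕ → ℝ × ℝ × ℝ) inferInstance Q hQP ℱ S' V'
    (fun t => (hS'meas t)) (fun t => (hV'meas t))
    (by intro x; have h10 : Finset.Icc 1 0 = (∅ : Finset ℕ) := by decide
        simp [hS'def, h10])
    (by intro x; have h10 : Finset.Icc 1 0 = (∅ : Finset ℕ) := by decide
        simp [hV'def, h10])
    (fun t x => Finset.sum_nonneg fun i _ => sq_nonneg _) hsup
  have hseteq : {ω | ∃ t : ℕ, 1 ≤ t ∧ u (V t ω) ≤ S t ω} =
      φ ⁻¹' {x | ∃ t : ℕ, 1 ≤ t ∧ u (V' t x) ≤ S' t x} := by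
    ext ω
    simp only [mem_setOf_eq, mem_preimage, hSφ, hVφ]
  calc P {ω | ∃ t : ℕ, 1 ≤ t ∧ u (V t ω) ≤ S t ω}
      = P (φ ⁻¹' {x | ∃ t : ℕ, 1 ≤ t ∧ u (V' t x) ≤ S' t x}) := by rw [hseteq]
    _ ≤ Q {x | ∃ t : ℕ, 1 ≤ t ∧ u (V' t x) ≤ S' t x} := by
        rw [hQdef]; exact Measure.le_map_apply hφm.aemeasurable _
    _ ≤ ENNReal.ofReal β := hbad


/-- **Theorem 2 (empirical-Bernstein confidence sequence).**
Let `c > 0` and `α ∈ (0,1)`.  Suppose `E[δ̂_t | 𝒢_{t−1}] = δ_t` and `|δ̂_t| ≤ c/2` a.s. for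
every `t ≥ 1`; let `(γ_t)_{t≥1}` be a `[−c/2, c/2]`-valued predictable process and set
`V̂_t = Σ_{i=1}^t (δ̂_i − γ_i)²`.  If `u` is a sub-exponential uniform boundary with crossing
probability `α/2` and scale `c`, then `P(∀ t ≥ 1, |Δ̂_t − Δ_t| < u(V̂_t)/t) ≥ 1 − α`. -/
theorem empirical_bernstein_confidence_sequence
    {Ω : Type*} {m0 : MeasurableSpace Ω} {P : Measure Ω} [IsProbabilityMeasure P]
    (𝒢 : Filtration ℕ m0)
    (c : ℝ) (hc : 0 < c) (α : ℝ) (hα : α ∈ Ioo (0:ℝ) 1)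
    (δhat δ γ : ℕ → Ω → ℝ)
    (hδhat_adapted : ∀ t : ℕ, 1 ≤ t → Measurable[𝒢 t] (δhat t))
    (hδhat_bdd : ∃ C : ℝ, ∀ t ω, |δhat t ω| ≤ C)
    (hδ_pred : ∀ t : ℕ, 1 ≤ t → Measurable[𝒢 (t - 1)] (δ t))
    (hδ_bdd : ∃ C : ℝ, ∀ t ω, |δ t ω| ≤ C)
    (hγ_pred : ∀ t : ℕ, 1 ≤ t → Measurable[𝒢 (t - 1)] (γ t))
    (hγ_mem : ∀ t ω, γ t ω ∈ Icc (-(c / 2)) (c / 2))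
    (hcond : ∀ t : ℕ, 1 ≤ t → P[δhat t | 𝒢 (t - 1)] =ᵐ[P] δ t)
    (habs : ∀ t : ℕ, 1 ≤ t → ∀ᵐ ω ∂P, |δhat t ω| ≤ c / 2)
    (u : ℝ → ℝ) (hu : IsSubExponentialUniformBoundary u (α / 2) c) :
    ENNReal.ofReal (1 - α) ≤
      P {ω | ∀ t : ℕ, 1 ≤ t →
        |(1 / (t : ℝ)) * ∑ i ∈ Finset.Icc 1 t, δhat i ω
            - (1 / (t : ℝ)) * ∑ i ∈ Finset.Icc 1 t, δ i ω|
          < u (∑ i ∈ Finset.Icc 1 t, (δhat i ω - γ i ω) ^ 2) / (t : ℝ)} := by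
  obtain ⟨hα0, hα1⟩ := hα
  have hb1 := crossing_bound 𝒢 c hc (α / 2) δhat δ γ hδhat_adapted hδhat_bdd hδ_pred hδ_bdd
    hγ_pred hγ_mem hcond habs u hu
  have hb2 := crossing_bound 𝒢 c hc (α / 2)
    (fun t ω => -δhat t ω) (fun t ω => -δ t ω) (fun t ω => -γ t ω)
    (fun t ht => (hδhat_adapted t ht).neg)
    (by obtain ⟨C, hC⟩ := hδhat_bdd
        exact ⟨C, fun t ω => by simpa [abs_neg] using hC t ω⟩)
    (fun t ht => (hδ_pred t ht).neg)
    (by obtain ⟨C, hC⟩ := hδ_bdd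
        exact ⟨C, fun t ω => by simpa [abs_neg] using hC t ω⟩)
    (fun t ht => (hγ_pred t ht).neg)
    (fun t ω => ⟨by have := (hγ_mem t ω).2; linarith, by have := (hγ_mem t ω).1; linarith⟩)
    (fun t ht => by
      have h1 : P[(fun ω => -δhat t ω)|𝒢 (t - 1)] =ᵐ[P] -P[δhat t|𝒢 (t - 1)] :=
        condExp_neg (δhat t) _
      filter_upwards [h1, hcond t ht] with ω hω1 hω2
      simp only [hω1, Pi.neg_apply, hω2])
    (fun t ht => by filter_upwards [habs t ht] with ω h; simpa [abs_neg] using h)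
    u hu
  -- clean up the second bad event
  have e1 : ∀ (t : ℕ) (ω : Ω), ∑ i ∈ Finset.Icc 1 t, (-δhat i ω - -γ i ω) ^ 2
      = ∑ i ∈ Finset.Icc 1 t, (δhat i ω - γ i ω) ^ 2 :=
    fun t ω => Finset.sum_congr rfl fun i _ => by ring
  have e2 : ∀ (t : ℕ) (ω : Ω), ∑ i ∈ Finset.Icc 1 t, (-δhat i ω - -δ i ω)
      = -∑ i ∈ Finset.Icc 1 t, (δhat i ω - δ i ω) := by
    intro t ω
    rw [← Finset.sum_neg_distrib]
    exact Finset.sum_congr rfl fun i _ => by ring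
  rw [show {ω | ∃ t : ℕ, 1 ≤ t ∧ u (∑ i ∈ Finset.Icc 1 t, (-δhat i ω - -γ i ω) ^ 2)
        ≤ ∑ i ∈ Finset.Icc 1 t, (-δhat i ω - -δ i ω)}
      = {ω | ∃ t : ℕ, 1 ≤ t ∧ u (∑ i ∈ Finset.Icc 1 t, (δhat i ω - γ i ω) ^ 2)
        ≤ -∑ i ∈ Finset.Icc 1 t, (δhat i ω - δ i ω)} from by
    ext ω; simp only [mem_setOf_eq, e1, e2]] at hb2
  set T : Set Ω := {ω | ∀ t : ℕ, 1 ≤ t →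
      |(1 / (t : ℝ)) * ∑ i ∈ Finset.Icc 1 t, δhat i ω
          - (1 / (t : ℝ)) * ∑ i ∈ Finset.Icc 1 t, δ i ω|
        < u (∑ i ∈ Finset.Icc 1 t, (δhat i ω - γ i ω) ^ 2) / (t : ℝ)} with hT
  set B1 : Set Ω := {ω | ∃ t : ℕ, 1 ≤ t ∧ u (∑ i ∈ Finset.Icc 1 t, (δhat i ω - γ i ω) ^ 2)
      ≤ ∑ i ∈ Finset.Icc 1 t, (δhat i ω - δ i ω)} with hB1
  set B2 : Set Ω := {ω | ∃ t : ℕ, 1 ≤ t ∧ u (∑ i ∈ Finset.Icc 1 t, (δhat i ω - γ i ω) ^ 2)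
      ≤ -∑ i ∈ Finset.Icc 1 t, (δhat i ω - δ i ω)} with hB2
  have hcompl : Tᶜ ⊆ B1 ∪ B2 := by
    intro ω hω
    simp only [hT, mem_compl_iff, mem_setOf_eq, not_forall] at hω
    obtain ⟨t, ht, hlt⟩ := hω
    rw [not_lt] at hlt
    have htpos : (0 : ℝ) < t := by exact_mod_cast ht
    set s := ∑ i ∈ Finset.Icc 1 t, (δhat i ω - δ i ω) with hs
    have hsum : (1 / (t : ℝ)) * ∑ i ∈ Finset.Icc 1 t, δhat i ω
        - (1 / (t : ℝ)) * ∑ i ∈ Finset.Icc 1 t, δ i ω = s / t := by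
      rw [hs, Finset.sum_sub_distrib]
      field_simp
    rw [hsum, abs_div, abs_of_pos htpos] at hlt
    have hle : u (∑ i ∈ Finset.Icc 1 t, (δhat i ω - γ i ω) ^ 2) ≤ |s| := by
      have h := mul_le_mul_of_nonneg_right hlt htpos.le
      rw [div_mul_cancel₀ _ htpos.ne', div_mul_cancel₀ _ htpos.ne'] at h
      exact h
    rcases le_abs.1 hle with h | h
    · exact Or.inl ⟨t, ht, h⟩
    · exact Or.inr ⟨t, ht, h⟩
  have hPcompl : P Tᶜ ≤ ENNReal.ofReal α := by
    calc P Tᶜ ≤ P (B1 ∪ B2) := measure_mono hcompl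
      _ ≤ P B1 + P B2 := measure_union_le _ _
      _ ≤ ENNReal.ofReal (α / 2) + ENNReal.ofReal (α / 2) := add_le_add hb1 hb2
      _ = ENNReal.ofReal α := by
          rw [← ENNReal.ofReal_add (by linarith) (by linarith)]
          norm_num
  have h1 : (1 : ENNReal) ≤ P T + P Tᶜ := by
    calc (1 : ENNReal) = P univ := measure_univ.symm
      _ = P (T ∪ Tᶜ) := by rw [union_compl_self]
      _ ≤ P T + P Tᶜ := measure_union_le _ _
  calc ENNReal.ofReal (1 - α) = 1 - ENNReal.ofReal α := by
        rw [ENNReal.ofReal_sub _ hα0.le, ENNReal.ofReal_one]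
    _ ≤ P T := by
        rw [tsub_le_iff_right]
        calc (1 : ENNReal) ≤ P T + P Tᶜ := h1
          _ ≤ P T + ENNReal.ofReal α := add_le_add le_rfl hPcompl
end

section
/- (Theorem 3, sub-exponential e-process for the weak null.) Let c > 0. Suppose E[δ̂_t | 𝒢_{t−1}] = δ_t and |δ̂_t| ≤ c/2 a.s. for every t ≥ 1; let (γ_t)_{t≥1} be a [−c/2, c/2]-valued predictable process and set V̂_t = Σ_{i=1}^t (δ̂_i − γ_i)². Assume the weak one-sided null holds: Σ_{i=1}^t δ_i ≤ 0 a.s. for every t ≥ 1. Then for every λ ∈ [0, 1/c), the process E_t(λ) := exp( λ Σ_{i=1}^t δ̂_i − ψ_{E,c}(λ) V̂_t ) is an e-process: for every stopping time τ with respect to (𝒢_t) (setting E_∞(λ) := limsup_{t→∞} E_t(λ)), E[E_τ(λ)] ≤ 1. -/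
open MeasureTheory Set Filter

/-- The value of the process `E` at a possibly infinite (stopping) time `τ`, with
`E_∞ := limsup_{t → ∞} E_t`. -/
noncomputable def stoppedValueTop {Ω : Type*} (E : ℕ → Ω → ℝ) (τ : Ω → ℕ∞) (ω : Ω) : ℝ :=
  WithTop.recTopCoe (limsup (fun t => E t ω) atTop) (fun n => E n ω) (τ ω)

open Topology

lemma aux_log {s : ℝ} (h0 : 0 ≤ s) (h1 : s < 1) :
    s + s ^ 2 / 2 ≤ -Real.log (1 - s) := by
  set k : ℝ → ℝ := fun x => -Real.log (1 - x) - x - x ^ 2 / 2 with hk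
  have hd : ∀ x ∈ Ico (0:ℝ) 1, HasDerivAt k ((1 - x)⁻¹ - 1 - x) x := by
    intro x hx
    have hne : (1:ℝ) - x ≠ 0 := by have := hx.2; intro h; linarith [hx.2]
    have h1' : HasDerivAt (fun y : ℝ => 1 - y) (-1) x := by
      simpa using (hasDerivAt_id x).const_sub 1
    have h2 : HasDerivAt (fun y : ℝ => Real.log (1 - y)) ((1 - x)⁻¹ * (-1)) x :=
      (Real.hasDerivAt_log hne).comp x h1'
    have h3 : HasDerivAt k (-((1 - x)⁻¹ * (-1)) - 1 - (2 * x ^ 1 / 2)) x := by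
      exact ((h2.neg).sub (hasDerivAt_id x)).sub
        ((hasDerivAt_pow 2 x).div_const 2)
    convert h3 using 1
    ring
  have hmono : MonotoneOn k (Ico (0:ℝ) 1) := by
    apply monotoneOn_of_deriv_nonneg (convex_Ico 0 1)
    · intro x hx
      exact (hd x hx).continuousAt.continuousWithinAt
    · intro x hx
      rw [interior_Ico] at hx
      exact ((hd x ⟨hx.1.le, hx.2⟩).differentiableAt).differentiableWithinAt
    · intro x hx
      rw [interior_Ico] at hx
      rw [(hd x ⟨hx.1.le, hx.2⟩).deriv]
      have hxpos : 0 < 1 - x := by linarith [hx.2]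
      rw [sub_nonneg, ← sub_nonneg]
      have : (1 - x)⁻¹ - 1 - x = x ^ 2 / (1 - x) := by
        field_simp
        ring
      nlinarith [sq_nonneg x, inv_pos.2 hxpos, mul_pos (mul_pos hx.1 hx.1) (inv_pos.2 hxpos),
        (div_nonneg (sq_nonneg x) hxpos.le)]
  have h00 : k 0 = 0 := by simp [hk]
  have := hmono (show (0:ℝ) ∈ Ico (0:ℝ) 1 by constructor <;> norm_num)
    (show s ∈ Ico (0:ℝ) 1 from ⟨h0, h1⟩) h0
  rw [h00] at this
  simp only [hk] at this
  linarith

lemma fan_norm {s y : ℝ} (hs0 : 0 ≤ s) (hs1 : s < 1) (hy1 : -1 ≤ y) (hy2 : y ≤ 1) :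
    Real.exp (s * y - (-Real.log (1 - s) - s) * y ^ 2) ≤ 1 + s * y := by
  have hpos : ∀ z : ℝ, -1 ≤ z → 0 < 1 + s * z := by intro z hz; nlinarith
  set ψ : ℝ := -Real.log (1 - s) - s with hψ
  have hψ2 : s ^ 2 ≤ 2 * ψ := by
    have := aux_log hs0 hs1
    simp only [hψ]
    linarith
  set h : ℝ → ℝ := fun z => Real.log (1 + s * z) - s * z + ψ * z ^ 2 with hh
  have hd : ∀ z : ℝ, -1 ≤ z → HasDerivAt h (z * (2 * ψ - s ^ 2 / (1 + s * z))) z := by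
    intro z hz
    have hne : (1:ℝ) + s * z ≠ 0 := ne_of_gt (hpos z hz)
    have h1' : HasDerivAt (fun w : ℝ => 1 + s * w) s z := by
      simpa using ((hasDerivAt_id z).const_mul s).const_add 1
    have h2 : HasDerivAt (fun w : ℝ => Real.log (1 + s * w)) ((1 + s * z)⁻¹ * s) z :=
      by have := (Real.hasDerivAt_log hne).comp z h1'; exact this
    have h3 := (h2.sub (((hasDerivAt_id z).const_mul s))).add ((hasDerivAt_pow 2 z).const_mul ψ)
    refine HasDerivAt.congr_deriv h3 ?_
    field_simp
    ring
  have hG : ∀ z w : ℝ, -1 ≤ z → z ≤ w →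
      s ^ 2 / (1 + s * w) ≤ s ^ 2 / (1 + s * z) :=
    fun z w hz hzw => div_le_div_of_nonneg_left (sq_nonneg s) (hpos z hz)
      (by nlinarith)
  have hm1 : h (-1) = 0 := by
    simp only [hh, hψ]
    ring_nf
  have h0 : h 0 = 0 := by simp [hh]
  -- main claim : 0 ≤ h y
  have hkey : 0 ≤ h y := by
    rcases le_or_gt 0 y with hy0 | hy0
    · -- monotone on [0, 1]
      have hmono : MonotoneOn h (Icc (0:ℝ) 1) := by
        apply monotoneOn_of_deriv_nonneg (convex_Icc 0 1)
        · exact fun x hx => (hd x (by linarith [hx.1])).continuousAt.continuousWithinAt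
        · intro x hx
          rw [interior_Icc] at hx
          exact (hd x (by linarith [hx.1])).differentiableAt.differentiableWithinAt
        · intro x hx
          rw [interior_Icc] at hx
          rw [(hd x (by linarith [hx.1])).deriv]
          have : s ^ 2 / (1 + s * x) ≤ s ^ 2 := by
            apply div_le_self (sq_nonneg s)
            nlinarith [hx.1]
          apply mul_nonneg hx.1.le
          linarith
      have := hmono (left_mem_Icc.2 (by norm_num)) ⟨hy0, hy2⟩ hy0
      rw [h0] at this; exact this
    · rcases le_or_gt (2 * ψ - s ^ 2 / (1 + s * y)) 0 with hGy | hGy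
      · -- monotone on [-1, y]
        have hmono : MonotoneOn h (Icc (-1:ℝ) y) := by
          apply monotoneOn_of_deriv_nonneg (convex_Icc _ _)
          · exact fun x hx => (hd x hx.1).continuousAt.continuousWithinAt
          · intro x hx
            rw [interior_Icc] at hx
            exact (hd x hx.1.le).differentiableAt.differentiableWithinAt
          · intro x hx
            rw [interior_Icc] at hx
            rw [(hd x hx.1.le).deriv]
            have hGx : 2 * ψ - s ^ 2 / (1 + s * x) ≤ 0 := by
              have := hG x y hx.1.le hx.2.le
              linarith
            exact mul_nonneg_iff.2 (Or.inr ⟨by linarith [hx.2, hy0], hGx⟩)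
        have := hmono (left_mem_Icc.2 hy1) (right_mem_Icc.2 hy1) hy1
        rw [hm1] at this; exact this
      · -- antitone on [y, 0]
        have hmono : AntitoneOn h (Icc y (0:ℝ)) := by
          apply antitoneOn_of_deriv_nonpos (convex_Icc _ _)
          · exact fun x hx => (hd x (by linarith [hx.1])).continuousAt.continuousWithinAt
          · intro x hx
            rw [interior_Icc] at hx
            exact (hd x (by linarith [hx.1])).differentiableAt.differentiableWithinAt
          · intro x hx
            rw [interior_Icc] at hx
            rw [(hd x (by linarith [hx.1])).deriv]
            have hGx : 0 ≤ 2 * ψ - s ^ 2 / (1 + s * x) := by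
              have := hG y x hy1 hx.1.le
              linarith
            exact mul_nonpos_iff.2 (Or.inr ⟨hx.2.le, hGx⟩)
        have := hmono (left_mem_Icc.2 hy0.le) (right_mem_Icc.2 hy0.le) hy0.le
        rw [h0] at this; exact this
  -- conclude
  have hposy := hpos y hy1
  calc Real.exp (s * y - ψ * y ^ 2) ≤ Real.exp (Real.log (1 + s * y)) := by
        apply Real.exp_le_exp.2
        simp only [hh] at hkey
        linarith
    _ = 1 + s * y := Real.exp_log hposy

lemma fan_s10 {c l u : ℝ} (hc : 0 < c) (hl0 : 0 ≤ l) (hl1 : l < 1 / c) (hu : |u| ≤ c) :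
    Real.exp (l * u - psiE c l * u ^ 2) ≤ 1 + l * u := by
  have hcne : c ≠ 0 := ne_of_gt hc
  have hs1 : c * l < 1 := by
    have := (lt_div_iff₀ hc).1 hl1
    linarith
  have habs := abs_le.1 hu
  have key := fan_norm (s := c * l) (y := u / c) (by positivity) hs1
    (by rw [le_div_iff₀ hc]; linarith) (by rw [div_le_one hc]; linarith)
  have e1 : c * l * (u / c) = l * u := by field_simp
  have e2 : (-Real.log (1 - c * l) - c * l) * (u / c) ^ 2 = psiE c l * u ^ 2 := by
    rw [psiE]; field_simp
  rw [e1, e2] at key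
  exact key

/-- **Theorem 3 (sub-exponential e-process for the weak null).**
Let `c > 0`.  Suppose `E[δ̂_t | 𝒢_{t−1}] = δ_t` and `|δ̂_t| ≤ c/2` a.s. for every `t ≥ 1`;
let `(γ_t)_{t≥1}` be a `[−c/2, c/2]`-valued predictable process and set
`V̂_t = Σ_{i=1}^t (δ̂_i − γ_i)².`  Assume the weak one-sided null. -/
theorem subexponential_eprocess_weak_null
    {Ω : Type*} {m0 : MeasurableSpace Ω} {P : Measure Ω} [IsProbabilityMeasure P]
    (𝒢 : Filtration ℕ m0)
    (c : ℝ) (hc : 0 < c)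
    (δhat δ γ : ℕ → Ω → ℝ)
    (hδhat_adapted : ∀ t : ℕ, 1 ≤ t → Measurable[𝒢 t] (δhat t))
    (hδhat_bdd : ∃ C : ℝ, ∀ t ω, |δhat t ω| ≤ C)
    (hδ_pred : ∀ t : ℕ, 1 ≤ t → Measurable[𝒢 (t - 1)] (δ t))
    (hδ_bdd : ∃ C : ℝ, ∀ t ω, |δ t ω| ≤ C)
    (hγ_pred : ∀ t : ℕ, 1 ≤ t → Measurable[𝒢 (t - 1)] (γ t))
    (hγ_mem : ∀ t ω, γ t ω ∈ Icc (-(c / 2)) (c / 2))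
    (hcond : ∀ t : ℕ, 1 ≤ t → P[δhat t | 𝒢 (t - 1)] =ᵐ[P] δ t)
    (habs : ∀ t : ℕ, 1 ≤ t → ∀ᵐ ω ∂P, |δhat t ω| ≤ c / 2)
    (hnull : ∀ t : ℕ, 1 ≤ t → ∀ᵐ ω ∂P, (∑ i ∈ Finset.Icc 1 t, δ i ω) ≤ 0)
    (l : ℝ) (hl : l ∈ Ico (0:ℝ) (1 / c)) :
    ∀ τ : Ω → ℕ∞, (∀ n : ℕ, MeasurableSet[𝒢 n] {ω | τ ω ≤ (n : ℕ∞)}) →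
      (∫ ω, stoppedValueTop
          (fun t ω => Real.exp
            (l * (∑ i ∈ Finset.Icc 1 t, δhat i ω)
              - psiE c l * ∑ i ∈ Finset.Icc 1 t, (δhat i ω - γ i ω) ^ 2))
          τ ω ∂P) ≤ 1 := by
  intro τ hτ
  obtain ⟨hl0, hlc⟩ := hl
  obtain ⟨C₁, hC₁⟩ := hδhat_bdd
  obtain ⟨C₂, hC₂⟩ := hδ_bdd
  have hC₁' : ∀ t ω, |δhat t ω| ≤ |C₁| := fun t ω => (hC₁ t ω).trans (le_abs_self _)
  have hC₂' : ∀ t ω, |δ t ω| ≤ |C₂| := fun t ω => (hC₂ t ω).trans (le_abs_self _)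
  have hγabs : ∀ t ω, |γ t ω| ≤ c / 2 := fun t ω =>
    abs_le.2 ⟨(hγ_mem t ω).1, (hγ_mem t ω).2⟩
  have hclt : c * l < 1 := by
    have := (lt_div_iff₀ hc).1 hlc
    linarith
  have hψ0 : 0 ≤ psiE c l := by
    rw [psiE]
    apply div_nonneg _ (sq_nonneg c)
    have hlog := Real.log_le_sub_one_of_pos (show (0:ℝ) < 1 - c * l by linarith)
    linarith
  -- The e-process `E` and the supermartingale `M`
  set E : ℕ → Ω → ℝ := fun t ω => Real.exp
      (l * (∑ i ∈ Finset.Icc 1 t, δhat i ω)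
        - psiE c l * ∑ i ∈ Finset.Icc 1 t, (δhat i ω - γ i ω) ^ 2) with hEdef
  set M : ℕ → Ω → ℝ := fun t ω => Real.exp
      (l * (∑ i ∈ Finset.Icc 1 t, (δhat i ω - δ i ω))
        - psiE c l * ∑ i ∈ Finset.Icc 1 t, (δhat i ω - γ i ω) ^ 2) with hMdef
  have hMpos : ∀ t ω, 0 < M t ω := fun t ω => Real.exp_pos _
  have hEpos : ∀ t ω, 0 < E t ω := fun t ω => Real.exp_pos _
  -- measurability
  have hmdhat : ∀ i t : ℕ, 1 ≤ i → i ≤ t → Measurable[𝒢 t] (δhat i) :=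
    fun i t h1 h2 => (hδhat_adapted i h1).mono (𝒢.mono h2) le_rfl
  have hmd : ∀ i t : ℕ, 1 ≤ i → i ≤ t → Measurable[𝒢 t] (δ i) :=
    fun i t h1 h2 => (hδ_pred i h1).mono (𝒢.mono (le_trans (Nat.sub_le i 1) h2)) le_rfl
  have hmg : ∀ i t : ℕ, 1 ≤ i → i ≤ t → Measurable[𝒢 t] (γ i) :=
    fun i t h1 h2 => (hγ_pred i h1).mono (𝒢.mono (le_trans (Nat.sub_le i 1) h2)) le_rfl
  have hMmeas : ∀ t, Measurable[𝒢 t] (M t) := by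
    intro t
    apply Measurable.exp
    apply Measurable.sub
    · exact (Finset.measurable_sum _ fun i hi => by
        have hi' := Finset.mem_Icc.1 hi
        exact (hmdhat i t hi'.1 hi'.2).sub (hmd i t hi'.1 hi'.2)).const_mul l
    · exact (Finset.measurable_sum _ fun i hi => by
        have hi' := Finset.mem_Icc.1 hi
        exact ((hmdhat i t hi'.1 hi'.2).sub (hmg i t hi'.1 hi'.2)).pow_const 2).const_mul
          (psiE c l)
  have hEmeas : ∀ t, Measurable (E t) := by
    intro t
    apply Measurable.exp
    apply Measurable.sub
    · exact ((Finset.measurable_sum _ fun i hi => by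
        have hi' := Finset.mem_Icc.1 hi
        exact (hmdhat i t hi'.1 hi'.2).mono (𝒢.le t) le_rfl).const_mul l)
    · exact (Finset.measurable_sum _ fun i hi => by
        have hi' := Finset.mem_Icc.1 hi
        exact (((hmdhat i t hi'.1 hi'.2).sub (hmg i t hi'.1 hi'.2)).pow_const 2).mono
          (𝒢.le t) le_rfl).const_mul (psiE c l)
  -- integrability helper
  have hbint : ∀ (F : Ω → ℝ) (K : ℝ), Measurable F → (∀ ω, |F ω| ≤ K) → Integrable F P := by
    intro F K hm hb
    exact (integrable_const K).mono' hm.aestronglyMeasurable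
      (ae_of_all _ fun ω => by simpa [Real.norm_eq_abs] using hb ω)
  -- bound on M
  have hMbd : ∀ t ω, |M t ω| ≤ Real.exp (l * (t * (|C₁| + |C₂|))) := by
    intro t ω
    rw [abs_of_pos (hMpos t ω)]
    apply Real.exp_le_exp.2
    have hA : |∑ i ∈ Finset.Icc 1 t, (δhat i ω - δ i ω)| ≤ t * (|C₁| + |C₂|) := by
      calc |∑ i ∈ Finset.Icc 1 t, (δhat i ω - δ i ω)|
          ≤ ∑ i ∈ Finset.Icc 1 t, |δhat i ω - δ i ω| := Finset.abs_sum_le_sum_abs _ _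
        _ ≤ ∑ _i ∈ Finset.Icc 1 t, (|C₁| + |C₂|) := by
            apply Finset.sum_le_sum
            intro i _
            calc |δhat i ω - δ i ω| ≤ |δhat i ω| + |δ i ω| := abs_sub _ _
              _ ≤ |C₁| + |C₂| := add_le_add (hC₁' i ω) (hC₂' i ω)
        _ = t * (|C₁| + |C₂|) := by
            rw [Finset.sum_const, Nat.card_Icc]
            simp only [nsmul_eq_mul, Nat.add_sub_cancel]
    have hB : 0 ≤ psiE c l * ∑ i ∈ Finset.Icc 1 t, (δhat i ω - γ i ω) ^ 2 :=
      mul_nonneg hψ0 (Finset.sum_nonneg fun i _ => sq_nonneg _)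
    have := mul_le_mul_of_nonneg_left (le_trans (le_abs_self _) hA) hl0
    linarith
  have hMint : ∀ t, Integrable (M t) P := fun t =>
    hbint (M t) _ ((hMmeas t).mono (𝒢.le t) le_rfl) (hMbd t)
  have hM0 : ∀ ω, M 0 ω = 1 := by
    intro ω
    simp [hMdef]
  -- E ≤ M a.e.
  have hEleM : ∀ᵐ ω ∂P, ∀ t, E t ω ≤ M t ω := by
    rw [ae_all_iff]
    intro t
    rcases Nat.eq_zero_or_pos t with h0 | h1
    · subst h0
      apply ae_of_all
      intro ω
      simp [hEdef, hMdef]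
    · filter_upwards [hnull t h1] with ω hω
      apply Real.exp_le_exp.2
      rw [Finset.sum_sub_distrib]
      have := mul_nonneg hl0 (neg_nonneg.2 hω)
      have h2 : l * (∑ i ∈ Finset.Icc 1 t, δhat i ω - ∑ i ∈ Finset.Icc 1 t, δ i ω)
          = l * ∑ i ∈ Finset.Icc 1 t, δhat i ω - l * ∑ i ∈ Finset.Icc 1 t, δ i ω := by ring
      rw [h2]
      nlinarith
  -- one-step supermartingale property
  have hstep : ∀ t, P[M (t + 1)|𝒢 t] ≤ᵐ[P] M t := by
    intro t
    have h1t : (1:ℕ) ≤ t + 1 := Nat.succ_le_succ (Nat.zero_le t)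
    set f : Ω → ℝ := fun ω => Real.exp
        (l * (δhat (t+1) ω - δ (t+1) ω) - psiE c l * (δhat (t+1) ω - γ (t+1) ω) ^ 2) with hfdef
    have hδm : Measurable[𝒢 t] (δ (t+1)) := by
      have := hδ_pred (t+1) h1t
      simpa using this
    have hγm : Measurable[𝒢 t] (γ (t+1)) := by
      have := hγ_pred (t+1) h1t
      simpa using this
    have hδhatm0 : Measurable (δhat (t+1)) := (hδhat_adapted (t+1) h1t).mono (𝒢.le _) le_rfl
    have hδm0 : Measurable (δ (t+1)) := hδm.mono (𝒢.le t) le_rfl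
    have hγm0 : Measurable (γ (t+1)) := hγm.mono (𝒢.le t) le_rfl
    have hfmeas : Measurable f :=
      Measurable.exp (((hδhatm0.sub hδm0).const_mul l).sub
        (((hδhatm0.sub hγm0).pow_const 2).const_mul (psiE c l)))
    have hfbd : ∀ ω, |f ω| ≤ Real.exp (l * (|C₁| + |C₂|)) := by
      intro ω
      rw [abs_of_pos (Real.exp_pos _)]
      apply Real.exp_le_exp.2
      have h1 : |δhat (t+1) ω - δ (t+1) ω| ≤ |C₁| + |C₂| :=
        (abs_sub _ _).trans (add_le_add (hC₁' _ ω) (hC₂' _ ω))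
      have h2 : 0 ≤ psiE c l * (δhat (t+1) ω - γ (t+1) ω) ^ 2 := mul_nonneg hψ0 (sq_nonneg _)
      have := mul_le_mul_of_nonneg_left (le_trans (le_abs_self _) h1) hl0
      linarith
    have hf_int : Integrable f P := hbint f _ hfmeas hfbd
    have hsplit : M (t+1) = M t * f := by
      funext ω
      show Real.exp _ = Real.exp _ * Real.exp _
      rw [← Real.exp_add]
      congr 1
      rw [Finset.sum_Icc_succ_top h1t, Finset.sum_Icc_succ_top h1t]
      ring
    have hMf_int : Integrable (M t * f) P := hsplit ▸ hMint (t+1)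
    have e1 : P[M (t+1)|𝒢 t] =ᵐ[P] M t * P[f|𝒢 t] := by
      rw [hsplit]
      exact condExp_mul_of_stronglyMeasurable_left (hMmeas t).stronglyMeasurable hMf_int hf_int
    -- dominate f by g
    set g : Ω → ℝ := fun ω => Real.exp (l * (γ (t+1) ω - δ (t+1) ω))
        * (1 + l * (δhat (t+1) ω - γ (t+1) ω)) with hgdef
    have hfg : f ≤ᵐ[P] g := by
      filter_upwards [habs (t+1) h1t] with ω hω
      have hu : |δhat (t+1) ω - γ (t+1) ω| ≤ c := by
        have h2 := abs_le.1 (hγabs (t+1) ω)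
        have h3 := abs_le.1 hω
        rw [abs_le]
        constructor <;> [linarith; linarith]
      have hfan := fan_s10 hc hl0 hlc hu
      have heq : f ω = Real.exp (l * (γ (t+1) ω - δ (t+1) ω)) * Real.exp
          (l * (δhat (t+1) ω - γ (t+1) ω)
            - psiE c l * (δhat (t+1) ω - γ (t+1) ω) ^ 2) := by
        simp only [hfdef]
        rw [← Real.exp_add]
        congr 1
        ring
      rw [heq]
      exact mul_le_mul_of_nonneg_left hfan (Real.exp_nonneg _)
    have hgmeas : Measurable g :=
      (Measurable.exp ((hγm0.sub hδm0).const_mul l)).mul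
        (((hδhatm0.sub hγm0).const_mul l).const_add 1)
    have hgbd : ∀ ω, |g ω| ≤ Real.exp (l * (c + |C₂|)) * (1 + l * (|C₁| + c)) := by
      intro ω
      rw [abs_mul]
      apply mul_le_mul
      · rw [abs_of_pos (Real.exp_pos _)]
        apply Real.exp_le_exp.2
        have h1 : |γ (t+1) ω - δ (t+1) ω| ≤ c + |C₂| := by
          have := (abs_sub _ _).trans (add_le_add (hγabs (t+1) ω) (hC₂' (t+1) ω))
          linarith
        exact mul_le_mul_of_nonneg_left (le_trans (le_abs_self _) h1) hl0
      · have h1 : |δhat (t+1) ω - γ (t+1) ω| ≤ |C₁| + c := by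
          have := (abs_sub _ _).trans (add_le_add (hC₁' (t+1) ω) (hγabs (t+1) ω))
          linarith
        calc |1 + l * (δhat (t+1) ω - γ (t+1) ω)|
            ≤ 1 + |l * (δhat (t+1) ω - γ (t+1) ω)| := by
              have := abs_add_le (1:ℝ) (l * (δhat (t+1) ω - γ (t+1) ω))
              simpa using this
          _ ≤ 1 + l * (|C₁| + c) := by
              rw [abs_mul, abs_of_nonneg hl0]
              exact add_le_add_right (mul_le_mul_of_nonneg_left h1 hl0) 1
      · exact abs_nonneg _
      · exact Real.exp_nonneg _
    have hg_int : Integrable g P := hbint g _ hgmeas hgbd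
    have e2 : P[f|𝒢 t] ≤ᵐ[P] P[g|𝒢 t] := condExp_mono hf_int hg_int hfg
    -- compute the conditional expectation of g
    have hinner_int : Integrable (fun ω => 1 + l * (δhat (t+1) ω - γ (t+1) ω)) P := by
      apply hbint _ (1 + l * (|C₁| + c))
      · exact ((hδhatm0.sub hγm0).const_mul l).const_add 1
      · intro ω
        have h1 : |δhat (t+1) ω - γ (t+1) ω| ≤ |C₁| + c := by
          have := (abs_sub _ _).trans (add_le_add (hC₁' (t+1) ω) (hγabs (t+1) ω))
          linarith
        calc |1 + l * (δhat (t+1) ω - γ (t+1) ω)|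
            ≤ 1 + |l * (δhat (t+1) ω - γ (t+1) ω)| := by
              have := abs_add_le (1:ℝ) (l * (δhat (t+1) ω - γ (t+1) ω))
              simpa using this
          _ ≤ 1 + l * (|C₁| + c) := by
              rw [abs_mul, abs_of_nonneg hl0]
              exact add_le_add_right (mul_le_mul_of_nonneg_left h1 hl0) 1
    have e3 : P[g|𝒢 t] =ᵐ[P] fun ω => Real.exp (l * (γ (t+1) ω - δ (t+1) ω))
        * (1 + l * (δ (t+1) ω - γ (t+1) ω)) := by
      have hsm : StronglyMeasurable[𝒢 t] (fun ω => Real.exp (l * (γ (t+1) ω - δ (t+1) ω))) :=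
        (Measurable.exp ((hγm.sub hδm).const_mul l)).stronglyMeasurable
      have hmul := condExp_mul_of_stronglyMeasurable_left (m := 𝒢 t) (μ := P) hsm
        (show Integrable ((fun ω => Real.exp (l * (γ (t+1) ω - δ (t+1) ω)))
          * fun ω => 1 + l * (δhat (t+1) ω - γ (t+1) ω)) P from hg_int) hinner_int
      -- conditional expectation of the inner factor
      have h5 : P[(fun ω => 1 + l * (δhat (t+1) ω - γ (t+1) ω))|𝒢 t]
          =ᵐ[P] fun ω => 1 + l * (δ (t+1) ω - γ (t+1) ω) := by
        have hrw : (fun ω => 1 + l * (δhat (t+1) ω - γ (t+1) ω))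
            = (fun _ : Ω => (1:ℝ)) + l • (δhat (t+1) - γ (t+1)) := rfl
        rw [hrw]
        have hδhat_int : Integrable (δhat (t+1)) P := hbint _ _ hδhatm0 (hC₁' (t+1))
        have hγ_int : Integrable (γ (t+1)) P := hbint _ _ hγm0 (hγabs (t+1))
        have ha := condExp_add (m := 𝒢 t) (μ := P) (integrable_const (1:ℝ))
          (((hδhat_int.sub hγ_int)).smul l)
        refine ha.trans ?_
        have hb := condExp_smul (m := 𝒢 t) (μ := P) l (δhat (t+1) - γ (t+1))
        have hd := condExp_sub (m := 𝒢 t) (μ := P) hδhat_int hγ_int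
        have hγid : P[γ (t+1)|𝒢 t] = γ (t+1) :=
          condExp_of_stronglyMeasurable (𝒢.le t) hγm.stronglyMeasurable hγ_int
        have hδhat_cond : P[δhat (t+1)|𝒢 t] =ᵐ[P] δ (t+1) := by
          have := hcond (t+1) h1t
          simpa using this
        have hcc : P[(fun _ : Ω => (1:ℝ))|𝒢 t] = fun _ => (1:ℝ) := by
          have := condExp_const (μ := P) (𝒢.le t) (1:ℝ)
          simpa using this
        have h6 : P[l • (δhat (t+1) - γ (t+1))|𝒢 t]
            =ᵐ[P] fun ω => l * (δ (t+1) ω - γ (t+1) ω) := by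
          refine hb.trans ?_
          filter_upwards [hd, hδhat_cond] with ω hdω hcω
          simp only [Pi.smul_apply, smul_eq_mul]
          rw [hdω]
          simp only [Pi.sub_apply]
          rw [hcω, hγid]
        filter_upwards [h6] with ω h6ω
        simp only [Pi.add_apply]
        rw [hcc, h6ω]
      refine hmul.trans ?_
      filter_upwards [h5] with ω h5ω
      simp only [Pi.mul_apply]
      rw [h5ω]
    -- final pointwise bound
    have e4 : ∀ ω, Real.exp (l * (γ (t+1) ω - δ (t+1) ω))
        * (1 + l * (δ (t+1) ω - γ (t+1) ω)) ≤ 1 := by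
      intro ω
      have h1 : (1:ℝ) + l * (δ (t+1) ω - γ (t+1) ω)
          ≤ Real.exp (l * (δ (t+1) ω - γ (t+1) ω)) := by
        have := Real.add_one_le_exp (l * (δ (t+1) ω - γ (t+1) ω))
        linarith
      calc Real.exp (l * (γ (t+1) ω - δ (t+1) ω)) * (1 + l * (δ (t+1) ω - γ (t+1) ω))
          ≤ Real.exp (l * (γ (t+1) ω - δ (t+1) ω))
            * Real.exp (l * (δ (t+1) ω - γ (t+1) ω)) :=
            mul_le_mul_of_nonneg_left h1 (Real.exp_nonneg _)
        _ = 1 := by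
            rw [← Real.exp_add]
            have h0 : l * (γ (t+1) ω - δ (t+1) ω) + l * (δ (t+1) ω - γ (t+1) ω) = 0 := by ring
            rw [h0, Real.exp_zero]
    filter_upwards [e1, e2, e3] with ω h1 h2 h3
    have hle1 : (P[f|𝒢 t]) ω ≤ 1 := le_trans h2 (le_trans (le_of_eq h3) (e4 ω))
    have h1' : (P[M (t+1)|𝒢 t]) ω = M t ω * (P[f|𝒢 t]) ω := by
      rw [h1]
      simp [Pi.mul_apply]
    rw [h1']
    calc M t ω * (P[f|𝒢 t]) ω ≤ M t ω * 1 := mul_le_mul_of_nonneg_left hle1 (hMpos t ω).le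
      _ = M t ω := mul_one _
  -- M is a supermartingale
  have hadp : StronglyAdapted 𝒢 M := fun t => (hMmeas t).stronglyMeasurable
  have hsuper : Supermartingale M 𝒢 P := supermartingale_nat hadp hMint hstep
  -- expectations of M are at most 1
  have hMint_one : ∀ n, ∫ ω, M n ω ∂P ≤ 1 := by
    intro n
    have hle := hsuper.2.1 0 n (Nat.zero_le n)
    calc ∫ ω, M n ω ∂P = ∫ ω, (P[M n|𝒢 0]) ω ∂P := (integral_condExp (𝒢.le 0)).symm
      _ ≤ ∫ ω, M 0 ω ∂P := integral_mono_ae integrable_condExp (hMint 0) hle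
      _ = 1 := by simp [hM0]
  -- the negated process is an L¹-bounded submartingale; M converges a.e.
  have hnegsub : Submartingale (-M) 𝒢 P := hsuper.neg
  have hbdd' : ∀ n, eLpNorm ((-M) n) 1 P ≤ ((1 : NNReal) : ENNReal) := by
    intro n
    have h1 : (-M) n = -(M n) := rfl
    rw [h1, eLpNorm_neg, eLpNorm_one_eq_lintegral_enorm]
    have h2 : ∫⁻ ω, ‖M n ω‖ₑ ∂P = ∫⁻ ω, ENNReal.ofReal (M n ω) ∂P := by
      apply lintegral_congr
      intro ω
      rw [← ofReal_norm, Real.norm_eq_abs, abs_of_pos (hMpos n ω)]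
    rw [h2, ← ofReal_integral_eq_lintegral_ofReal (hMint n)
      (ae_of_all _ fun ω => (hMpos n ω).le)]
    simpa using ENNReal.ofReal_le_ofReal (hMint_one n)
  have hconv : ∀ᵐ ω ∂P, ∃ L, Tendsto (fun n => M n ω) atTop (𝓝 L) := by
    filter_upwards [hnegsub.exists_ae_tendsto_of_bdd hbdd'] with ω hω
    obtain ⟨L, hL⟩ := hω
    refine ⟨-L, ?_⟩
    have : (fun n => M n ω) = fun n => -((-M) n ω) := by
      funext n
      simp
    rw [this]
    exact hL.neg
  -- truncated stopping times
  set σ : ℕ → Ω → ℕ∞ := fun n ω => ((min (τ ω) (n : ℕ∞)).toNat : ℕ∞) with hσdef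
  have hσ_le : ∀ n ω, σ n ω ≤ n := fun n ω => Nat.cast_le.2 (ENat.toNat_le_of_le_coe (min_le_right _ _))
  have hσ_stop : ∀ n, IsStoppingTime 𝒢 (σ n) := by
    intro n m
    by_cases hnm : n ≤ m
    · have : {ω | σ n ω ≤ m} = univ := by
        ext ω
        simp only [mem_setOf_eq, mem_univ, iff_true]
        exact le_trans (hσ_le n ω) (Nat.cast_le.2 hnm)
      convert MeasurableSet.univ using 1
      exact this
    · have : {ω | σ n ω ≤ m} = {ω | τ ω ≤ (m : ℕ∞)} := by
        ext ω
        simp only [mem_setOf_eq]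
        constructor
        · intro h
          have h2 : min (τ ω) (n : ℕ∞) ≤ (m : ℕ∞) := by
            have h3 : min (τ ω) (n : ℕ∞) ≠ ⊤ := by
              intro hcontra
              have h5 := min_le_right (τ ω) (n:ℕ∞)
              rw [hcontra] at h5
              simp at h5
            rw [← ENat.coe_toNat h3]
            exact h
          rcases min_le_iff.1 h2 with h4 | h4
          · exact h4
          · exact absurd (by exact_mod_cast h4) hnm
        · intro h
          have h2 : min (τ ω) (n : ℕ∞) ≤ (m : ℕ∞) := le_trans (min_le_left _ _) h
          exact Nat.cast_le.2 (ENat.toNat_le_of_le_coe h2)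
      convert hτ m using 1
      exact this
  -- integrability and expectation bound for stopped values
  have hSV_int : ∀ n, Integrable (stoppedValue M (σ n)) P := by
    intro n
    have h1 := hnegsub.integrable_stoppedValue (hσ_stop n) (hσ_le n)
    have h2 : stoppedValue ((-M)) (σ n) = -(stoppedValue M (σ n)) := rfl
    rw [h2] at h1
    simpa using h1.neg
  have hSV_le_one : ∀ n, ∫ ω, stoppedValue M (σ n) ω ∂P ≤ 1 := by
    intro n
    have hmono := hnegsub.expected_stoppedValue_mono (isStoppingTime_const 𝒢 0)
      (hσ_stop n) (fun ω => by exact bot_le) (hσ_le n)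
    have h2 : stoppedValue ((-M)) (σ n) = -(stoppedValue M (σ n)) := rfl
    have h3 : stoppedValue ((-M)) (fun _ => ((0 : ℕ) : WithTop ℕ)) = -(M 0) := by
      funext ω; simp [stoppedValue]
    simp only [h2, h3, stoppedValue_const, Pi.neg_apply] at hmono
    simp only [integral_neg] at hmono
    have h4 : ∫ ω, stoppedValue M (σ n) ω ∂P ≤ ∫ ω, M 0 ω ∂P := by linarith
    calc ∫ ω, stoppedValue M (σ n) ω ∂P ≤ ∫ ω, M 0 ω ∂P := h4
      _ = 1 := by simp [hM0]
  -- pointwise a.e. analysis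
  have hae : ∀ᵐ ω ∂P, 0 ≤ stoppedValueTop E τ ω ∧
      ∃ L, Tendsto (fun n => stoppedValue M (σ n) ω) atTop (𝓝 L) ∧
        stoppedValueTop E τ ω ≤ L := by
    filter_upwards [hconv, hEleM] with ω hcω heω
    obtain ⟨L, hL⟩ := hcω
    by_cases htop : τ ω = ⊤
    · have hsv : ∀ n, stoppedValue M (σ n) ω = M n ω := by
        intro n
        simp [stoppedValue, hσdef, htop]
      have hG : stoppedValueTop E τ ω = limsup (fun t => E t ω) atTop := by
        rw [stoppedValueTop, htop]
        rfl
      have hbddM : IsBoundedUnder (· ≤ ·) atTop (fun t => M t ω) := hL.isBoundedUnder_le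
      have hbddE : IsBoundedUnder (· ≤ ·) atTop (fun t => E t ω) :=
        hbddM.mono_le (Eventually.of_forall heω)
      have hcobE : IsCoboundedUnder (· ≤ ·) atTop (fun t => E t ω) :=
        IsBoundedUnder.isCoboundedUnder_le
          (isBoundedUnder_of ⟨0, fun t => (hEpos t ω).le⟩)
      refine ⟨?_, L, ?_, ?_⟩
      · rw [hG]
        exact le_limsup_of_frequently_le
          (Frequently.of_forall (fun t : ℕ => (hEpos t ω).le)) hbddE
      · have : (fun n => stoppedValue M (σ n) ω) = fun n => M n ω := funext hsv
        rw [this]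
        exact hL
      · rw [hG]
        refine le_trans (limsup_le_limsup (Eventually.of_forall heω) hcobE hbddM) ?_
        exact le_of_eq hL.limsup_eq
    · set k : ℕ := (τ ω).toNat with hkdef
      have hk : (k : ℕ∞) = τ ω := ENat.coe_toNat htop
      have hsv : ∀ n, k ≤ n → stoppedValue M (σ n) ω = M k ω := by
        intro n hn
        have h7 : σ n ω = k := by
          simp only [hσdef, ← hk]
          have h8 : (k : ℕ∞) ≤ (n : ℕ∞) := by exact_mod_cast hn
          rw [min_eq_left h8]
          simp
        simp [stoppedValue, h7]
      have hG : stoppedValueTop E τ ω = E k ω := by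
        rw [stoppedValueTop, ← hk]
        rfl
      refine ⟨by rw [hG]; exact (hEpos k ω).le, M k ω, ?_, by rw [hG]; exact heω k⟩
      exact tendsto_atTop_of_eventually_const hsv
  have hG0 : 0 ≤ᵐ[P] fun ω => stoppedValueTop E τ ω := by
    filter_upwards [hae] with ω hω
    exact hω.1
  by_cases hGm : AEStronglyMeasurable (fun ω => stoppedValueTop E τ ω) P
  · rw [integral_eq_lintegral_of_nonneg_ae hG0 hGm]
    have hkey : ∫⁻ ω, ENNReal.ofReal (stoppedValueTop E τ ω) ∂P ≤ 1 := by
      have h1 : ∀ᵐ ω ∂P, ENNReal.ofReal (stoppedValueTop E τ ω)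
          ≤ liminf (fun n => ENNReal.ofReal (stoppedValue M (σ n) ω)) atTop := by
        filter_upwards [hae] with ω hω
        obtain ⟨h0, L, hT, hGL⟩ := hω
        have h2 : Tendsto (fun n => ENNReal.ofReal (stoppedValue M (σ n) ω)) atTop
            (𝓝 (ENNReal.ofReal L)) := (ENNReal.continuous_ofReal.tendsto L).comp hT
        rw [h2.liminf_eq]
        exact ENNReal.ofReal_le_ofReal hGL
      calc ∫⁻ ω, ENNReal.ofReal (stoppedValueTop E τ ω) ∂P
          ≤ ∫⁻ ω, liminf (fun n => ENNReal.ofReal (stoppedValue M (σ n) ω)) atTop ∂P :=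
            lintegral_mono_ae h1
        _ ≤ liminf (fun n => ∫⁻ ω, ENNReal.ofReal (stoppedValue M (σ n) ω) ∂P) atTop :=
            lintegral_liminf_le' fun n =>
              ENNReal.measurable_ofReal.comp_aemeasurable (hSV_int n).aemeasurable
        _ ≤ 1 := by
            have hev : ∀ n, (∫⁻ ω, ENNReal.ofReal (stoppedValue M (σ n) ω) ∂P) ≤ 1 := by
              intro n
              rw [← ofReal_integral_eq_lintegral_ofReal (hSV_int n)
                (ae_of_all _ fun ω => (hMpos _ ω).le)]
              calc ENNReal.ofReal (∫ ω, stoppedValue M (σ n) ω ∂P)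
                  ≤ ENNReal.ofReal 1 := ENNReal.ofReal_le_ofReal (hSV_le_one n)
                _ = 1 := ENNReal.ofReal_one
            calc liminf (fun n => ∫⁻ ω, ENNReal.ofReal (stoppedValue M (σ n) ω) ∂P) atTop
                ≤ liminf (fun _ : ℕ => (1 : ENNReal)) atTop :=
                  liminf_le_liminf (Eventually.of_forall hev)
              _ = 1 := liminf_const _
    calc (∫⁻ ω, ENNReal.ofReal (stoppedValueTop E τ ω) ∂P).toReal
        ≤ (1 : ENNReal).toReal := ENNReal.toReal_mono (by norm_num) hkey
      _ = 1 := by simp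
  · rw [integral_undef (fun h => hGm h.1)]
    norm_num
end
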